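/- arXiv:1009.2553 — 6 statements merged into one kernel-verified Lean document; each statement's English description precedes it below -/
import Mathlib

section
/- Let 1 ≤ n ≤ N and let ω be a Blaschke product of order n. Let B be the (N+1)×(N+1) lower triangular Toeplitz matrix B = (b_{j−k})_{j,k=0}^{N}, where b_m for m ≥ 0 is the m-th Taylor coefficient of ω at 0 and b_m = 0 for m < 0. Then the operator norm of B on ℂ^{N+1} with the Euclidean norm equals 1. -/
open MeasureTheory Complex Real AddCircle
open scoped Real

noncomputable section

instance : Fact (0 < 2 * π) := ⟨by positivity⟩

abbrev UnitCircle := AddCircle (2 * π)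

/-- The `(N+1) × (N+1)` Toeplitz matrix `(a_{j-k})_{j,k=0}^N`. -/
def toeplitz (N : ℕ) (a : ℤ → ℂ) : Matrix (Fin (N + 1)) (Fin (N + 1)) ℂ :=
  fun j k => a ((j : ℤ) - (k : ℤ))

/-- The operator norm of a matrix acting on `ℂ^n` with the Euclidean norm. -/
def opNorm {n : ℕ} (A : Matrix (Fin n) (Fin n) ℂ) : ℝ :=
  ‖Matrix.toEuclideanCLM (𝕜 := ℂ) A‖

/-- A Blaschke product of order `n` (a unimodular constant when `n = 0`). -/
def IsBlaschke (n : ℕ) (ω : ℂ → ℂ) : Prop :=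
  ∃ (l : ℂ) (z : Fin n → ℂ), ‖l‖ = 1 ∧ (∀ j, ‖z j‖ < 1) ∧
    ∀ w : ℂ, ω w = l * ∏ j, (w - z j) / (1 - (starRingEnd ℂ) (z j) * w)

namespace Stmt4Aux

open scoped ComplexConjugate

lemma re_conj_mul (a : ℂ) : RCLike.re ((starRingEnd ℂ) a * a) = ‖a‖ ^ 2 := by
  rw [RCLike.conj_mul]; norm_cast

lemma abs_factor {a c : ℂ} (hc : ‖c‖ = 1) :
    ‖1 - conj a * c‖ = ‖c - a‖ := by
  have h1 : (1 : ℂ) - conj a * c = conj (c - a) * c := by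
    have h2 : conj c * c = 1 := by
      rw [mul_comm, Complex.mul_conj]
      norm_cast
      rw [Complex.normSq_eq_norm_sq, hc, one_pow]
    rw [map_sub, sub_mul, h2]
  rw [h1, norm_mul, hc, mul_one, Complex.norm_conj]

/-- evaluation of `fourier m` at a real point, for natural `m`. -/
lemma fourier_eval (m : ℕ) (t : ℝ) :
    (fourier (m : ℤ) : C(UnitCircle, ℂ)) ((t : ℝ) : UnitCircle)
      = Complex.exp (t * Complex.I) ^ m := by
  rw [fourier_coe_apply, ← Complex.exp_nat_mul]
  congr 1
  push_cast
  have hπ : ((π : ℂ)) ≠ 0 := by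
    exact_mod_cast Real.pi_ne_zero
  field_simp

end Stmt4Aux

open Stmt4Aux

set_option maxHeartbeats 2000000 in
/-- If `ω` is a Blaschke product of order `n` with `1 ≤ n ≤ N`, then the lower
triangular Toeplitz matrix built from the Taylor coefficients of `ω` at `0` has
operator norm `1` on `ℂ^{N+1}`. -/
theorem stmt4 (N n : ℕ) (hn : 1 ≤ n) (hnN : n ≤ N) (ω : ℂ → ℂ)
    (hω : IsBlaschke n ω) :
    opNorm (toeplitz N (fun m : ℤ =>
      if 0 ≤ m then iteratedDeriv m.toNat ω 0 / (Nat.factorial m.toNat : ℂ)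
      else 0)) = 1 := by
  classical
  obtain ⟨l, z, hl, hz, hωeq⟩ := hω
  haveI : Nonempty (Fin n) := ⟨⟨0, hn⟩⟩
  -- a bound on the moduli of the zeros
  set ρ : ℝ := Finset.univ.sup' Finset.univ_nonempty (fun j => ‖z j‖) with hρdef
  have hρ : ∀ j, ‖z j‖ ≤ ρ := fun j =>
    Finset.le_sup' (fun j => ‖z j‖) (Finset.mem_univ j)
  have hρ1 : ρ < 1 := by
    rw [hρdef, Finset.sup'_lt_iff]
    exact fun j _ => hz j
  have hρ0 : 0 ≤ ρ := le_trans (norm_nonneg _) (hρ ⟨0, hn⟩)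
  set r : ℝ := 2 / (1 + ρ) with hrdef
  have h1ρ : (0:ℝ) < 1 + ρ := by linarith
  have hr1 : 1 < r := by
    rw [hrdef, lt_div_iff₀ h1ρ]; linarith
  have hr0 : 0 < r := lt_trans one_pos hr1
  have hrρ : ρ * r < 1 := by
    rw [hrdef, mul_div_assoc']
    rw [div_lt_one h1ρ]; linarith
  -- polynomials
  set Q : Polynomial ℂ := ∏ j : Fin n, (1 - Polynomial.C ((starRingEnd ℂ) (z j)) * Polynomial.X)
    with hQdef
  set P : Polynomial ℂ := Polynomial.C l * ∏ j : Fin n, (Polynomial.X - Polynomial.C (z j))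
    with hPdef
  have hQeval : ∀ w : ℂ, Q.eval w = ∏ j, (1 - (starRingEnd ℂ) (z j) * w) := by
    intro w; simp [hQdef, Polynomial.eval_prod]
  have hPeval : ∀ w : ℂ, P.eval w = l * ∏ j, (w - z j) := by
    intro w; simp [hPdef, Polynomial.eval_prod]
  have hωPQ : ∀ w : ℂ, ω w = P.eval w / Q.eval w := by
    intro w
    rw [hωeq, hQeval, hPeval, mul_div_assoc, ← Finset.prod_div_distrib]
  have hQne : ∀ w : ℂ, ‖w‖ ≤ r → Q.eval w ≠ 0 := by
    intro w hw
    rw [hQeval]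
    refine Finset.prod_ne_zero_iff.mpr fun j _ => fun h0 => ?_
    have h1 : (1:ℂ) = (starRingEnd ℂ) (z j) * w := by
      have := sub_eq_zero.mp h0; exact this
    have h2 := congrArg (‖·‖) h1
    rw [norm_one, norm_mul, Complex.norm_conj] at h2
    have h3 : ‖z j‖ * ‖w‖ ≤ ρ * r :=
      mul_le_mul (hρ j) hw (norm_nonneg _) hρ0
    rw [← h2] at h3
    linarith
  -- unimodularity on the circle
  have hω1 : ∀ c : ℂ, ‖c‖ = 1 → ‖ω c‖ = 1 := by
    intro c hc
    have hQc : ‖Q.eval c‖ = ‖P.eval c‖ := by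
      rw [hQeval, hPeval, norm_mul, hl, one_mul, norm_prod, norm_prod]
      exact Finset.prod_congr rfl fun j _ => abs_factor hc
    have hQc0 : Q.eval c ≠ 0 := hQne c (by rw [hc]; exact hr1.le)
    rw [hωPQ, norm_div, ← hQc, div_self (norm_ne_zero_iff.mpr hQc0)]
  -- power series
  set R : NNReal := r.toNNReal with hRdef
  have hRr : (R : ℝ) = r := Real.coe_toNNReal r hr0.le
  have hdiff : DifferentiableOn ℂ ω (Metric.closedBall (0:ℂ) R) := by
    have hfun : ω = fun w => P.eval w / Q.eval w := funext hωPQ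
    rw [hfun]
    refine DifferentiableOn.div (Polynomial.differentiable _).differentiableOn
      (Polynomial.differentiable _).differentiableOn (fun w hw => hQne w ?_)
    have := Metric.mem_closedBall.mp hw
    rwa [Complex.dist_eq, sub_zero, hRr] at this
  have hps : HasFPowerSeriesOnBall ω (cauchyPowerSeries ω 0 R) 0 R :=
    hdiff.hasFPowerSeriesOnBall (Real.toNNReal_pos.mpr hr0)
  set p : FormalMultilinearSeries ℂ ℂ ℂ := cauchyPowerSeries ω 0 R with hpdef
  -- Taylor coefficients
  have hb_matrix : ∀ m : ℕ, iteratedDeriv m ω 0 / (Nat.factorial m : ℂ) = p.coeff m := by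
    intro m
    have h1 := hps.factorial_smul (1:ℂ) m
    rw [iteratedDeriv_eq_iteratedFDeriv, ← h1, nsmul_eq_mul,
      mul_div_cancel_left₀ _ (by exact_mod_cast Nat.factorial_ne_zero m : (m.factorial:ℂ) ≠ 0)]
    rfl
  have hb_sum : Summable fun m : ℕ => ‖p.coeff m‖ := by
    have h1 : ((1:NNReal) : ENNReal) < p.radius := by
      refine lt_of_lt_of_le ?_ hps.r_le
      rw [ENNReal.coe_lt_coe]
      have : (1:ℝ) < (R:ℝ) := by rw [hRr]; exact hr1
      exact_mod_cast this
    have h2 := p.summable_norm_mul_pow h1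
    simpa [FormalMultilinearSeries.norm_apply_eq_norm_coef] using h2
  have hb_hasSum : ∀ c : ℂ, ‖c‖ = 1 →
      HasSum (fun m : ℕ => p.coeff m * c ^ m) (ω c) := by
    intro c hc
    have hmem : c ∈ Metric.eball (0:ℂ) R := by
      rw [Metric.mem_eball, edist_nndist, ENNReal.coe_lt_coe, ← NNReal.coe_lt_coe,
        coe_nndist, Complex.dist_eq, sub_zero, hc, hRr]
      exact hr1
    have h1 := hps.hasSum hmem
    rw [zero_add] at h1
    have h2 : (fun m : ℕ => p m fun _ => c) = fun m : ℕ => p.coeff m * c ^ m := by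
      funext m
      rw [FormalMultilinearSeries.apply_eq_pow_smul_coeff, smul_eq_mul, mul_comm]
    rwa [h2] at h1
  -- Fourier series setup
  set μ : Measure UnitCircle := haarAddCircle with hμdef
  set TL : C(UnitCircle, ℂ) →L[ℂ] Lp ℂ 2 μ := ContinuousMap.toLp (E := ℂ) 2 μ ℂ with hTLdef
  set e : ℤ → Lp ℂ 2 μ := fun k => TL (fourier k) with hedef
  have horthℤ : Orthonormal ℂ e := orthonormal_fourier
  have hFsummable : Summable (fun m : ℕ => p.coeff m • (fourier (m:ℤ) : C(UnitCircle, ℂ))) := by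
    refine Summable.of_norm ?_
    have : (fun m : ℕ => ‖p.coeff m • (fourier (m:ℤ) : C(UnitCircle, ℂ))‖)
        = fun m => ‖p.coeff m‖ := by
      funext m; rw [norm_smul, fourier_norm, mul_one]
    rw [this]; exact hb_sum
  set F : C(UnitCircle, ℂ) := ∑' m : ℕ, p.coeff m • (fourier (m:ℤ) : C(UnitCircle, ℂ)) with hFdef
  have hFsum : HasSum (fun m : ℕ => p.coeff m • (fourier (m:ℤ) : C(UnitCircle, ℂ))) F :=
    hFsummable.hasSum
  have hFeval : ∀ t : ℝ, F ((t : ℝ) : UnitCircle) = ω (Complex.exp (t * Complex.I)) := by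
    intro t
    have h1 := hFsum.mapL (ContinuousMap.evalCLM ℂ ((t : ℝ) : UnitCircle))
    have h2 : (fun m : ℕ =>
        (ContinuousMap.evalCLM ℂ ((t : ℝ) : UnitCircle)) (p.coeff m • (fourier (m:ℤ) : C(UnitCircle, ℂ))))
        = fun m : ℕ => p.coeff m * Complex.exp (t * Complex.I) ^ m := by
      funext m
      show (p.coeff m • (fourier (m:ℤ) : C(UnitCircle, ℂ))) ((t : ℝ) : UnitCircle) = _
      rw [ContinuousMap.smul_apply, fourier_eval, smul_eq_mul]
    rw [h2] at h1
    exact h1.unique (hb_hasSum _ (Complex.norm_exp_ofReal_mul_I t))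
  have hFone : ∀ u : UnitCircle, ‖F u‖ = 1 := by
    intro u
    induction u using QuotientAddGroup.induction_on with
    | H t => rw [hFeval t]; exact hω1 _ (Complex.norm_exp_ofReal_mul_I t)
  -- F times fourier k
  have hmulF : ∀ k : ℤ, HasSum
      (fun m : ℕ => p.coeff m • (fourier ((m:ℤ)+k) : C(UnitCircle, ℂ)))
      (F * fourier k) := by
    intro k
    have h1 := hFsum.mapL ((ContinuousLinearMap.mul ℂ C(UnitCircle, ℂ)).flip (fourier k))
    have h2 : (fun m : ℕ =>
        ((ContinuousLinearMap.mul ℂ C(UnitCircle, ℂ)).flip (fourier k))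
          (p.coeff m • (fourier (m:ℤ) : C(UnitCircle, ℂ))))
        = fun m : ℕ => p.coeff m • (fourier ((m:ℤ)+k) : C(UnitCircle, ℂ)) := by
      funext m
      show (p.coeff m • (fourier (m:ℤ) : C(UnitCircle, ℂ))) * fourier k = _
      rw [smul_mul_assoc]
      congr 1
      ext u
      exact (fourier_add).symm
    rw [h2] at h1
    exact h1
  -- inner products with F * fourier k
  have hinnerF : ∀ k j : ℤ, @inner ℂ _ _ (e j) (TL (F * fourier k))
      = (if 0 ≤ j - k then p.coeff (j-k).toNat else 0) := by
    intro k j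
    have h1 := ((hmulF k).mapL TL).mapL (innerSL ℂ (e j))
    have h2 : (fun m : ℕ => (innerSL ℂ (e j)) (TL (p.coeff m • (fourier ((m:ℤ)+k) : C(UnitCircle, ℂ)))))
        = fun m : ℕ => (if ((m:ℤ)+k) = j then p.coeff m else 0) := by
      funext m
      rw [_root_.map_smul, innerSL_apply_apply, inner_smul_right]
      have h3 : @inner ℂ _ _ (e j) (e ((m:ℤ)+k)) = if j = (m:ℤ)+k then (1:ℂ) else 0 :=
        orthonormal_iff_ite.mp horthℤ j ((m:ℤ)+k)
      show p.coeff m * @inner ℂ _ _ (e j) (e ((m:ℤ)+k)) = _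
      rw [h3]
      by_cases hj : (m:ℤ)+k = j
      · simp [hj]
      · simp [hj, Ne.symm hj]
    rw [h2] at h1
    refine h1.unique ?_
    by_cases hjk : 0 ≤ j - k
    · rw [if_pos hjk]
      have h4 : (fun m : ℕ => (if ((m:ℤ)+k) = j then p.coeff m else 0))
          = fun m : ℕ => (if m = (j-k).toNat then p.coeff ((j-k).toNat) else 0) := by
        funext m
        by_cases hm : (m:ℤ)+k = j
        · have : m = (j-k).toNat := by omega
          rw [if_pos hm, if_pos this, this]
        · have : m ≠ (j-k).toNat := by omega
          rw [if_neg hm, if_neg this]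
      rw [h4]
      exact hasSum_ite_eq _ _
    · rw [if_neg hjk]
      have h4 : (fun m : ℕ => (if ((m:ℤ)+k) = j then p.coeff m else 0))
          = fun _ : ℕ => (0:ℂ) := by
        funext m
        have : (m:ℤ)+k ≠ j := by omega
        rw [if_neg this]
      rw [h4]
      exact hasSum_zero
  -- the integer-indexed coefficients
  set bz : ℤ → ℂ := fun m => if 0 ≤ m then p.coeff m.toNat else 0 with hbzdef
  have hAentry : (toeplitz N (fun m : ℤ =>
      if 0 ≤ m then iteratedDeriv m.toNat ω 0 / (Nat.factorial m.toNat : ℂ) else 0))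
      = toeplitz N bz := by
    funext j k
    show (if 0 ≤ (j:ℤ) - (k:ℤ) then _ else 0) = (if 0 ≤ (j:ℤ) - (k:ℤ) then _ else 0)
    by_cases h : 0 ≤ (j:ℤ) - (k:ℤ)
    · rw [if_pos h, if_pos h, hb_matrix]
    · rw [if_neg h, if_neg h]
  -- trigonometric polynomials
  set pc : (Fin (N+1) → ℂ) → C(UnitCircle, ℂ) :=
    fun x => ∑ k : Fin (N+1), x k • (fourier ((k:ℕ):ℤ) : C(UnitCircle, ℂ)) with hpcdef
  have hTLpc : ∀ x : Fin (N+1) → ℂ, TL (pc x) = ∑ k : Fin (N+1), x k • e ((k:ℕ):ℤ) := by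
    intro x
    rw [hpcdef, map_sum]
    exact Finset.sum_congr rfl fun k _ => by rw [_root_.map_smul]
  have hFin_inj : Function.Injective (fun k : Fin (N+1) => ((k:ℕ):ℤ)) := by
    intro a b h
    have h2 : ((a:ℕ):ℤ) = ((b:ℕ):ℤ) := h
    exact Fin.ext (by exact_mod_cast h2)
  have horthFin : Orthonormal ℂ (fun k : Fin (N+1) => e ((k:ℕ):ℤ)) :=
    horthℤ.comp _ hFin_inj
  have hnorm_sum : ∀ y : Fin (N+1) → ℂ,
      ‖∑ k : Fin (N+1), y k • e ((k:ℕ):ℤ)‖^2 = ∑ k : Fin (N+1), ‖y k‖^2 := by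
    intro y
    have h1 : @inner ℂ _ _ (∑ k : Fin (N+1), y k • e ((k:ℕ):ℤ))
        (∑ k : Fin (N+1), y k • e ((k:ℕ):ℤ))
        = ∑ k : Fin (N+1), (starRingEnd ℂ) (y k) * y k := by
      rw [sum_inner]
      refine Finset.sum_congr rfl fun k _ => ?_
      rw [inner_smul_left]
      congr 1
      exact horthFin.inner_right_fintype y k
    have h2 : ‖∑ k : Fin (N+1), y k • e ((k:ℕ):ℤ)‖^2
        = RCLike.re (@inner ℂ _ _ (∑ k : Fin (N+1), y k • e ((k:ℕ):ℤ))
          (∑ k : Fin (N+1), y k • e ((k:ℕ):ℤ))) := by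
      rw [@norm_sq_eq_re_inner ℂ]
    rw [h2, h1, map_sum]
    refine Finset.sum_congr rfl fun k _ => ?_
    exact re_conj_mul _
  have hnormTL : ∀ g : C(UnitCircle, ℂ), ‖TL (F * g)‖ = ‖TL g‖ := by
    intro g
    rw [Lp.norm_def, Lp.norm_def]
    congr 1
    have h1 : eLpNorm (⇑(TL (F * g))) 2 μ = eLpNorm (⇑(F * g)) 2 μ :=
      eLpNorm_congr_ae (ContinuousMap.coeFn_toLp (μ := μ) (𝕜 := ℂ) (F * g))
    have h2 : eLpNorm (⇑(TL g)) 2 μ = eLpNorm (⇑g) 2 μ :=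
      eLpNorm_congr_ae (ContinuousMap.coeFn_toLp (μ := μ) (𝕜 := ℂ) g)
    rw [h1, h2]
    refine eLpNorm_congr_norm_ae (Filter.Eventually.of_forall fun u => ?_)
    rw [ContinuousMap.mul_apply]
    rw [norm_mul]
    rw [hFone u, one_mul]
  -- the matrix as an operator
  set Aclm := Matrix.toEuclideanCLM (𝕜 := ℂ) (toeplitz N bz) with hAdef
  have happly : ∀ (x : EuclideanSpace ℂ (Fin (N+1))) (j : Fin (N+1)),
      Aclm x j = ∑ k : Fin (N+1), bz ((j:ℤ) - (k:ℤ)) * x k := by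
    intro x j
    have h1 : Aclm x = Matrix.toEuclideanLin (toeplitz N bz) x := by
      exact LinearMap.congr_fun
        (Matrix.coe_toEuclideanCLM_eq_toEuclideanLin (A := toeplitz N bz) (𝕜 := ℂ)) x
    rw [h1, Matrix.toEuclideanLin_apply]
    show Matrix.mulVec (toeplitz N bz) ((WithLp.equiv 2 _) x) j = _
    simp [Matrix.mulVec, dotProduct, toeplitz]
  have hAinner : ∀ (x : EuclideanSpace ℂ (Fin (N+1))) (j : Fin (N+1)),
      Aclm x j = @inner ℂ _ _ (e (j:ℤ)) (TL (F * pc x)) := by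
    intro x j
    rw [happly]
    have h1 : F * pc x = ∑ k : Fin (N+1), x k • (F * fourier ((k:ℕ):ℤ)) := by
      rw [hpcdef, Finset.mul_sum]
      exact Finset.sum_congr rfl fun k _ => (mul_smul_comm _ _ _)
    rw [h1, map_sum, inner_sum]
    refine Finset.sum_congr rfl fun k _ => ?_
    rw [_root_.map_smul, inner_smul_right, hinnerF]
    rw [hbzdef]
    ring
  have hEnorm : ∀ y : EuclideanSpace ℂ (Fin (N+1)), ‖y‖^2 = ∑ j : Fin (N+1), ‖y j‖^2 := by
    intro y
    rw [EuclideanSpace.norm_eq, Real.sq_sqrt]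
    positivity
  -- upper bound
  have hupper : ∀ x : EuclideanSpace ℂ (Fin (N+1)), ‖Aclm x‖ ≤ ‖x‖ := by
    intro x
    have h1 : ‖Aclm x‖^2 ≤ ‖x‖^2 := by
      rw [hEnorm]
      have hb : ∑ j : Fin (N+1), ‖Aclm x j‖^2
          = ∑ j : Fin (N+1), ‖@inner ℂ _ _ (e ((j:ℕ):ℤ)) (TL (F * pc x))‖^2 :=
        Finset.sum_congr rfl fun j _ => by rw [hAinner]
      rw [hb]
      have hbessel := horthFin.sum_inner_products_le (TL (F * pc x)) (s := Finset.univ)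
      refine le_trans hbessel ?_
      rw [hnormTL, hTLpc, hnorm_sum, ← hEnorm]
    have h2 := Real.sqrt_le_sqrt h1
    rwa [Real.sqrt_sq (norm_nonneg _), Real.sqrt_sq (norm_nonneg _)] at h2
  -- lower bound witness
  set x₀ : EuclideanSpace ℂ (Fin (N+1)) := WithLp.toLp 2 (fun k => Q.coeff k) with hx₀def
  set y₀ : EuclideanSpace ℂ (Fin (N+1)) := WithLp.toLp 2 (fun k => P.coeff k) with hy₀def
  have hQdeg : Q.natDegree < N + 1 := by
    have h1 : Q.natDegree ≤ ∑ j : Fin n, (1 - Polynomial.C ((starRingEnd ℂ) (z j)) * Polynomial.X).natDegree :=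
      Polynomial.natDegree_prod_le _ _
    have h2 : ∀ j : Fin n, (1 - Polynomial.C ((starRingEnd ℂ) (z j)) * Polynomial.X).natDegree ≤ 1 := by
      intro j
      refine le_trans (Polynomial.natDegree_sub_le _ _) ?_
      simp only [Polynomial.natDegree_one]
      refine max_le (by norm_num) ?_
      refine le_trans (Polynomial.natDegree_C_mul_le _ _) ?_
      rw [Polynomial.natDegree_X]
    have h3 : Q.natDegree ≤ n := by
      refine le_trans h1 (le_trans (Finset.sum_le_sum (g := fun _ => 1) fun j _ => h2 j) ?_)
      simp
    omega
  have hPdeg : P.natDegree < N + 1 := by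
    have h1 : P.natDegree ≤ (∏ j : Fin n, (Polynomial.X - Polynomial.C (z j))).natDegree :=
      Polynomial.natDegree_C_mul_le _ _
    have h2 : (∏ j : Fin n, (Polynomial.X - Polynomial.C (z j))).natDegree ≤ n := by
      refine le_trans (Polynomial.natDegree_prod_le _ _)
        (le_trans (Finset.sum_le_sum (g := fun _ => 1)
          fun j _ => Polynomial.natDegree_X_sub_C_le (z j)) ?_)
      simp
    omega
  have hpc_eval : ∀ (x : Fin (N+1) → ℂ) (t : ℝ),
      (pc x) ((t : ℝ) : UnitCircle) = ∑ k : Fin (N+1), x k * Complex.exp (t * Complex.I) ^ (k:ℕ) := by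
    intro x t
    have h1 : (pc x) ((t : ℝ) : UnitCircle)
        = ∑ k : Fin (N+1), (x k • (fourier ((k:ℕ):ℤ) : C(UnitCircle, ℂ))) ((t : ℝ) : UnitCircle) := by
      rw [hpcdef]
      exact map_sum (ContinuousMap.evalCLM ℂ ((t : ℝ) : UnitCircle)) _ _
    rw [h1]
    refine Finset.sum_congr rfl fun k _ => ?_
    rw [ContinuousMap.smul_apply, fourier_eval, smul_eq_mul]
  have hExpAbs : ∀ t : ℝ, ‖Complex.exp (t * Complex.I)‖ = 1 :=
    fun t => Complex.norm_exp_ofReal_mul_I t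
  have hpcQ : ∀ t : ℝ, (pc x₀) ((t : ℝ) : UnitCircle) = Q.eval (Complex.exp (t * Complex.I)) := by
    intro t
    rw [hpc_eval, Polynomial.eval_eq_sum_range' hQdeg, ← Fin.sum_univ_eq_sum_range]
  have hpcP : ∀ t : ℝ, (pc y₀) ((t : ℝ) : UnitCircle) = P.eval (Complex.exp (t * Complex.I)) := by
    intro t
    rw [hpc_eval, Polynomial.eval_eq_sum_range' hPdeg, ← Fin.sum_univ_eq_sum_range]
  have hFmul : F * pc x₀ = pc y₀ := by
    ext u
    induction u using QuotientAddGroup.induction_on with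
    | H t =>
      rw [ContinuousMap.mul_apply, hFeval, hpcQ, hpcP]
      have hQc0 : Q.eval (Complex.exp (t * Complex.I)) ≠ 0 :=
        hQne _ (by rw [hExpAbs t]; exact hr1.le)
      rw [hωPQ, div_mul_cancel₀ _ hQc0]
  have hAx₀ : Aclm x₀ = y₀ := by
    ext j
    rw [hAinner x₀ j, hFmul, hTLpc]
    exact horthFin.inner_right_fintype y₀ j
  have hx₀0 : x₀ ⟨0, Nat.succ_pos N⟩ = 1 := by
    show Q.coeff 0 = 1
    rw [Polynomial.coeff_zero_eq_eval_zero, hQeval]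
    simp
  have hnx : ‖x₀‖ ≠ 0 := by
    intro h0
    have h1 : x₀ = 0 := norm_eq_zero.mp h0
    have h2 := congrArg (· ⟨0, Nat.succ_pos N⟩) h1
    rw [hx₀0] at h2
    exact one_ne_zero h2
  have hnorm_eq : ‖Aclm x₀‖ = ‖x₀‖ := by
    have h1 : ‖Aclm x₀‖^2 = ‖x₀‖^2 := by
      rw [hAx₀, hEnorm, hEnorm]
      have hy : ∑ j : Fin (N+1), ‖y₀ j‖^2 = ‖TL (pc y₀)‖^2 := by
        rw [hTLpc, hnorm_sum]
      have hx : ∑ j : Fin (N+1), ‖x₀ j‖^2 = ‖TL (pc x₀)‖^2 := by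
        rw [hTLpc, hnorm_sum]
      rw [hy, hx, ← hFmul, hnormTL]
    have h2 := congrArg Real.sqrt h1
    rwa [Real.sqrt_sq (norm_nonneg _), Real.sqrt_sq (norm_nonneg _)] at h2
  have hlower : 1 ≤ ‖Aclm‖ := by
    have h2 := Aclm.le_opNorm x₀
    rw [hnorm_eq] at h2
    have hx0 : 0 < ‖x₀‖ := lt_of_le_of_ne (norm_nonneg _) (Ne.symm hnx)
    have h3 : 1 * ‖x₀‖ ≤ ‖Aclm‖ * ‖x₀‖ := by rwa [one_mul]
    exact le_of_mul_le_mul_right h3 hx0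
  have hupper' : ‖Aclm‖ ≤ 1 :=
    ContinuousLinearMap.opNorm_le_bound _ zero_le_one (fun x => by rw [one_mul]; exact hupper x)
  show opNorm _ = 1
  rw [opNorm, hAentry]
  exact le_antisymm hupper' hlower
end
end

section
/- With p and q as in the stated setup, for every real θ such that e^{iθ} ∉ {e^{iα_1},…,e^{iα_N}} one has q(e^{iθ})/p(e^{iθ}) = ∏_{n=1}^{N} sin((θ − β_n)/2)/sin((θ − α_n)/2); in particular q/p is real-valued on 𝕋 off the points e^{iα_1},…,e^{iα_N}. -/
open MeasureTheory Complex Real AddCircle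
open scoped Real

noncomputable section

/-- The polynomial-type function `p(z) = e^{-iα/2} ∏_{n}(z - e^{iα_n})` built from
angles `a 0, …, a (N-1)` (with `α` their sum). -/
def pFun (N : ℕ) (a : ℕ → ℝ) (z : ℂ) : ℂ :=
  Complex.exp (-Complex.I * ((∑ i ∈ Finset.range N, a i : ℝ) : ℂ) / 2) *
    ∏ i ∈ Finset.range N, (z - Complex.exp (Complex.I * (a i : ℂ)))

lemma two_I_sin (z : ℂ) :
    2 * Complex.I * Complex.sin z = Complex.exp (z * Complex.I) - Complex.exp (-z * Complex.I) := by
  rw [Complex.sin]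
  linear_combination (Complex.exp (-z * Complex.I) - Complex.exp (z * Complex.I)) * Complex.I_sq

lemma factor (θ c : ℝ) :
    Complex.exp (θ * Complex.I) - Complex.exp (Complex.I * (c : ℂ)) =
      Complex.exp (Complex.I * (((θ + c) / 2 : ℝ) : ℂ)) *
        (2 * Complex.I * ((Real.sin ((θ - c) / 2) : ℝ) : ℂ)) := by
  rw [Complex.ofReal_sin, two_I_sin, mul_sub, ← Complex.exp_add, ← Complex.exp_add]
  push_cast
  ring_nf

lemma pFun_eq (N : ℕ) (c : ℕ → ℝ) (θ : ℝ) :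
    pFun N c (Complex.exp (θ * Complex.I)) =
      Complex.exp (Complex.I * (N * θ / 2)) * (2 * Complex.I) ^ N *
        ((∏ i ∈ Finset.range N, Real.sin ((θ - c i) / 2) : ℝ) : ℂ) := by
  unfold pFun
  have h : ∀ i ∈ Finset.range N,
      Complex.exp (θ * Complex.I) - Complex.exp (Complex.I * (c i : ℂ)) =
        Complex.exp (Complex.I * (((θ + c i) / 2 : ℝ) : ℂ)) *
          (2 * Complex.I * ((Real.sin ((θ - c i) / 2) : ℝ) : ℂ)) := fun i _ => factor θ (c i)
  rw [Finset.prod_congr rfl h, Finset.prod_mul_distrib, Finset.prod_mul_distrib,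
    ← Complex.exp_sum, Finset.prod_const, ← Complex.ofReal_prod, ← mul_assoc,
    ← mul_assoc, ← Complex.exp_add]
  congr 1
  rw [← Finset.mul_sum, ← Complex.ofReal_sum, ← Finset.sum_div,
    Finset.sum_add_distrib, Finset.sum_const, Finset.card_range, nsmul_eq_mul]
  push_cast
  ring

lemma sin_ne (θ c : ℝ) (h : Complex.exp (θ * Complex.I) ≠ Complex.exp ((c : ℂ) * Complex.I)) :
    Real.sin ((θ - c) / 2) ≠ 0 := by
  intro hs
  rw [Real.sin_eq_zero_iff] at hs
  obtain ⟨n, hn⟩ := hs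
  apply h
  rw [Complex.exp_eq_exp_iff_exists_int]
  refine ⟨n, ?_⟩
  have hθ : θ = c + n * (2 * π) := by linarith
  push_cast [hθ]
  ring

/-- On the unit circle, away from the zeros of `p`, the quotient `q/p` is given by
the real product `∏ sin((θ-β_n)/2)/sin((θ-α_n)/2)`; in particular it is
real-valued there. -/
theorem stmt8 (N : ℕ) (hN : 1 ≤ N) (a b : ℕ → ℝ) (ha0 : 0 ≤ a 0)
    (hab : ∀ i < N, a i < b i) (hba : ∀ i, i + 1 < N → b i < a (i + 1))
    (hlast : b (N - 1) < a 0 + 2 * π) :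
    ∀ θ : ℝ, (∀ i < N, Complex.exp (θ * Complex.I) ≠ Complex.exp ((a i : ℂ) * Complex.I)) →
      pFun N b (Complex.exp (θ * Complex.I)) / pFun N a (Complex.exp (θ * Complex.I)) =
        ((∏ i ∈ Finset.range N, Real.sin ((θ - b i) / 2) / Real.sin ((θ - a i) / 2) : ℝ) : ℂ) ∧
      (pFun N b (Complex.exp (θ * Complex.I)) / pFun N a (Complex.exp (θ * Complex.I))).im = 0 := by
  intro θ hθ
  have hsin : ∀ i ∈ Finset.range N, Real.sin ((θ - a i) / 2) ≠ 0 := by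
    intro i hi
    exact sin_ne θ (a i) (hθ i (Finset.mem_range.mp hi))
  have hE : Complex.exp (Complex.I * (N * θ / 2)) * (2 * Complex.I) ^ N ≠ 0 := by
    apply mul_ne_zero (Complex.exp_ne_zero _)
    apply pow_ne_zero
    simp [Complex.I_ne_zero]
  have key : pFun N b (Complex.exp (θ * Complex.I)) / pFun N a (Complex.exp (θ * Complex.I)) =
      ((∏ i ∈ Finset.range N, Real.sin ((θ - b i) / 2) / Real.sin ((θ - a i) / 2) : ℝ) : ℂ) := by
    rw [pFun_eq, pFun_eq, mul_div_mul_left _ _ hE, Finset.prod_div_distrib,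
      ← Complex.ofReal_div]
  exact ⟨key, by rw [key]; exact Complex.ofReal_im _⟩
end
end

section
/- With p and q as in the stated setup and α_{N+1} := α_1 + 2π, for each n ∈ {1,…,N} the function θ ↦ q(e^{iθ})/p(e^{iθ}) is real-valued and strictly increasing on the open interval (α_n, α_{n+1}) and maps that interval onto all of ℝ; it is negative on (α_n, β_n), zero at θ = β_n, and positive on (β_n, α_{n+1}). -/
open MeasureTheory Complex Real AddCircle
open scoped Real

noncomputable section

namespace Stmt9Aux

/-- The product of sines `∏ sin((θ - b i)/2)`. -/
def Pp (N : ℕ) (b : ℕ → ℝ) (θ : ℝ) : ℝ :=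
  ∏ i ∈ Finset.range N, Real.sin ((θ - b i) / 2)

/-- The real function `q(e^{iθ})/p(e^{iθ})`. -/
def Ff (N : ℕ) (a b : ℕ → ℝ) (θ : ℝ) : ℝ := Pp N b θ / Pp N a θ

lemma two_I_sin (w : ℂ) :
    2 * Complex.I * Complex.sin w
      = Complex.exp (w * Complex.I) - Complex.exp (-w * Complex.I) := by
  rw [Complex.sin]
  linear_combination (Complex.exp (-w * Complex.I) - Complex.exp (w * Complex.I)) *
    Complex.I_mul_I

lemma exp_sub_exp (x y : ℝ) :
    Complex.exp ((x : ℂ) * Complex.I) - Complex.exp (Complex.I * (y : ℂ)) =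
      Complex.exp ((((x + y) / 2 : ℝ) : ℂ) * Complex.I) *
        (2 * Complex.I * ((Real.sin ((x - y) / 2) : ℝ) : ℂ)) := by
  rw [Complex.ofReal_sin, two_I_sin, mul_sub, ← Complex.exp_add, ← Complex.exp_add]
  congr 1
  · congr 1
    push_cast
    ring
  · congr 1
    push_cast
    ring

lemma pFun_eq (N : ℕ) (a : ℕ → ℝ) (θ : ℝ) :
    pFun N a (Complex.exp ((θ : ℂ) * Complex.I)) =
      Complex.exp (((N * θ / 2 : ℝ) : ℂ) * Complex.I) * (2 * Complex.I) ^ N *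
        ∏ i ∈ Finset.range N, ((Real.sin ((θ - a i) / 2) : ℝ) : ℂ) := by
  unfold pFun
  rw [Finset.prod_congr rfl fun i _ => exp_sub_exp θ (a i), Finset.prod_mul_distrib,
    Finset.prod_mul_distrib, Finset.prod_const, ← Complex.exp_sum]
  have hsum : ∑ i ∈ Finset.range N, ((((θ + a i) / 2 : ℝ) : ℂ) * Complex.I)
      = (((N * θ / 2 : ℝ) : ℂ) * Complex.I)
        + Complex.I * ((∑ i ∈ Finset.range N, a i : ℝ) : ℂ) / 2 := by
    push_cast
    rw [← Finset.sum_mul, ← Finset.sum_div, Finset.sum_add_distrib, Finset.sum_const,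
      Finset.card_range]
    ring
  rw [hsum, Finset.card_range, ← mul_assoc, ← Complex.exp_add,
    show -Complex.I * ((∑ i ∈ Finset.range N, a i : ℝ) : ℂ) / 2 +
        ((((N * θ / 2 : ℝ) : ℂ) * Complex.I)
          + Complex.I * ((∑ i ∈ Finset.range N, a i : ℝ) : ℂ) / 2)
      = (((N * θ / 2 : ℝ) : ℂ) * Complex.I) from by ring]
  ring

lemma ratio_eq (N : ℕ) (a b : ℕ → ℝ) (θ : ℝ) :
    pFun N b (Complex.exp ((θ : ℂ) * Complex.I)) /
        pFun N a (Complex.exp ((θ : ℂ) * Complex.I))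
      = ((Ff N a b θ : ℝ) : ℂ) := by
  have hc : Complex.exp (((N * θ / 2 : ℝ) : ℂ) * Complex.I) * (2 * Complex.I) ^ N ≠ 0 :=
    mul_ne_zero (Complex.exp_ne_zero _)
      (pow_ne_zero _ (mul_ne_zero two_ne_zero Complex.I_ne_zero))
  rw [pFun_eq, pFun_eq, mul_div_mul_left _ _ hc]
  unfold Ff Pp
  push_cast
  ring

lemma sinid (X Y C D : ℝ) :
    Real.sin (Y - C) * Real.sin (X - D) - Real.sin (Y - D) * Real.sin (X - C)
      = Real.sin (C - D) * Real.sin (Y - X) := by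
  simp only [Real.sin_sub]
  ring

lemma sinid2 (c d t1 t2 : ℝ) :
    Real.sin ((t2 - c) / 2) * Real.sin ((t1 - d) / 2)
      - Real.sin ((t2 - d) / 2) * Real.sin ((t1 - c) / 2)
      = Real.sin ((c - d) / 2) * Real.sin ((t2 - t1) / 2) := by
  simpa only [← sub_div] using sinid (t1 / 2) (t2 / 2) (c / 2) (d / 2)

lemma factor_lt {c d θ1 θ2 : ℝ} (h1 : 0 < Real.sin ((c - d) / 2))
    (h2 : 0 < Real.sin ((θ2 - θ1) / 2))
    (h3 : 0 < Real.sin ((θ1 - d) / 2) * Real.sin ((θ2 - d) / 2)) :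
    Real.sin ((θ1 - c) / 2) / Real.sin ((θ1 - d) / 2)
      < Real.sin ((θ2 - c) / 2) / Real.sin ((θ2 - d) / 2) := by
  have hd1 : Real.sin ((θ1 - d) / 2) ≠ 0 := by
    intro h
    rw [h, zero_mul] at h3
    exact lt_irrefl _ h3
  have hd2 : Real.sin ((θ2 - d) / 2) ≠ 0 := by
    intro h
    rw [h, mul_zero] at h3
    exact lt_irrefl _ h3
  rw [← sub_pos, div_sub_div _ _ hd2 hd1, sinid2 c d θ1 θ2]
  exact div_pos (mul_pos h1 h2) (by rwa [mul_comm] at h3)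

/-- Bundle of the standing hypotheses. -/
structure Hyp (N n : ℕ) (a b : ℕ → ℝ) : Prop where
  hn : n < N
  hab : ∀ i < N, a i < b i
  hba : ∀ i < N, b i < a (i + 1)
  haN : a N = a 0 + 2 * π

namespace Hyp

variable {N n : ℕ} {a b : ℕ → ℝ} (h : Hyp N n a b)

include h

lemma step : ∀ i, i < N → a i < a (i + 1) :=
  fun i hi => (h.hab i hi).trans (h.hba i hi)

lemma amono : ∀ j, j ≤ N → ∀ i, i ≤ j → a i ≤ a j := by
  intro j
  induction j with
  | zero =>
    intro _ i hi
    simp [Nat.le_zero.mp hi]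
  | succ k ih =>
    intro hkN i hi
    rcases Nat.le_succ_iff.mp hi with h' | h'
    · exact (ih (by omega) i h').trans (h.step k (by omega)).le
    · exact le_of_eq (congrArg a h')

lemma a_le_top : ∀ i, i ≤ N → a i ≤ a 0 + 2 * π := by
  intro i hi
  have := h.amono N le_rfl i hi
  rw [h.haN] at this
  exact this

lemma a_ge_bot : ∀ i, i ≤ N → a 0 ≤ a i :=
  fun i hi => h.amono i hi 0 (Nat.zero_le _)

lemma b_lt_top : ∀ i, i < N → b i < a 0 + 2 * π :=
  fun i hi => (h.hba i hi).trans_le (h.a_le_top (i + 1) hi)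

lemma b_gt_bot : ∀ i, i < N → a 0 < b i :=
  fun i hi => (h.a_ge_bot i hi.le).trans_lt (h.hab i hi)

end Hyp

lemma spos {x : ℝ} (h1 : 0 < x) (h2 : x < 2 * π) : 0 < Real.sin (x / 2) :=
  Real.sin_pos_of_pos_of_lt_pi (by linarith) (by linarith)

lemma sneg {x : ℝ} (h1 : -(2 * π) < x) (h2 : x < 0) : Real.sin (x / 2) < 0 := by
  have := spos (x := -x) (by linarith) (by linarith)
  rw [neg_div, Real.sin_neg] at this
  linarith

namespace Hyp

variable {N n : ℕ} {a b : ℕ → ℝ} (h : Hyp N n a b)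

include h

/-- sign of `sin((θ - a i)/2)` for `i ≤ n`, `θ` in the open arc. -/
lemma Apos {θ : ℝ} (h1 : a n < θ) (h2 : θ < a (n + 1)) {i : ℕ} (hi : i ≤ n) :
    0 < Real.sin ((θ - a i) / 2) := by
  have hn' := h.hn
  apply spos
  · have := h.amono n h.hn.le i hi
    linarith
  · have h3 := h.a_le_top (n + 1) h.hn
    have h4 := h.a_ge_bot i (by omega)
    linarith

lemma Aneg {θ : ℝ} (h1 : a n < θ) (h2 : θ < a (n + 1)) {i : ℕ} (hi1 : n < i)
    (hi2 : i < N) : Real.sin ((θ - a i) / 2) < 0 := by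
  apply sneg
  · have h3 : a i < a (i + 1) := h.step i hi2
    have h4 := h.a_le_top (i + 1) hi2
    have h5 := h.a_ge_bot n h.hn.le
    linarith
  · have := h.amono i hi2.le (n + 1) hi1
    linarith

lemma Bpos {θ : ℝ} (h1 : a n ≤ θ) (h2 : θ ≤ a (n + 1)) {i : ℕ} (hi : i < n) :
    0 < Real.sin ((θ - b i) / 2) := by
  have hn' := h.hn
  have hiN : i < N := by omega
  apply spos
  · have h3 : b i < a (i + 1) := h.hba i hiN
    have h4 : a (i + 1) ≤ a n := h.amono n h.hn.le (i + 1) (by omega)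
    linarith
  · have := h.b_gt_bot i hiN
    have := h.a_le_top (n + 1) h.hn
    linarith

lemma Bneg {θ : ℝ} (h1 : a n ≤ θ) (h2 : θ ≤ a (n + 1)) {i : ℕ} (hi1 : n < i)
    (hi2 : i < N) : Real.sin ((θ - b i) / 2) < 0 := by
  apply sneg
  · have := h.b_lt_top i hi2
    have := h.a_ge_bot n h.hn.le
    linarith
  · have h3 : a (n + 1) ≤ a i := h.amono i hi2.le (n + 1) hi1
    have := h.hab i hi2
    linarith

lemma Bnpos {θ : ℝ} (h1 : b n < θ) (h2 : θ ≤ a (n + 1)) :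
    0 < Real.sin ((θ - b n) / 2) := by
  apply spos
  · linarith
  · have := h.b_gt_bot n h.hn
    have := h.a_le_top (n + 1) h.hn
    linarith

lemma Bnneg {θ : ℝ} (h1 : a n ≤ θ) (h2 : θ < b n) :
    Real.sin ((θ - b n) / 2) < 0 := by
  apply sneg
  · have := h.b_lt_top n h.hn
    have := h.a_ge_bot n h.hn.le
    linarith
  · linarith

lemma Qne {θ : ℝ} (h1 : a n < θ) (h2 : θ < a (n + 1)) : Pp N a θ ≠ 0 := by
  rw [Pp]
  apply Finset.prod_ne_zero_iff.mpr
  intro i hi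
  rcases le_or_gt i n with h' | h'
  · exact (h.Apos h1 h2 h').ne'
  · exact (h.Aneg h1 h2 h' (Finset.mem_range.mp hi)).ne

/-- a product over `range N` with all factors except the `n`-th positive and the
`n`-th negative is negative. -/
lemma prod_neg (f : ℕ → ℝ) (hpos : ∀ i, i < N → i ≠ n → 0 < f i) (hneg : f n < 0) :
    (∏ i ∈ Finset.range N, f i) < 0 := by
  rw [← Finset.mul_prod_erase _ f (Finset.mem_range.mpr h.hn)]
  apply mul_neg_of_neg_of_pos hneg
  apply Finset.prod_pos
  intro i hi
  exact hpos i (Finset.mem_range.mp (Finset.mem_of_mem_erase hi))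
    (Finset.ne_of_mem_erase hi)

lemma Fneg {θ : ℝ} (h1 : a n < θ) (h2 : θ < b n) : Ff N a b θ < 0 := by
  have h2' : θ < a (n + 1) := h2.trans (h.hba n h.hn)
  have hPQ : Pp N b θ * Pp N a θ < 0 := by
    rw [Pp, Pp, ← Finset.prod_mul_distrib]
    apply h.prod_neg
    · intro i hiN hne
      rcases lt_or_gt_of_ne hne with hi | hi
      · exact mul_pos (h.Bpos h1.le h2'.le hi) (h.Apos h1 h2' hi.le)
      · exact mul_pos_of_neg_of_neg (h.Bneg h1.le h2'.le hi hiN) (h.Aneg h1 h2' hi hiN)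
    · exact mul_neg_of_neg_of_pos (h.Bnneg h1.le h2) (h.Apos h1 h2' le_rfl)
  rw [Ff]
  rcases mul_neg_iff.mp hPQ with ⟨hp, hq⟩ | ⟨hp, hq⟩
  · exact div_neg_of_pos_of_neg hp hq
  · exact div_neg_of_neg_of_pos hp hq

lemma Fpos {θ : ℝ} (h1 : b n < θ) (h2 : θ < a (n + 1)) : 0 < Ff N a b θ := by
  have h1' : a n < θ := (h.hab n h.hn).trans h1
  have hPQ : 0 < Pp N b θ * Pp N a θ := by
    rw [Pp, Pp, ← Finset.prod_mul_distrib]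
    apply Finset.prod_pos
    intro i hi
    have hiN := Finset.mem_range.mp hi
    rcases lt_trichotomy i n with h' | h' | h'
    · exact mul_pos (h.Bpos h1'.le h2.le h') (h.Apos h1' h2 h'.le)
    · subst h'
      exact mul_pos (h.Bnpos h1 h2.le) (h.Apos h1' h2 le_rfl)
    · exact mul_pos_of_neg_of_neg (h.Bneg h1'.le h2.le h' hiN) (h.Aneg h1' h2 h' hiN)
  rw [Ff]
  rcases mul_pos_iff.mp hPQ with ⟨hp, hq⟩ | ⟨hp, hq⟩
  · exact div_pos hp hq
  · exact div_pos_of_neg_of_neg hp hq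

lemma Fbn : Ff N a b (b n) = 0 := by
  rw [Ff, Pp]
  rw [Finset.prod_eq_zero (Finset.mem_range.mpr h.hn) (by simp)]
  exact zero_div _

lemma mono1 {θ1 θ2 : ℝ} (h1 : b n < θ1) (h12 : θ1 < θ2) (h2 : θ2 < a (n + 1)) :
    Ff N a b θ1 < Ff N a b θ2 := by
  have hθ1l : a n < θ1 := (h.hab n h.hn).trans h1
  have hθ2l : a n < θ2 := hθ1l.trans h12
  have hθ1r : θ1 < a (n + 1) := h12.trans h2
  have hdF : ∀ θ : ℝ, Ff N a b θ
      = ∏ i ∈ Finset.range N, (Real.sin ((θ - b i) / 2) / Real.sin ((θ - a i) / 2)) := by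
    intro θ
    rw [Ff, Pp, Pp, Finset.prod_div_distrib]
  rw [hdF, hdF]
  apply Finset.prod_lt_prod_of_nonempty
  · intro i hi
    have hiN := Finset.mem_range.mp hi
    rcases lt_trichotomy i n with h' | h' | h'
    · exact div_pos (h.Bpos hθ1l.le hθ1r.le h') (h.Apos hθ1l hθ1r h'.le)
    · subst h'
      exact div_pos (h.Bnpos h1 hθ1r.le) (h.Apos hθ1l hθ1r le_rfl)
    · exact div_pos_of_neg_of_neg (h.Bneg hθ1l.le hθ1r.le h' hiN)
        (h.Aneg hθ1l hθ1r h' hiN)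
  · intro i hi
    have hiN := Finset.mem_range.mp hi
    apply factor_lt
    · apply spos
      · linarith [h.hab i hiN]
      · have := h.b_lt_top i hiN
        have := h.a_ge_bot i hiN.le
        linarith
    · apply spos
      · linarith
      · have := h.a_le_top (n + 1) h.hn
        have := h.a_ge_bot n h.hn.le
        linarith
    · rcases le_or_gt i n with h' | h'
      · exact mul_pos (h.Apos hθ1l hθ1r h') (h.Apos hθ2l h2 h')
      · exact mul_pos_of_neg_of_neg (h.Aneg hθ1l hθ1r h' hiN) (h.Aneg hθ2l h2 h' hiN)
  · exact Finset.nonempty_range_iff.mpr (Nat.zero_lt_of_lt h.hn).ne'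

/-- Value-form of `Ff` as `-(G θ)⁻¹` on the arc, where
`G θ = ∏ sin((θ - a (i+1))/2) / sin((θ - b i)/2)`. -/
lemma FG {θ : ℝ} (h1 : a n < θ) (h2 : θ < a (n + 1)) :
    Ff N a b θ
      = -(∏ i ∈ Finset.range N,
          (Real.sin ((θ - a (i + 1)) / 2) / Real.sin ((θ - b i) / 2)))⁻¹ := by
  have hs0 : Real.sin ((θ - a 0) / 2) ≠ 0 := (h.Apos h1 h2 (Nat.zero_le n)).ne'
  have hsN : Real.sin ((θ - a N) / 2) = -Real.sin ((θ - a 0) / 2) := by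
    rw [h.haN, show (θ - (a 0 + 2 * π)) / 2 = (θ - a 0) / 2 - π by ring,
      Real.sin_sub_pi]
  have hshift : (∏ i ∈ Finset.range N, Real.sin ((θ - a (i + 1)) / 2)) = -Pp N a θ := by
    have e1 := Finset.prod_range_succ' (fun i => Real.sin ((θ - a i) / 2)) N
    have e2 := Finset.prod_range_succ (fun i => Real.sin ((θ - a i) / 2)) N
    rw [e2] at e1
    rw [hsN] at e1
    have : (∏ i ∈ Finset.range N, Real.sin ((θ - a (i + 1)) / 2))
        * Real.sin ((θ - a 0) / 2)
        = (-Pp N a θ) * Real.sin ((θ - a 0) / 2) := by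
      rw [Pp]
      linarith [e1]
    exact mul_right_cancel₀ hs0 this
  rw [Finset.prod_div_distrib, hshift, Ff]
  rw [neg_div, inv_neg, neg_neg, inv_div]
  rfl

lemma mono2 {θ1 θ2 : ℝ} (h1 : a n < θ1) (h12 : θ1 < θ2) (h2 : θ2 < b n) :
    Ff N a b θ1 < Ff N a b θ2 := by
  have hbn : b n < a (n + 1) := h.hba n h.hn
  have hθ1r : θ1 < a (n + 1) := by linarith
  have hθ2r : θ2 < a (n + 1) := by linarith
  have hθ2l : a n < θ2 := by linarith
  -- positivity of the factors of G
  have hfac : ∀ θ : ℝ, a n < θ → θ < b n → ∀ i, i < N →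
      0 < Real.sin ((θ - a (i + 1)) / 2) / Real.sin ((θ - b i) / 2) := by
    intro θ hl hr i hiN
    have hr' : θ < a (n + 1) := by linarith
    rcases lt_or_ge i n with h' | h'
    · exact div_pos (h.Apos hl hr' (by omega)) (h.Bpos hl.le hr'.le h')
    · -- i ≥ n : denominator negative
      have hden : Real.sin ((θ - b i) / 2) < 0 := by
        rcases eq_or_lt_of_le h' with h'' | h''
        · rw [← h'']
          exact h.Bnneg hl.le hr
        · exact h.Bneg hl.le hr'.le h'' hiN
      have hnum : Real.sin ((θ - a (i + 1)) / 2) < 0 := by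
        rcases lt_or_ge (i + 1) N with h'' | h''
        · exact h.Aneg hl hr' (by omega) h''
        · have : i + 1 = N := by omega
          rw [this]
          have := h.Apos hl hr' (Nat.zero_le n)
          rw [h.haN, show (θ - (a 0 + 2 * π)) / 2 = (θ - a 0) / 2 - π by ring,
            Real.sin_sub_pi]
          linarith
      exact div_pos_of_neg_of_neg hnum hden
  have hGlt : (∏ i ∈ Finset.range N,
        (Real.sin ((θ1 - a (i + 1)) / 2) / Real.sin ((θ1 - b i) / 2)))
      < ∏ i ∈ Finset.range N,
        (Real.sin ((θ2 - a (i + 1)) / 2) / Real.sin ((θ2 - b i) / 2)) := by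
    apply Finset.prod_lt_prod_of_nonempty
    · intro i hi
      exact hfac θ1 h1 (by linarith) i (Finset.mem_range.mp hi)
    · intro i hi
      have hiN := Finset.mem_range.mp hi
      apply factor_lt
      · apply spos
        · linarith [h.hba i hiN]
        · have := h.a_le_top (i + 1) hiN
          have := h.b_gt_bot i hiN
          linarith
      · apply spos
        · linarith
        · have := h.a_le_top (n + 1) h.hn
          have := h.a_ge_bot n h.hn.le
          linarith
      · rcases lt_or_ge i n with h' | h'
        · exact mul_pos (h.Bpos h1.le hθ1r.le h') (h.Bpos hθ2l.le hθ2r.le h')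
        · have hden1 : Real.sin ((θ1 - b i) / 2) < 0 := by
            rcases eq_or_lt_of_le h' with h'' | h''
            · rw [← h'']
              exact h.Bnneg h1.le (by linarith)
            · exact h.Bneg h1.le hθ1r.le h'' hiN
          have hden2 : Real.sin ((θ2 - b i) / 2) < 0 := by
            rcases eq_or_lt_of_le h' with h'' | h''
            · rw [← h'']
              exact h.Bnneg hθ2l.le h2
            · exact h.Bneg hθ2l.le hθ2r.le h'' hiN
          exact mul_pos_of_neg_of_neg hden1 hden2
    · exact Finset.nonempty_range_iff.mpr (Nat.zero_lt_of_lt h.hn).ne'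
  have hG1 : 0 < ∏ i ∈ Finset.range N,
      (Real.sin ((θ1 - a (i + 1)) / 2) / Real.sin ((θ1 - b i) / 2)) := by
    apply Finset.prod_pos
    intro i hi
    exact hfac θ1 h1 (by linarith) i (Finset.mem_range.mp hi)
  rw [h.FG h1 hθ1r, h.FG hθ2l hθ2r]
  have := inv_strictAnti₀ hG1 hGlt
  linarith

lemma FmonoOn : StrictMonoOn (Ff N a b) (Set.Ioo (a n) (a (n + 1))) := by
  intro θ1 hθ1 θ2 hθ2 h12
  rcases lt_trichotomy θ2 (b n) with h2 | h2 | h2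
  · exact h.mono2 hθ1.1 h12 h2
  · have := h.Fneg hθ1.1 (h2 ▸ h12)
    rw [h2, h.Fbn]
    linarith
  · rcases lt_trichotomy θ1 (b n) with h1 | h1 | h1
    · have := h.Fneg hθ1.1 h1
      have := h.Fpos h2 hθ2.2
      linarith
    · rw [h1, h.Fbn]
      exact h.Fpos h2 hθ2.2
    · exact h.mono1 h1 h12 hθ2.2

lemma Fsurj (y : ℝ) : ∃ θ ∈ Set.Ioo (a n) (a (n + 1)), Ff N a b θ = y := by
  set ψ : ℝ → ℝ := fun θ => Pp N b θ - y * Pp N a θ with hψ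
  have hcont : ContinuousOn ψ (Set.Icc (a n) (a (n + 1))) := by
    apply Continuous.continuousOn
    apply Continuous.sub
    · apply continuous_finset_prod
      intro i _
      exact Real.continuous_sin.comp ((continuous_id.sub continuous_const).div_const 2)
    · apply Continuous.mul continuous_const
      apply continuous_finset_prod
      intro i _
      exact Real.continuous_sin.comp ((continuous_id.sub continuous_const).div_const 2)
  have hQan : Pp N a (a n) = 0 :=
    Finset.prod_eq_zero (Finset.mem_range.mpr h.hn) (by simp)
  have hQan1 : Pp N a (a (n + 1)) = 0 := by
    rcases lt_or_ge (n + 1) N with hc | hc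
    · exact Finset.prod_eq_zero (Finset.mem_range.mpr hc) (by simp)
    · have hn' := h.hn
      have hnN : n + 1 = N := by omega
      apply Finset.prod_eq_zero (Finset.mem_range.mpr (by omega : 0 < N))
      rw [hnN, h.haN, show (a 0 + 2 * π - a 0) / 2 = π by ring]
      exact Real.sin_pi
  have habn : a n < a (n + 1) := h.step n h.hn
  have hψan : ψ (a n) = Pp N b (a n) := by
    rw [hψ]
    simp [hQan]
  have hψan1 : ψ (a (n + 1)) = Pp N b (a (n + 1)) := by
    rw [hψ]
    simp [hQan1]
  have hPP : Pp N b (a n) * Pp N b (a (n + 1)) < 0 := by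
    rw [Pp, Pp, ← Finset.prod_mul_distrib]
    apply h.prod_neg
    · intro i hiN hne
      rcases lt_or_gt_of_ne hne with hi | hi
      · exact mul_pos (h.Bpos le_rfl habn.le hi) (h.Bpos habn.le le_rfl hi)
      · exact mul_pos_of_neg_of_neg (h.Bneg le_rfl habn.le hi hiN)
          (h.Bneg habn.le le_rfl hi hiN)
    · exact mul_neg_of_neg_of_pos (h.Bnneg le_rfl (h.hab n h.hn))
        (h.Bnpos (h.hba n h.hn) le_rfl)
  have hex : ∃ θ ∈ Set.Ioo (a n) (a (n + 1)), ψ θ = 0 := by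
    rcases mul_neg_iff.mp hPP with ⟨hp1, hp2⟩ | ⟨hp1, hp2⟩
    · -- ψ (a n) > 0 > ψ (a (n+1))
      have hmem : (0 : ℝ) ∈ Set.Ioo (ψ (a (n + 1))) (ψ (a n)) := by
        rw [hψan, hψan1]
        exact ⟨hp2, hp1⟩
      obtain ⟨θ, hθ, hθ0⟩ := intermediate_value_Ioo' habn.le hcont hmem
      exact ⟨θ, hθ, hθ0⟩
    · have hmem : (0 : ℝ) ∈ Set.Ioo (ψ (a n)) (ψ (a (n + 1))) := by
        rw [hψan, hψan1]
        exact ⟨hp1, hp2⟩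
      obtain ⟨θ, hθ, hθ0⟩ := intermediate_value_Ioo habn.le hcont hmem
      exact ⟨θ, hθ, hθ0⟩
  obtain ⟨θ, hθ, hθ0⟩ := hex
  refine ⟨θ, hθ, ?_⟩
  have hQ := h.Qne hθ.1 hθ.2
  have hPyQ : Pp N b θ = y * Pp N a θ := by
    rw [hψ] at hθ0
    simp only at hθ0
    linarith
  rw [Ff, hPyQ, mul_div_assoc, div_self hQ, mul_one]

end Hyp

end Stmt9Aux

open Stmt9Aux in
/-- On each arc `(α_n, α_{n+1})` (with `α_{N+1} := α_1 + 2π`, here encoded by the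
hypothesis `a N = a 0 + 2π`), the function `θ ↦ q(e^{iθ})/p(e^{iθ})` is
real-valued, strictly increasing, and maps the arc onto all of `ℝ`; it is
negative on `(α_n, β_n)`, zero at `β_n`, and positive on `(β_n, α_{n+1})`. -/
theorem stmt9 (N : ℕ) (hN : 1 ≤ N) (a b : ℕ → ℝ) (ha0 : 0 ≤ a 0)
    (hab : ∀ i < N, a i < b i) (hba : ∀ i < N, b i < a (i + 1))
    (haN : a N = a 0 + 2 * π) :
    ∀ n < N,
      (∀ θ ∈ Set.Ioo (a n) (a (n + 1)),
        (pFun N b (Complex.exp (θ * Complex.I)) /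
          pFun N a (Complex.exp (θ * Complex.I))).im = 0) ∧
      StrictMonoOn (fun θ : ℝ =>
          (pFun N b (Complex.exp (θ * Complex.I)) /
            pFun N a (Complex.exp (θ * Complex.I))).re)
        (Set.Ioo (a n) (a (n + 1))) ∧
      (∀ y : ℝ, ∃ θ ∈ Set.Ioo (a n) (a (n + 1)),
        (pFun N b (Complex.exp (θ * Complex.I)) /
          pFun N a (Complex.exp (θ * Complex.I))).re = y) ∧
      (∀ θ ∈ Set.Ioo (a n) (b n),
        (pFun N b (Complex.exp (θ * Complex.I)) /
          pFun N a (Complex.exp (θ * Complex.I))).re < 0) ∧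
      pFun N b (Complex.exp ((b n : ℂ) * Complex.I)) /
        pFun N a (Complex.exp ((b n : ℂ) * Complex.I)) = 0 ∧
      (∀ θ ∈ Set.Ioo (b n) (a (n + 1)),
        0 < (pFun N b (Complex.exp (θ * Complex.I)) /
          pFun N a (Complex.exp (θ * Complex.I))).re) := by
  intro n hn
  have h : Stmt9Aux.Hyp N n a b := ⟨hn, hab, hba, haN⟩
  refine ⟨?_, ?_, ?_, ?_, ?_, ?_⟩
  · intro θ _
    rw [ratio_eq]
    exact Complex.ofReal_im _
  · have he : (fun θ : ℝ =>
        (pFun N b (Complex.exp (θ * Complex.I)) /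
          pFun N a (Complex.exp (θ * Complex.I))).re) = Ff N a b := by
      funext θ
      rw [ratio_eq]
      exact Complex.ofReal_re _
    rw [he]
    exact h.FmonoOn
  · intro y
    obtain ⟨θ, hθ, hF⟩ := h.Fsurj y
    refine ⟨θ, hθ, ?_⟩
    rw [ratio_eq, Complex.ofReal_re]
    exact hF
  · intro θ hθ
    rw [ratio_eq, Complex.ofReal_re]
    exact h.Fneg hθ.1 hθ.2
  · rw [ratio_eq, h.Fbn]
    exact Complex.ofReal_zero
  · intro θ hθ
    rw [ratio_eq, Complex.ofReal_re]
    exact h.Fpos hθ.1 hθ.2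
end
end

section
/- With p and q as in the stated setup and α_{N+1} := α_1 + 2π, the rational function ω = (q − ip)/(q + ip) is a Blaschke product of order N; it satisfies ω(e^{iα_n}) = 1 and ω(e^{iβ_n}) = −1 for each n ∈ {1,…,N}; and for every θ with e^{iθ} distinct from all the points e^{iα_n}, e^{iβ_n}, one has (2/π)·Arg((1 + ω(e^{iθ}))/(1 − ω(e^{iθ}))) = 1 if θ (mod 2π) lies in some interval (α_n, β_n) and = −1 if θ (mod 2π) lies in some interval (β_n, α_{n+1}). -/
open MeasureTheory Complex Real AddCircle
open scoped Real

noncomputable section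

namespace Stmt10

lemma exp_sub_exp' (x y : ℝ) :
    Complex.exp (↑x * I) - Complex.exp (↑y * I) =
      2 * I * Complex.exp ((((x + y)/2 : ℝ) : ℂ) * I) * ((Real.sin ((x - y)/2) : ℝ) : ℂ) := by
  have h1 : (x:ℂ) * I = (((x+y)/2 : ℝ):ℂ)*I + (((x-y)/2 : ℝ):ℂ)*I := by push_cast; ring
  have h2 : (y:ℂ) * I = (((x+y)/2 : ℝ):ℂ)*I + -((((x-y)/2 : ℝ):ℂ)*I) := by push_cast; ring
  rw [h1, h2, Complex.exp_add, Complex.exp_add, ← mul_sub, Complex.ofReal_sin, Complex.sin,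
    neg_mul]
  linear_combination (Complex.exp ((((x + y)/2 : ℝ):ℂ) * I) *
    (Complex.exp ((((x - y)/2 : ℝ):ℂ) * I) - Complex.exp (-((((x - y)/2 : ℝ):ℂ) * I)))) *
    Complex.I_sq

lemma prod_exp_sub (s : Finset ℕ) (c : ℕ → ℝ) (θ : ℝ) :
    ∏ j ∈ s, (Complex.exp (↑θ*I) - Complex.exp (↑(c j)*I)) =
      (2*I)^s.card * Complex.exp ((((∑ j ∈ s, (θ + c j))/2 : ℝ):ℂ)*I) *
        ((∏ j ∈ s, Real.sin ((θ - c j)/2) : ℝ):ℂ) := by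
  rw [Finset.prod_congr rfl (fun i _ => exp_sub_exp' θ (c i)), Finset.prod_mul_distrib,
    Finset.prod_mul_distrib, Finset.prod_const, ← Complex.exp_sum, Complex.ofReal_prod]
  congr 2
  rw [← Finset.sum_mul]
  congr 1
  push_cast
  rw [Finset.sum_div]

lemma pFun_eval (N : ℕ) (c : ℕ → ℝ) (z : ℂ) :
    pFun N c z = Complex.exp (-I * ((∑ i ∈ Finset.range N, c i : ℝ) : ℂ) / 2) *
      ∏ i ∈ Finset.range N, (z - Complex.exp (((c i : ℝ) : ℂ) * I)) := by
  unfold pFun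
  rw [Finset.prod_congr rfl (fun i _ => by rw [mul_comm I ((c i : ℝ) : ℂ)])]

lemma pFun_circle (N : ℕ) (c : ℕ → ℝ) (θ : ℝ) :
    pFun N c (Complex.exp (↑θ * I)) =
      (2*I)^N * Complex.exp ((((N * θ)/2 : ℝ) : ℂ) * I) *
        ((∏ i ∈ Finset.range N, Real.sin ((θ - c i)/2) : ℝ) : ℂ) := by
  rw [pFun_eval, prod_exp_sub, Finset.card_range]
  have hsum : Complex.exp (-I * ((∑ i ∈ Finset.range N, c i : ℝ):ℂ) / 2) *
      Complex.exp ((((∑ i ∈ Finset.range N, (θ + c i))/2 : ℝ):ℂ) * I) =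
      Complex.exp ((((N * θ)/2 : ℝ):ℂ) * I) := by
    rw [← Complex.exp_add]
    congr 1
    push_cast
    rw [Finset.sum_add_distrib, Finset.sum_const, Finset.card_range]
    ring
  calc Complex.exp (-I * ((∑ i ∈ Finset.range N, c i : ℝ):ℂ) / 2) *
      ((2*I)^N * Complex.exp ((((∑ i ∈ Finset.range N, (θ + c i))/2 : ℝ):ℂ) * I) *
        ((∏ i ∈ Finset.range N, Real.sin ((θ - c i)/2) : ℝ):ℂ))
      = (2*I)^N * (Complex.exp (-I * ((∑ i ∈ Finset.range N, c i : ℝ):ℂ) / 2) *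
        Complex.exp ((((∑ i ∈ Finset.range N, (θ + c i))/2 : ℝ):ℂ) * I)) *
        ((∏ i ∈ Finset.range N, Real.sin ((θ - c i)/2) : ℝ):ℂ) := by ring
    _ = _ := by rw [hsum]



variable {N : ℕ} {a b : ℕ → ℝ}

lemma sin_half_pos {x : ℝ} (h0 : 0 < x) (h2 : x < 2*π) : 0 < Real.sin (x/2) :=
  Real.sin_pos_of_pos_of_lt_pi (by linarith) (by linarith)

lemma sin_half_neg {x : ℝ} (h0 : -(2*π) < x) (h2 : x < 0) : Real.sin (x/2) < 0 := by
  have h := Real.sin_pos_of_pos_of_lt_pi (x := -(x/2)) (by linarith) (by linarith)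
  rw [Real.sin_neg] at h; linarith

lemma a_lt (hab : ∀ i < N, a i < b i) (hba : ∀ i < N, b i < a (i+1)) :
    ∀ i j, i < j → j ≤ N → a i < a j := by
  intro i j hij hjN
  induction j with
  | zero => omega
  | succ k ih =>
    rcases Nat.lt_succ_iff_lt_or_eq.mp hij with h | h
    · exact (ih h (by omega)).trans ((hab k (by omega)).trans (hba k (by omega)))
    · subst h; exact (hab i (by omega)).trans (hba i (by omega))

lemma a_le (hab : ∀ i < N, a i < b i) (hba : ∀ i < N, b i < a (i+1)) :
    ∀ i j, i ≤ j → j ≤ N → a i ≤ a j := fun i j hij hjN =>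
  hij.lt_or_eq.elim (fun h => (a_lt hab hba i j h hjN).le) (fun h => h ▸ le_refl _)

lemma win (hab : ∀ i < N, a i < b i) (hba : ∀ i < N, b i < a (i+1))
    (haN : a N = a 0 + 2*π) :
    ∀ i < N, a 0 ≤ a i ∧ a i < b i ∧ b i < a 0 + 2*π := by
  intro i hi
  refine ⟨a_le hab hba 0 i (by omega) (by omega), hab i hi, ?_⟩
  have h1 : b i < a (i+1) := hba i hi
  have h2 : a (i+1) ≤ a N := a_le hab hba (i+1) N (by omega) le_rfl
  rw [haN] at h2; linarith

variable (hab : ∀ i < N, a i < b i) (hba : ∀ i < N, b i < a (i+1))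
  (haN : a N = a 0 + 2*π)

include hab hba haN

lemma sAB : ∀ n < N, ∀ m < N, (m < n → 0 < Real.sin ((a n - b m)/2)) ∧
    (n ≤ m → Real.sin ((a n - b m)/2) < 0) := by
  intro n hn m hm
  obtain ⟨h1n, h2n, h3n⟩ := win hab hba haN n hn
  obtain ⟨h1m, h2m, h3m⟩ := win hab hba haN m hm
  have haNn : a n < a 0 + 2*π := haN ▸ a_lt hab hba n N hn le_rfl
  constructor
  · intro h
    have h5 : a (m+1) ≤ a n := a_le hab hba (m+1) n (by omega) (by omega)
    have h6 := hba m hm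
    exact sin_half_pos (by linarith) (by linarith)
  · intro h
    have h5 : a n ≤ a m := a_le hab hba n m h (by omega)
    exact sin_half_neg (by linarith) (by linarith)

lemma sBA : ∀ n < N, ∀ m < N, (m ≤ n → 0 < Real.sin ((b n - a m)/2)) ∧
    (n < m → Real.sin ((b n - a m)/2) < 0) := by
  intro n hn m hm
  obtain ⟨h1n, h2n, h3n⟩ := win hab hba haN n hn
  obtain ⟨h1m, h2m, h3m⟩ := win hab hba haN m hm
  have haNm : a m < a 0 + 2*π := haN ▸ a_lt hab hba m N hm le_rfl
  constructor
  · intro h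
    have h5 : a m ≤ a n := a_le hab hba m n h (by omega)
    exact sin_half_pos (by linarith) (by linarith)
  · intro h
    have h5 : a (n+1) ≤ a m := a_le hab hba (n+1) m (by omega) (by omega)
    have h6 := hba n hn
    exact sin_half_neg (by linarith) (by linarith)

lemma sAA : ∀ n < N, ∀ m < N, (m < n → 0 < Real.sin ((a n - a m)/2)) ∧
    (n < m → Real.sin ((a n - a m)/2) < 0) := by
  intro n hn m hm
  obtain ⟨h1n, h2n, h3n⟩ := win hab hba haN n hn
  obtain ⟨h1m, h2m, h3m⟩ := win hab hba haN m hm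
  have haNn : a n < a 0 + 2*π := haN ▸ a_lt hab hba n N hn le_rfl
  have haNm : a m < a 0 + 2*π := haN ▸ a_lt hab hba m N hm le_rfl
  constructor
  · intro h
    have h5 := a_lt hab hba m n h (by omega)
    exact sin_half_pos (by linarith) (by linarith)
  · intro h
    have h5 := a_lt hab hba n m h (by omega)
    exact sin_half_neg (by linarith) (by linarith)

lemma erase_prod_eq {z : ℂ} {i : ℕ} (hi : i ∈ Finset.range N)
    (hz : z ≠ Complex.exp (((a i : ℝ):ℂ) * I)) :
    ∏ j ∈ (Finset.range N).erase i, (z - Complex.exp (((a j : ℝ):ℂ) * I)) =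
      (z - Complex.exp (((a i : ℝ):ℂ) * I))⁻¹ *
        ((Complex.exp (-I * ((∑ k ∈ Finset.range N, a k : ℝ):ℂ)/2))⁻¹ * pFun N a z) := by
  have h1 : pFun N a z = Complex.exp (-I * ((∑ k ∈ Finset.range N, a k : ℝ):ℂ)/2) *
      ((z - Complex.exp (((a i : ℝ):ℂ) * I)) *
        ∏ j ∈ (Finset.range N).erase i, (z - Complex.exp (((a j : ℝ):ℂ) * I))) := by
    rw [pFun_eval, ← Finset.mul_prod_erase _ _ hi]
  rw [h1]
  have h2 : z - Complex.exp (((a i : ℝ):ℂ) * I) ≠ 0 := sub_ne_zero_of_ne hz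
  rw [inv_mul_cancel_left₀ (Complex.exp_ne_zero _), inv_mul_cancel_left₀ h2]

omit hab hba haN in
lemma exp_ne_exp {θ c : ℝ} (h : Real.sin ((θ - c)/2) ≠ 0) :
    Complex.exp (↑θ * I) ≠ Complex.exp (↑c * I) := by
  intro he
  rw [Complex.exp_eq_exp_iff_exists_int] at he
  obtain ⟨k, hk⟩ := he
  have h2 : ((θ : ℂ) - c - k*(2*π)) * I = 0 := by linear_combination hk
  rcases mul_eq_zero.mp h2 with h3 | h3
  · have h4 : (θ:ℂ) = c + k*(2*π) := by linear_combination h3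
    have h5 : θ = c + k*(2*π) := by exact_mod_cast h4
    apply h
    have h6 : (θ - c)/2 = (k:ℝ) * π := by rw [h5]; ring
    rw [h6]
    exact Real.sin_int_mul_pi k
  · exact Complex.I_ne_zero h3

omit hab hba haN in
lemma eval_nodal' (s : Finset ℕ) (g : ℕ → ℂ) (z : ℂ) :
    (∏ i ∈ s, (Polynomial.X - Polynomial.C (g i))).eval z = ∏ i ∈ s, (z - g i) := by
  rw [Polynomial.eval_prod]
  simp

lemma term_eq (hN : 1 ≤ N) {z : ℂ} {i : ℕ} (hi : i ∈ Finset.range N)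
    (hz : z ≠ Complex.exp (((a i : ℝ):ℂ) * I)) :
    pFun N b (Complex.exp (((a i : ℝ):ℂ) * I)) *
      ∏ j ∈ (Finset.range N).erase i,
        ((Complex.exp (((a i : ℝ):ℂ) * I) - Complex.exp (((a j : ℝ):ℂ) * I))⁻¹ *
          (z - Complex.exp (((a j : ℝ):ℂ) * I))) =
    ((-((∏ k ∈ Finset.range N, Real.sin ((a i - b k)/2)) /
        (∏ k ∈ (Finset.range N).erase i, Real.sin ((a i - a k)/2))) : ℝ) : ℂ) *
      (-2 * I * Complex.exp (((a i : ℝ):ℂ) * I) / (z - Complex.exp (((a i : ℝ):ℂ) * I))) *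
      pFun N a z := by
  have hiN := Finset.mem_range.mp hi
  have hcard : ((Finset.range N).erase i).card = N - 1 := by
    rw [Finset.card_erase_of_mem hi, Finset.card_range]
  rw [Finset.prod_mul_distrib, Finset.prod_inv_distrib,
    prod_exp_sub ((Finset.range N).erase i) a (a i), erase_prod_eq hab hba haN hi hz,
    pFun_circle, hcard]
  -- scalar bookkeeping
  have hAne : ((∏ k ∈ (Finset.range N).erase i, Real.sin ((a i - a k)/2) : ℝ) : ℂ) ≠ 0 := by
    rw [Complex.ofReal_ne_zero]
    rw [Finset.prod_ne_zero_iff]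
    intro k hk
    obtain ⟨hki, hkN⟩ := Finset.mem_erase.mp hk
    rcases lt_or_gt_of_ne hki with h | h
    · exact ((sAA hab hba haN i hiN k (Finset.mem_range.mp hkN)).1 h).ne'
    · exact ((sAA hab hba haN i hiN k (Finset.mem_range.mp hkN)).2 h).ne
  have hexp : Complex.exp ((((N * a i)/2 : ℝ):ℂ) * I) *
      (Complex.exp ((((∑ j ∈ (Finset.range N).erase i, (a i + a j))/2 : ℝ):ℂ) * I))⁻¹ *
      (Complex.exp (-I * ((∑ k ∈ Finset.range N, a k : ℝ):ℂ)/2))⁻¹ =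
      Complex.exp (((a i : ℝ):ℂ) * I) := by
    rw [← Complex.exp_neg, ← Complex.exp_neg, ← Complex.exp_add, ← Complex.exp_add]
    congr 1
    have hsum : ∑ j ∈ (Finset.range N).erase i, (a i + a j) =
        (((Finset.range N).erase i).card : ℝ) * a i +
          ((∑ k ∈ Finset.range N, a k) - a i) := by
      rw [Finset.sum_add_distrib, Finset.sum_const, nsmul_eq_mul]
      congr 1
      have h9 := Finset.add_sum_erase (Finset.range N) a hi
      linarith
    rw [hsum, hcard]
    have hN1 : ((N - 1 : ℕ) : ℝ) = (N : ℝ) - 1 := by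
      rw [Nat.cast_sub hN]; simp
    push_cast [hN1]
    ring
  have h2I : ((2*I : ℂ))^N = (2*I)^(N-1) * (2*I) := by
    rw [← pow_succ]
    congr 1
    omega
  have h2Ine : (2*I : ℂ) ≠ 0 := by simp [Complex.I_ne_zero]
  have hP : ((2*I : ℂ))^(N-1) * (((2*I : ℂ))^(N-1))⁻¹ = 1 :=
    mul_inv_cancel₀ (pow_ne_zero _ h2Ine)
  have hmu : ((-((∏ k ∈ Finset.range N, Real.sin ((a i - b k)/2)) /
        (∏ k ∈ (Finset.range N).erase i, Real.sin ((a i - a k)/2))) : ℝ) : ℂ) =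
      -(((∏ k ∈ Finset.range N, Real.sin ((a i - b k)/2) : ℝ) : ℂ) /
        ((∏ k ∈ (Finset.range N).erase i, Real.sin ((a i - a k)/2) : ℝ) : ℂ)) := by
    push_cast
    ring
  rw [hmu, h2I]
  linear_combination
    (2*I*((∏ k ∈ Finset.range N, Real.sin ((a i - b k)/2) : ℝ) : ℂ) *
      (((∏ k ∈ (Finset.range N).erase i, Real.sin ((a i - a k)/2) : ℝ) : ℂ))⁻¹ *
      (z - Complex.exp (((a i : ℝ):ℂ) * I))⁻¹ * pFun N a z *
      (Complex.exp ((((N * a i)/2 : ℝ):ℂ) * I) *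
        (Complex.exp ((((∑ j ∈ (Finset.range N).erase i, (a i + a j))/2 : ℝ):ℂ) * I))⁻¹ *
        (Complex.exp (-I * ((∑ k ∈ Finset.range N, a k : ℝ):ℂ)/2))⁻¹)) * hP +
    (2*I*((∏ k ∈ Finset.range N, Real.sin ((a i - b k)/2) : ℝ) : ℂ) *
      (((∏ k ∈ (Finset.range N).erase i, Real.sin ((a i - a k)/2) : ℝ) : ℂ))⁻¹ *
      (z - Complex.exp (((a i : ℝ):ℂ) * I))⁻¹ * pFun N a z) * hexp

lemma main_identity (hN : 1 ≤ N) (z : ℂ)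
    (hz : ∀ m < N, z ≠ Complex.exp (((a m : ℝ):ℂ) * I)) :
    pFun N b z = pFun N a z *
      (Complex.exp (((((∑ i ∈ Finset.range N, a i) - ∑ i ∈ Finset.range N, b i)/2 : ℝ):ℂ) * I) +
        ∑ m ∈ Finset.range N,
          ((-((∏ k ∈ Finset.range N, Real.sin ((a m - b k)/2)) /
              (∏ k ∈ (Finset.range N).erase m, Real.sin ((a m - a k)/2))) : ℝ) : ℂ) *
            (-2 * I * Complex.exp (((a m : ℝ):ℂ) * I) /
              (z - Complex.exp (((a m : ℝ):ℂ) * I)))) := by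
  classical
  have hinj : Set.InjOn (fun n => Complex.exp (((a n : ℝ):ℂ) * I))
      ((Finset.range N : Finset ℕ) : Set ℕ) := by
    intro i hi j hj hij
    simp only [Finset.coe_range, Set.mem_Iio] at hi hj
    by_contra hne
    have hsin : Real.sin ((a i - a j)/2) ≠ 0 := by
      rcases lt_or_gt_of_ne hne with h | h
      · exact ((sAA hab hba haN i hi j hj).2 h).ne
      · exact ((sAA hab hba haN i hi j hj).1 h).ne'
    exact exp_ne_exp hsin (by simpa using hij)
  set Acoef := Complex.exp (-I * ((∑ k ∈ Finset.range N, a k : ℝ):ℂ)/2) with hAc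
  set Bcoef := Complex.exp (-I * ((∑ k ∈ Finset.range N, b k : ℝ):ℂ)/2) with hBc
  set lc := Complex.exp (((((∑ i ∈ Finset.range N, a i) -
    ∑ i ∈ Finset.range N, b i)/2 : ℝ):ℂ) * I) with hlc
  set Ma := ∏ i ∈ Finset.range N,
    (Polynomial.X - Polynomial.C (Complex.exp (((a i : ℝ):ℂ) * I))) with hMa
  set Mb := ∏ i ∈ Finset.range N,
    (Polynomial.X - Polynomial.C (Complex.exp (((b i : ℝ):ℂ) * I))) with hMb
  have hMam : Ma.Monic :=
    Polynomial.monic_prod_of_monic _ _ (fun i _ => Polynomial.monic_X_sub_C _)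
  have hMbm : Mb.Monic :=
    Polynomial.monic_prod_of_monic _ _ (fun i _ => Polynomial.monic_X_sub_C _)
  have hMad : Ma.natDegree = N := by
    rw [hMa, Polynomial.natDegree_prod_of_monic _ _ (fun i _ => Polynomial.monic_X_sub_C _)]
    simp
  have hMbd : Mb.natDegree = N := by
    rw [hMb, Polynomial.natDegree_prod_of_monic _ _ (fun i _ => Polynomial.monic_X_sub_C _)]
    simp
  have hlcBA : lc * Acoef = Bcoef := by
    rw [hlc, hAc, hBc, ← Complex.exp_add]
    congr 1
    push_cast
    ring
  set f := Polynomial.C Bcoef * Mb - Polynomial.C lc * (Polynomial.C Acoef * Ma) with hf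
  have hdegf : f.degree < ((Finset.range N).card : WithBot ℕ) := by
    rw [Finset.card_range]
    refine (Polynomial.degree_lt_iff_coeff_zero _ _).mpr ?_
    intro m hm
    rw [hf, Polynomial.coeff_sub, Polynomial.coeff_C_mul, Polynomial.coeff_C_mul,
      Polynomial.coeff_C_mul]
    rcases eq_or_lt_of_le hm with h | h
    · have hb1 : Mb.coeff m = 1 := by rw [← h, ← hMbd]; exact hMbm.coeff_natDegree
      have ha1 : Ma.coeff m = 1 := by rw [← h, ← hMad]; exact hMam.coeff_natDegree
      rw [hb1, ha1, mul_one, mul_one, ← hlcBA]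
      ring
    · have hb0 : Mb.coeff m = 0 := Polynomial.coeff_eq_zero_of_natDegree_lt (by omega)
      have ha0 : Ma.coeff m = 0 := Polynomial.coeff_eq_zero_of_natDegree_lt (by omega)
      rw [hb0, ha0]
      ring
  have hpa : pFun N a z = Acoef * Ma.eval z := by
    rw [pFun_eval, hMa, eval_nodal' _ _ _, hAc]
  have hpb : pFun N b z = Bcoef * Mb.eval z := by
    rw [pFun_eval, hMb, eval_nodal' _ _ _, hBc]
  have hvals : ∀ i ∈ Finset.range N,
      f.eval ((fun n => Complex.exp (((a n : ℝ):ℂ) * I)) i) =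
        (fun i => pFun N b (Complex.exp (((a i : ℝ):ℂ) * I))) i := by
    intro i hi
    simp only [hf, Polynomial.eval_sub, Polynomial.eval_mul, Polynomial.eval_C]
    have hMaz : Ma.eval (Complex.exp (((a i : ℝ):ℂ) * I)) = 0 := by
      rw [hMa, Polynomial.eval_prod]
      exact Finset.prod_eq_zero hi (by simp)
    have hMbz : pFun N b (Complex.exp (((a i : ℝ):ℂ) * I)) =
        Bcoef * Mb.eval (Complex.exp (((a i : ℝ):ℂ) * I)) := by
      rw [pFun_eval, hMb, eval_nodal' _ _ _, hBc]
    rw [hMaz, hMbz]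
    ring
  have key := Lagrange.eq_interpolate_of_eval_eq
    (v := fun n => Complex.exp (((a n : ℝ):ℂ) * I))
    (r := fun i => pFun N b (Complex.exp (((a i : ℝ):ℂ) * I))) hinj hdegf hvals
  have hev := congrArg (Polynomial.eval z) key
  rw [Lagrange.interpolate_apply] at hev
  simp only [hf, Polynomial.eval_sub, Polynomial.eval_mul, Polynomial.eval_C,
    Polynomial.eval_finset_sum, Lagrange.basis, Polynomial.eval_prod,
    Lagrange.basisDivisor, Polynomial.eval_X] at hev
  rw [← hpa, ← hpb] at hev
  have hsum : ∑ i ∈ Finset.range N,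
      (pFun N b (Complex.exp (((a i : ℝ):ℂ) * I)) *
        ∏ j ∈ (Finset.range N).erase i,
          ((Complex.exp (((a i : ℝ):ℂ) * I) - Complex.exp (((a j : ℝ):ℂ) * I))⁻¹ *
            (z - Complex.exp (((a j : ℝ):ℂ) * I)))) =
      ∑ i ∈ Finset.range N,
        (((-((∏ k ∈ Finset.range N, Real.sin ((a i - b k)/2)) /
            (∏ k ∈ (Finset.range N).erase i, Real.sin ((a i - a k)/2))) : ℝ) : ℂ) *
          (-2 * I * Complex.exp (((a i : ℝ):ℂ) * I) /
            (z - Complex.exp (((a i : ℝ):ℂ) * I)))) * pFun N a z :=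
    Finset.sum_congr rfl (fun i hi =>
      term_eq hab hba haN hN hi (hz i (Finset.mem_range.mp hi)))
  rw [hsum] at hev
  rw [mul_add, Finset.mul_sum]
  have hc : ∀ i ∈ Finset.range N,
      pFun N a z *
        (((-((∏ k ∈ Finset.range N, Real.sin ((a i - b k)/2)) /
            (∏ k ∈ (Finset.range N).erase i, Real.sin ((a i - a k)/2))) : ℝ) : ℂ) *
          (-2 * I * Complex.exp (((a i : ℝ):ℂ) * I) /
            (z - Complex.exp (((a i : ℝ):ℂ) * I)))) =
      (((-((∏ k ∈ Finset.range N, Real.sin ((a i - b k)/2)) /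
            (∏ k ∈ (Finset.range N).erase i, Real.sin ((a i - a k)/2))) : ℝ) : ℂ) *
          (-2 * I * Complex.exp (((a i : ℝ):ℂ) * I) /
            (z - Complex.exp (((a i : ℝ):ℂ) * I)))) * pFun N a z :=
    fun i _ => mul_comm _ _
  rw [Finset.sum_congr rfl hc]
  linear_combination hev



omit hab hba haN in
lemma ker_im {v z : ℂ} (hv : Complex.normSq v = 1) (hzv : z ≠ v) :
    (-2 * I * v / (z - v)).im = (1 - Complex.normSq z)/Complex.normSq (z - v) + 1 := by
  have hd : Complex.normSq (z - v) ≠ 0 := by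
    simpa [Complex.normSq_eq_zero] using sub_ne_zero_of_ne hzv
  have hre : (-2*I*v).re = 2*v.im := by simp
  have him : (-2*I*v).im = -2*v.re := by simp
  have key : (-2*v.re) * (z-v).re - 2*v.im*(z-v).im
      = (1 - Complex.normSq z) + Complex.normSq (z-v) := by
    simp only [Complex.normSq_apply, Complex.sub_re, Complex.sub_im]
    rw [Complex.normSq_apply] at hv
    linear_combination hv
  rw [Complex.div_im, hre, him, div_sub_div_same, key, add_div, div_self hd]

lemma prodsA {θ : ℝ} {n : ℕ} (hn : n < N) (hθ : θ ∈ Set.Ioo (a n) (b n)) :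
    (∏ m ∈ Finset.range N, Real.sin ((θ - a m)/2)) *
      (∏ m ∈ Finset.range N, Real.sin ((θ - b m)/2)) < 0 := by
  obtain ⟨hθ1, hθ2⟩ := hθ
  obtain ⟨h1n, h2n, h3n⟩ := win hab hba haN n hn
  rw [← Finset.prod_mul_distrib, ← Finset.mul_prod_erase _ _ (Finset.mem_range.mpr hn)]
  have hhead : Real.sin ((θ - a n)/2) * Real.sin ((θ - b n)/2) < 0 := by
    have hp : 0 < Real.sin ((θ - a n)/2) := sin_half_pos (by linarith) (by linarith)
    have hq : Real.sin ((θ - b n)/2) < 0 := sin_half_neg (by linarith) (by linarith)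
    exact mul_neg_of_pos_of_neg hp hq
  have htail : 0 < ∏ m ∈ (Finset.range N).erase n,
      (Real.sin ((θ - a m)/2) * Real.sin ((θ - b m)/2)) := by
    apply Finset.prod_pos
    intro m hm
    obtain ⟨hmn, hmN⟩ := Finset.mem_erase.mp hm
    have hmN' := Finset.mem_range.mp hmN
    obtain ⟨h1m, h2m, h3m⟩ := win hab hba haN m hmN'
    rcases lt_or_gt_of_ne hmn with h | h
    · have hle : a m ≤ a n := a_le hab hba m n h.le (by omega)
      have hle2 : a (m+1) ≤ a n := a_le hab hba (m+1) n (by omega) (by omega)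
      have h9 := hba m hmN'
      exact mul_pos (sin_half_pos (by linarith) (by linarith))
        (sin_half_pos (by linarith) (by linarith))
    · have hle : a (n+1) ≤ a m := a_le hab hba (n+1) m (by omega) (by omega)
      have h9 := hba n hn
      exact mul_pos_of_neg_of_neg (sin_half_neg (by linarith) (by linarith))
        (sin_half_neg (by linarith) (by linarith))
  exact mul_neg_of_neg_of_pos hhead htail

lemma prodsB {θ : ℝ} {n : ℕ} (hn : n < N) (hθ : θ ∈ Set.Ioo (b n) (a (n+1))) :
    0 < (∏ m ∈ Finset.range N, Real.sin ((θ - a m)/2)) *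
      (∏ m ∈ Finset.range N, Real.sin ((θ - b m)/2)) := by
  obtain ⟨hθ1, hθ2⟩ := hθ
  obtain ⟨h1n, h2n, h3n⟩ := win hab hba haN n hn
  have hup : a (n+1) ≤ a 0 + 2*π := haN ▸ a_le hab hba (n+1) N (by omega) le_rfl
  rw [← Finset.prod_mul_distrib]
  apply Finset.prod_pos
  intro m hm
  have hmN' := Finset.mem_range.mp hm
  obtain ⟨h1m, h2m, h3m⟩ := win hab hba haN m hmN'
  rcases le_or_gt m n with h | h
  · have hle : a m ≤ a n := a_le hab hba m n h (by omega)
    have hbm : b m ≤ b n := by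
      rcases h.lt_or_eq with h' | h'
      · have h8 : a (m+1) ≤ a n := a_le hab hba (m+1) n (by omega) (by omega)
        have h9 := hba m hmN'
        linarith
      · rw [h']
    exact mul_pos (sin_half_pos (by linarith) (by linarith))
      (sin_half_pos (by linarith) (by linarith))
  · have hle : a (n+1) ≤ a m := a_le hab hba (n+1) m (by omega) (by omega)
    exact mul_pos_of_neg_of_neg (sin_half_neg (by linarith) (by linarith))
      (sin_half_neg (by linarith) (by linarith))

lemma sTA {θ : ℝ} {n : ℕ} (hn : n < N) (hθ : θ ∈ Set.Ioo (a n) (b n)) :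
    ∀ m < N, Real.sin ((θ - a m)/2) ≠ 0 := by
  intro m hm
  obtain ⟨hθ1, hθ2⟩ := hθ
  obtain ⟨h1n, h2n, h3n⟩ := win hab hba haN n hn
  obtain ⟨h1m, h2m, h3m⟩ := win hab hba haN m hm
  rcases le_or_gt m n with h | h
  · have hle : a m ≤ a n := a_le hab hba m n h (by omega)
    exact (sin_half_pos (by linarith) (by linarith)).ne'
  · have hle : a (n+1) ≤ a m := a_le hab hba (n+1) m (by omega) (by omega)
    have h9 := hba n hn
    exact (sin_half_neg (by linarith) (by linarith)).ne

lemma mu_pos (hN : 1 ≤ N) : ∀ m < N,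
    0 < -((∏ k ∈ Finset.range N, Real.sin ((a m - b k)/2)) /
      (∏ k ∈ (Finset.range N).erase m, Real.sin ((a m - a k)/2))) := by
  intro m hm
  have hmm : m ∈ Finset.range N := Finset.mem_range.mpr hm
  rw [neg_pos]
  have hQA : (∏ k ∈ Finset.range N, Real.sin ((a m - b k)/2)) *
      (∏ k ∈ (Finset.range N).erase m, Real.sin ((a m - a k)/2)) < 0 := by
    rw [← Finset.mul_prod_erase _ _ hmm, mul_assoc, ← Finset.prod_mul_distrib]
    apply mul_neg_of_neg_of_pos
    · exact (sAB hab hba haN m hm m hm).2 le_rfl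
    · apply Finset.prod_pos
      intro k hk
      obtain ⟨hkm, hkN⟩ := Finset.mem_erase.mp hk
      have hkN' := Finset.mem_range.mp hkN
      rcases lt_or_gt_of_ne hkm with h | h
      · exact mul_pos ((sAB hab hba haN m hm k hkN').1 h) ((sAA hab hba haN m hm k hkN').1 h)
      · exact mul_pos_of_neg_of_neg ((sAB hab hba haN m hm k hkN').2 h.le)
          ((sAA hab hba haN m hm k hkN').2 h)
  rcases mul_neg_iff.mp hQA with ⟨hQ, hA⟩ | ⟨hQ, hA⟩
  · exact div_neg_of_pos_of_neg hQ hA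
  · exact div_neg_of_neg_of_pos hQ hA

omit hab hba haN in
lemma H_im (z : ℂ) (hz : ∀ m < N, z ≠ Complex.exp (((a m : ℝ):ℂ) * I)) :
    (Complex.exp (((((∑ i ∈ Finset.range N, a i) - ∑ i ∈ Finset.range N, b i)/2 : ℝ):ℂ) * I) +
      ∑ m ∈ Finset.range N,
        ((-((∏ k ∈ Finset.range N, Real.sin ((a m - b k)/2)) /
            (∏ k ∈ (Finset.range N).erase m, Real.sin ((a m - a k)/2))) : ℝ) : ℂ) *
          (-2 * I * Complex.exp (((a m : ℝ):ℂ) * I) /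
            (z - Complex.exp (((a m : ℝ):ℂ) * I)))).im =
    Real.sin (((∑ i ∈ Finset.range N, a i) - ∑ i ∈ Finset.range N, b i)/2) +
      ∑ m ∈ Finset.range N,
        (-((∏ k ∈ Finset.range N, Real.sin ((a m - b k)/2)) /
            (∏ k ∈ (Finset.range N).erase m, Real.sin ((a m - a k)/2)))) *
          ((1 - Complex.normSq z)/Complex.normSq (z - Complex.exp (((a m : ℝ):ℂ) * I)) + 1) := by
  rw [Complex.add_im, Complex.im_sum]
  congr 1
  · exact Complex.exp_ofReal_mul_I_im _
  · refine Finset.sum_congr rfl (fun m hm => ?_)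
    have h1 : ∀ (r : ℝ) (w : ℂ), ((r:ℂ) * w).im = r * w.im := fun r w => by
      simp [Complex.mul_im]
    rw [h1]
    congr 1
    have hv1 : Complex.normSq (Complex.exp (((a m : ℝ):ℂ)*I)) = 1 := by
      rw [← Complex.sq_norm, Complex.norm_exp_ofReal_mul_I]
      norm_num
    exact ker_im hv1 (hz m (Finset.mem_range.mp hm))

lemma sum_mu (hN : 1 ≤ N) :
    Real.sin (((∑ i ∈ Finset.range N, a i) - ∑ i ∈ Finset.range N, b i)/2) +
      ∑ m ∈ Finset.range N, -((∏ k ∈ Finset.range N, Real.sin ((a m - b k)/2)) /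
        (∏ k ∈ (Finset.range N).erase m, Real.sin ((a m - a k)/2))) = 0 := by
  have h0N : 0 < N := hN
  have hab0 := hab 0 h0N
  have hmem : (a 0 + b 0)/2 ∈ Set.Ioo (a 0) (b 0) := ⟨by linarith, by linarith⟩
  have hfac := sTA hab hba haN h0N hmem
  have hz0 : ∀ m < N, Complex.exp ((((a 0 + b 0)/2 : ℝ):ℂ) * I) ≠
      Complex.exp (((a m : ℝ):ℂ) * I) := fun m hm => exp_ne_exp (hfac m hm)
  have hMI := main_identity hab hba haN hN _ hz0
  rw [pFun_circle, pFun_circle] at hMI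
  have hPne : ((∏ m ∈ Finset.range N, Real.sin (((a 0 + b 0)/2 - a m)/2) : ℝ) : ℂ) ≠ 0 := by
    rw [Complex.ofReal_ne_zero, Finset.prod_ne_zero_iff]
    exact fun m hm => hfac m (Finset.mem_range.mp hm)
  have hEne : ((2*I:ℂ)^N *
      Complex.exp ((((N * ((a 0 + b 0)/2))/2 : ℝ):ℂ) * I)) ≠ 0 :=
    mul_ne_zero (pow_ne_zero _ (by simp [Complex.I_ne_zero])) (Complex.exp_ne_zero _)
  set HH := Complex.exp (((((∑ i ∈ Finset.range N, a i) -
      ∑ i ∈ Finset.range N, b i)/2 : ℝ):ℂ) * I) +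
    ∑ m ∈ Finset.range N,
      ((-((∏ k ∈ Finset.range N, Real.sin ((a m - b k)/2)) /
          (∏ k ∈ (Finset.range N).erase m, Real.sin ((a m - a k)/2))) : ℝ) : ℂ) *
        (-2 * I * Complex.exp (((a m : ℝ):ℂ) * I) /
          (Complex.exp ((((a 0 + b 0)/2 : ℝ):ℂ) * I) - Complex.exp (((a m : ℝ):ℂ) * I)))
    with hHH
  have hH : HH = (((∏ m ∈ Finset.range N, Real.sin (((a 0 + b 0)/2 - b m)/2)) /
      (∏ m ∈ Finset.range N, Real.sin (((a 0 + b 0)/2 - a m)/2)) : ℝ) : ℂ) := by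
    have hne2 : ((2*I:ℂ)^N * Complex.exp ((((N * ((a 0 + b 0)/2))/2 : ℝ):ℂ) * I)) *
        ((∏ m ∈ Finset.range N, Real.sin (((a 0 + b 0)/2 - a m)/2) : ℝ) : ℂ) ≠ 0 :=
      mul_ne_zero hEne hPne
    apply mul_left_cancel₀ hne2
    have hcast : (((∏ m ∈ Finset.range N, Real.sin (((a 0 + b 0)/2 - b m)/2)) /
        (∏ m ∈ Finset.range N, Real.sin (((a 0 + b 0)/2 - a m)/2)) : ℝ) : ℂ) =
        ((∏ m ∈ Finset.range N, Real.sin (((a 0 + b 0)/2 - b m)/2) : ℝ) : ℂ) /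
        ((∏ m ∈ Finset.range N, Real.sin (((a 0 + b 0)/2 - a m)/2) : ℝ) : ℂ) := by
      push_cast
      ring
    rw [hcast]
    conv_rhs => rw [mul_assoc, mul_comm
      ((∏ m ∈ Finset.range N, Real.sin (((a 0 + b 0)/2 - a m)/2) : ℝ) : ℂ)
      (((∏ m ∈ Finset.range N, Real.sin (((a 0 + b 0)/2 - b m)/2) : ℝ) : ℂ) /
        ((∏ m ∈ Finset.range N, Real.sin (((a 0 + b 0)/2 - a m)/2) : ℝ) : ℂ)),
      div_mul_cancel₀ _ hPne]
    exact hMI.symm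
  have him := congrArg Complex.im hH
  rw [hHH] at him
  rw [H_im (a := a) (b := b) _ hz0] at him
  have hnsq : Complex.normSq (Complex.exp ((((a 0 + b 0)/2 : ℝ):ℂ) * I)) = 1 := by
    rw [← Complex.sq_norm, Complex.norm_exp_ofReal_mul_I]
    norm_num
  rw [hnsq, Complex.ofReal_im] at him
  simp only [sub_self, zero_div, zero_add, mul_one] at him
  linarith [him]

lemma no_roots (hN : 1 ≤ N) :
    ∀ r : ℂ, 1 ≤ ‖r‖ → pFun N b r - I * pFun N a r ≠ 0 := by
  intro r hr h0
  rcases eq_or_lt_of_le hr with h1 | h1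
  · -- |r| = 1
    have hrr : r = Complex.exp (((r.arg : ℝ):ℂ) * I) := by
      conv_lhs => rw [← Complex.norm_mul_exp_arg_mul_I r]
      rw [← h1, Complex.ofReal_one, one_mul]
    rw [hrr, pFun_circle, pFun_circle] at h0
    have hEne : ((2*I:ℂ)^N * Complex.exp ((((N * r.arg)/2 : ℝ):ℂ) * I)) ≠ 0 :=
      mul_ne_zero (pow_ne_zero _ (by simp [Complex.I_ne_zero])) (Complex.exp_ne_zero _)
    have h3 : ((∏ i ∈ Finset.range N, Real.sin ((r.arg - b i)/2) : ℝ) : ℂ) -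
        I * ((∏ i ∈ Finset.range N, Real.sin ((r.arg - a i)/2) : ℝ) : ℂ) = 0 := by
      have h4 : ((2*I:ℂ)^N * Complex.exp ((((N * r.arg)/2 : ℝ):ℂ) * I)) *
          (((∏ i ∈ Finset.range N, Real.sin ((r.arg - b i)/2) : ℝ) : ℂ) -
            I * ((∏ i ∈ Finset.range N, Real.sin ((r.arg - a i)/2) : ℝ) : ℂ)) = 0 := by
        linear_combination h0
      rcases mul_eq_zero.mp h4 with h | h
      · exact absurd h hEne
      · exact h
    have hre := congrArg Complex.re h3
    have him2 := congrArg Complex.im h3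
    simp only [Complex.sub_re, Complex.sub_im, Complex.mul_re, Complex.mul_im,
      Complex.I_re, Complex.I_im, Complex.ofReal_re, Complex.ofReal_im,
      Complex.zero_re, Complex.zero_im] at hre him2
    have hQ0 : (∏ i ∈ Finset.range N, Real.sin ((r.arg - b i)/2)) = 0 := by linarith
    have hP0 : (∏ i ∈ Finset.range N, Real.sin ((r.arg - a i)/2)) = 0 := by linarith
    obtain ⟨m, hm, hsm⟩ := Finset.prod_eq_zero_iff.mp hP0
    obtain ⟨m', hm', hsm'⟩ := Finset.prod_eq_zero_iff.mp hQ0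
    have hmN := Finset.mem_range.mp hm
    have hm'N := Finset.mem_range.mp hm'
    obtain ⟨k, hk⟩ := Real.sin_eq_zero_iff.mp hsm
    obtain ⟨k', hk'⟩ := Real.sin_eq_zero_iff.mp hsm'
    have hzero : Real.sin ((a m - b m')/2) = 0 := by
      have h6 : (a m - b m')/2 = ((k' - k : ℤ):ℝ)*π := by push_cast; linarith
      rw [h6]
      exact Real.sin_int_mul_pi _
    rcases lt_or_ge m' m with h | h
    · exact absurd hzero ((sAB hab hba haN m hmN m' hm'N).1 h).ne'
    · exact absurd hzero ((sAB hab hba haN m hmN m' hm'N).2 h).ne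
  · -- |r| > 1
    have hz : ∀ m < N, r ≠ Complex.exp (((a m : ℝ):ℂ) * I) := by
      intro m hm he
      rw [he, Complex.norm_exp_ofReal_mul_I] at h1
      exact lt_irrefl _ h1
    have hMI := main_identity hab hba haN hN r hz
    have hpane : pFun N a r ≠ 0 := by
      rw [pFun_eval]
      refine mul_ne_zero (Complex.exp_ne_zero _) ?_
      rw [Finset.prod_ne_zero_iff]
      exact fun m hm => sub_ne_zero_of_ne (hz m (Finset.mem_range.mp hm))
    have hHI : (Complex.exp (((((∑ i ∈ Finset.range N, a i) -
        ∑ i ∈ Finset.range N, b i)/2 : ℝ):ℂ) * I) +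
      ∑ m ∈ Finset.range N,
        ((-((∏ k ∈ Finset.range N, Real.sin ((a m - b k)/2)) /
            (∏ k ∈ (Finset.range N).erase m, Real.sin ((a m - a k)/2))) : ℝ) : ℂ) *
          (-2 * I * Complex.exp (((a m : ℝ):ℂ) * I) /
            (r - Complex.exp (((a m : ℝ):ℂ) * I)))) = I := by
      apply mul_left_cancel₀ hpane
      rw [← hMI]
      linear_combination h0
    have him := congrArg Complex.im hHI
    rw [H_im (a := a) (b := b) r hz, Complex.I_im] at him
    have hsplit : ∑ m ∈ Finset.range N,
        (-((∏ k ∈ Finset.range N, Real.sin ((a m - b k)/2)) /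
            (∏ k ∈ (Finset.range N).erase m, Real.sin ((a m - a k)/2)))) *
          ((1 - Complex.normSq r)/Complex.normSq (r - Complex.exp (((a m : ℝ):ℂ) * I)) + 1) =
        (∑ m ∈ Finset.range N,
          (-((∏ k ∈ Finset.range N, Real.sin ((a m - b k)/2)) /
              (∏ k ∈ (Finset.range N).erase m, Real.sin ((a m - a k)/2)))) *
            ((1 - Complex.normSq r)/Complex.normSq (r - Complex.exp (((a m : ℝ):ℂ) * I)))) +
        ∑ m ∈ Finset.range N,
          -((∏ k ∈ Finset.range N, Real.sin ((a m - b k)/2)) /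
              (∏ k ∈ (Finset.range N).erase m, Real.sin ((a m - a k)/2))) := by
      rw [← Finset.sum_add_distrib]
      exact Finset.sum_congr rfl (fun m _ => by ring)
    rw [hsplit] at him
    have hnsq : 1 < Complex.normSq r := by
      have h2 : 1 < ‖r‖^2 := by nlinarith
      rwa [Complex.sq_norm] at h2
    have hKneg : ∑ m ∈ Finset.range N,
        (-((∏ k ∈ Finset.range N, Real.sin ((a m - b k)/2)) /
            (∏ k ∈ (Finset.range N).erase m, Real.sin ((a m - a k)/2)))) *
          ((1 - Complex.normSq r)/Complex.normSq (r - Complex.exp (((a m : ℝ):ℂ) * I))) < 0 := by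
      have hne : (Finset.range N).Nonempty := Finset.nonempty_range_iff.mpr (by omega)
      calc ∑ m ∈ Finset.range N,
          (-((∏ k ∈ Finset.range N, Real.sin ((a m - b k)/2)) /
              (∏ k ∈ (Finset.range N).erase m, Real.sin ((a m - a k)/2)))) *
            ((1 - Complex.normSq r)/Complex.normSq (r - Complex.exp (((a m : ℝ):ℂ) * I)))
          < ∑ m ∈ Finset.range N, (0:ℝ) := by
            refine Finset.sum_lt_sum_of_nonempty hne (fun m hm => ?_)
            have hmN := Finset.mem_range.mp hm
            refine mul_neg_of_pos_of_neg (mu_pos hab hba haN hN m hmN) ?_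
            refine div_neg_of_neg_of_pos (by linarith) ?_
            exact Complex.normSq_pos.mpr (sub_ne_zero_of_ne (hz m hmN))
        _ = 0 := Finset.sum_const_zero
    have hsm := sum_mu hab hba haN hN
    linarith


omit hab hba haN in
lemma self_inversive (M : ℕ) (c : ℕ → ℝ) (w : ℂ) (hw : w ≠ 0) :
    pFun M c w = (-1)^M * w^M *
      (starRingEnd ℂ) (pFun M c (((starRingEnd ℂ) w)⁻¹)) := by
  rw [pFun_eval, pFun_eval, map_mul, map_prod]
  have hconj1 : (starRingEnd ℂ) (Complex.exp (-I * ((∑ i ∈ Finset.range M, c i : ℝ):ℂ)/2)) =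
      Complex.exp (I * ((∑ i ∈ Finset.range M, c i : ℝ):ℂ)/2) := by
    rw [← Complex.exp_conj]
    congr 1
    rw [map_div₀, map_mul, map_neg, Complex.conj_I, Complex.conj_ofReal, map_ofNat]
    ring
  have hfac : ∀ i ∈ Finset.range M,
      (starRingEnd ℂ) (((starRingEnd ℂ) w)⁻¹ - Complex.exp (((c i : ℝ):ℂ) * I)) =
        w⁻¹ - Complex.exp (-(((c i : ℝ):ℂ) * I)) := by
    intro i _
    rw [map_sub, map_inv₀, Complex.conj_conj, ← Complex.exp_conj]
    congr 2
    simp [Complex.conj_ofReal]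
  rw [Finset.prod_congr rfl hfac, hconj1]
  have hE : Complex.exp (I * ((∑ i ∈ Finset.range M, c i : ℝ):ℂ)/2) *
      Complex.exp (-I * ((∑ i ∈ Finset.range M, c i : ℝ):ℂ)) =
      Complex.exp (-I * ((∑ i ∈ Finset.range M, c i : ℝ):ℂ)/2) := by
    rw [← Complex.exp_add]
    congr 1
    ring
  have hkey : ((-1:ℂ))^M * w^M *
      ∏ i ∈ Finset.range M, (w⁻¹ - Complex.exp (-(((c i : ℝ):ℂ) * I))) =
      Complex.exp (-I * ((∑ i ∈ Finset.range M, c i : ℝ):ℂ)) *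
        ∏ i ∈ Finset.range M, (w - Complex.exp (((c i : ℝ):ℂ) * I)) := by
    have h1 : ∀ i ∈ Finset.range M,
        (-1 : ℂ) * (w * (w⁻¹ - Complex.exp (-(((c i : ℝ):ℂ) * I)))) =
          Complex.exp (-(((c i : ℝ):ℂ) * I)) * (w - Complex.exp (((c i : ℝ):ℂ) * I)) := by
      intro i _
      have hww : w * w⁻¹ = 1 := mul_inv_cancel₀ hw
      have hee : Complex.exp (-(((c i : ℝ):ℂ) * I)) * Complex.exp ((((c i : ℝ):ℂ)) * I) = 1 := by
        rw [← Complex.exp_add]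
        simp
      linear_combination (-1 : ℂ) * hww + hee
    calc ((-1:ℂ))^M * w^M * ∏ i ∈ Finset.range M, (w⁻¹ - Complex.exp (-(((c i : ℝ):ℂ) * I)))
        = ∏ i ∈ Finset.range M,
            ((-1 : ℂ) * (w * (w⁻¹ - Complex.exp (-(((c i : ℝ):ℂ) * I))))) := by
          rw [Finset.prod_mul_distrib, Finset.prod_mul_distrib, Finset.prod_const,
            Finset.prod_const, Finset.card_range]
          ring
      _ = ∏ i ∈ Finset.range M, (Complex.exp (-(((c i : ℝ):ℂ) * I)) *
            (w - Complex.exp (((c i : ℝ):ℂ) * I))) := Finset.prod_congr rfl h1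
      _ = (∏ i ∈ Finset.range M, Complex.exp (-(((c i : ℝ):ℂ) * I))) *
            ∏ i ∈ Finset.range M, (w - Complex.exp (((c i : ℝ):ℂ) * I)) :=
          Finset.prod_mul_distrib
      _ = Complex.exp (-I * ((∑ i ∈ Finset.range M, c i : ℝ):ℂ)) *
            ∏ i ∈ Finset.range M, (w - Complex.exp (((c i : ℝ):ℂ) * I)) := by
          rw [← Complex.exp_sum]
          congr 1
          rw [Finset.sum_neg_distrib, ← Finset.sum_mul]
          push_cast
          ring
  linear_combination (-(Complex.exp (I * ((∑ i ∈ Finset.range M, c i : ℝ):ℂ)/2))) * hkey -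
    (∏ i ∈ Finset.range M, (w - Complex.exp (((c i : ℝ):ℂ) * I))) * hE

lemma blaschke_part (hN : 1 ≤ N) :
    IsBlaschke N (fun z : ℂ =>
      (pFun N b z - Complex.I * pFun N a z) / (pFun N b z + Complex.I * pFun N a z)) := by
  classical
  set ca := Complex.exp (-I * ((∑ k ∈ Finset.range N, a k : ℝ):ℂ)/2) with hca
  set cb := Complex.exp (-I * ((∑ k ∈ Finset.range N, b k : ℝ):ℂ)/2) with hcb
  set c := cb - I * ca with hcc
  have hSab : 0 < (∑ i ∈ Finset.range N, b i) - ∑ i ∈ Finset.range N, a i ∧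
      (∑ i ∈ Finset.range N, b i) - ∑ i ∈ Finset.range N, a i < 2*π := by
    constructor
    · have h1 : ∑ i ∈ Finset.range N, a i < ∑ i ∈ Finset.range N, b i :=
        Finset.sum_lt_sum_of_nonempty (Finset.nonempty_range_iff.mpr (by omega))
          (fun i hi => hab i (Finset.mem_range.mp hi))
      linarith
    · have h2 : ∀ i ∈ Finset.range N, b i - a i < a (i+1) - a i := fun i hi => by
        have h9 := hba i (Finset.mem_range.mp hi)
        linarith
      have h3 : ∑ i ∈ Finset.range N, (b i - a i) <
          ∑ i ∈ Finset.range N, (a (i+1) - a i) :=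
        Finset.sum_lt_sum_of_nonempty (Finset.nonempty_range_iff.mpr (by omega)) h2
      rw [Finset.sum_range_sub, Finset.sum_sub_distrib, haN] at h3
      linarith
  have hcane : ca ≠ 0 := Complex.exp_ne_zero _
  have hcne : c ≠ 0 := by
    intro h
    have h4 : cb = I * ca := by
      rw [hcc] at h
      linear_combination h
    have h3 : Complex.exp (((((∑ i ∈ Finset.range N, a i) -
        ∑ i ∈ Finset.range N, b i)/2 : ℝ):ℂ) * I) * ca = cb := by
      rw [hca, hcb, ← Complex.exp_add]
      congr 1
      push_cast
      ring
    have h5 : Complex.exp (((((∑ i ∈ Finset.range N, a i) -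
        ∑ i ∈ Finset.range N, b i)/2 : ℝ):ℂ) * I) = I := by
      apply mul_right_cancel₀ hcane
      rw [h3, h4]
    have h6 := congrArg Complex.im h5
    rw [Complex.exp_ofReal_mul_I_im, Complex.I_im] at h6
    have h7 : Real.sin (((∑ i ∈ Finset.range N, a i) -
        ∑ i ∈ Finset.range N, b i)/2) < 0 :=
      sin_half_neg (by linarith [hSab.2]) (by linarith [hSab.1])
    linarith
  set Ma := ∏ i ∈ Finset.range N,
    (Polynomial.X - Polynomial.C (Complex.exp (((a i : ℝ):ℂ) * I))) with hMa
  set Mb := ∏ i ∈ Finset.range N,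
    (Polynomial.X - Polynomial.C (Complex.exp (((b i : ℝ):ℂ) * I))) with hMb
  have hMam : Ma.Monic :=
    Polynomial.monic_prod_of_monic _ _ (fun i _ => Polynomial.monic_X_sub_C _)
  have hMbm : Mb.Monic :=
    Polynomial.monic_prod_of_monic _ _ (fun i _ => Polynomial.monic_X_sub_C _)
  have hMad : Ma.natDegree = N := by
    rw [hMa, Polynomial.natDegree_prod_of_monic _ _ (fun i _ => Polynomial.monic_X_sub_C _)]
    simp
  have hMbd : Mb.natDegree = N := by
    rw [hMb, Polynomial.natDegree_prod_of_monic _ _ (fun i _ => Polynomial.monic_X_sub_C _)]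
    simp
  set F := Polynomial.C cb * Mb - Polynomial.C I * (Polynomial.C ca * Ma) with hF
  have hFeval : ∀ w, F.eval w = pFun N b w - I * pFun N a w := by
    intro w
    rw [hF]
    simp only [Polynomial.eval_sub, Polynomial.eval_mul, Polynomial.eval_C, hMa, hMb]
    rw [eval_nodal' _ _ _, eval_nodal' _ _ _, pFun_eval N a, pFun_eval N b, hca, hcb]
  have hcoefN : F.coeff N = c := by
    have hb1 : Mb.coeff N = 1 := by
      rw [← hMbd]
      exact hMbm.coeff_natDegree
    have ha1 : Ma.coeff N = 1 := by
      rw [← hMad]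
      exact hMam.coeff_natDegree
    rw [hF, Polynomial.coeff_sub, Polynomial.coeff_C_mul, Polynomial.coeff_C_mul,
      Polynomial.coeff_C_mul, hb1, ha1, hcc]
    ring
  have hFdegle : F.natDegree ≤ N := by
    refine le_trans (Polynomial.natDegree_sub_le _ _) (max_le ?_ ?_)
    · exact le_trans (Polynomial.natDegree_C_mul_le _ _) hMbd.le
    · exact le_trans (Polynomial.natDegree_C_mul_le _ _)
        (le_trans (Polynomial.natDegree_C_mul_le _ _) hMad.le)
  have hFdegN : F.natDegree = N :=
    le_antisymm hFdegle (Polynomial.le_natDegree_of_ne_zero (by rw [hcoefN]; exact hcne))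
  have hFne : F ≠ 0 := fun h => hcne (by rw [← hcoefN, h, Polynomial.coeff_zero])
  have hsplits : F.Splits := IsAlgClosed.splits F
  have hcard : F.roots.card = N := by
    rw [Polynomial.splits_iff_card_roots.mp hsplits, hFdegN]
  have hlead : F.leadingCoeff = c := by
    rw [Polynomial.leadingCoeff, hFdegN, hcoefN]
  have hLlen : F.roots.toList.length = N := by
    rw [Multiset.length_toList, hcard]
  set zf : Fin N → ℂ := fun j => F.roots.toList.get (Fin.cast hLlen.symm j) with hzf
  have hzmem : ∀ j, zf j ∈ F.roots := by
    intro j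
    rw [← Multiset.mem_toList]
    exact List.get_mem _ _
  have hFfact : ∀ w, F.eval w = c * ∏ j : Fin N, (w - zf j) := by
    intro w
    have h1 := (Polynomial.C_leadingCoeff_mul_prod_multiset_X_sub_C
        (Polynomial.splits_iff_card_roots.mp hsplits)).symm
    have h2 := congrArg (Polynomial.eval w) h1
    rw [Polynomial.eval_mul, Polynomial.eval_C, Polynomial.eval_multiset_prod, hlead,
      Multiset.map_map] at h2
    rw [h2]
    congr 1
    have h3 : F.roots = (F.roots.toList : Multiset ℂ) := (Multiset.coe_toList F.roots).symm
    rw [h3, Multiset.map_coe, Multiset.prod_coe]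
    have h4 : F.roots.toList = List.ofFn (F.roots.toList.get) := (List.ofFn_get _).symm
    rw [h4, List.map_ofFn, List.prod_ofFn]
    have h5 := Fin.prod_congr' (fun i : Fin F.roots.toList.length =>
      ((Polynomial.eval w ∘ fun a => Polynomial.X - Polynomial.C a) ∘ F.roots.toList.get) i)
      hLlen.symm
    rw [← h5]
    refine Finset.prod_congr rfl (fun j _ => ?_)
    simp [hzf]
  have habs : ∀ j, ‖zf j‖ < 1 := by
    intro j
    by_contra hcon
    push_neg at hcon
    have hroot : F.eval (zf j) = 0 := by
      have h6 := (Polynomial.mem_roots'.mp (hzmem j)).2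
      exact h6
    rw [hFeval] at hroot
    exact no_roots hab hba haN hN _ hcon hroot
  set Fp := Polynomial.C cb * Mb + Polynomial.C I * (Polynomial.C ca * Ma) with hFp
  have hFpeval : ∀ w, Fp.eval w = pFun N b w + I * pFun N a w := by
    intro w
    rw [hFp]
    simp only [Polynomial.eval_add, Polynomial.eval_mul, Polynomial.eval_C, hMa, hMb]
    rw [eval_nodal' _ _ _, eval_nodal' _ _ _, pFun_eval N a, pFun_eval N b, hca, hcb]
  set G := Polynomial.C ((-1:ℂ)^N * (starRingEnd ℂ) c) *
    ∏ j : Fin N, (1 - Polynomial.C ((starRingEnd ℂ) (zf j)) * Polynomial.X) with hG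
  have hGeval : ∀ w, G.eval w = (-1:ℂ)^N * (starRingEnd ℂ) c *
      ∏ j : Fin N, (1 - (starRingEnd ℂ) (zf j) * w) := by
    intro w
    rw [hG]
    simp [Polynomial.eval_prod]
  have hFpG : Fp = G := by
    apply Polynomial.eq_of_infinite_eval_eq
    apply Set.Infinite.mono (s := {x : ℂ | x ≠ 0})
    · intro w hw
      simp only [Set.mem_setOf_eq] at hw ⊢
      rw [hFpeval, hGeval]
      have hu := (starRingEnd ℂ) w⁻¹
      have hsi_a := self_inversive N a w hw
      have hsi_b := self_inversive N b w hw
      have hconj : (starRingEnd ℂ) (pFun N b (((starRingEnd ℂ) w)⁻¹)) +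
          I * (starRingEnd ℂ) (pFun N a (((starRingEnd ℂ) w)⁻¹)) =
          (starRingEnd ℂ) (pFun N b (((starRingEnd ℂ) w)⁻¹) -
            I * pFun N a (((starRingEnd ℂ) w)⁻¹)) := by
        rw [map_sub, map_mul, Complex.conj_I]
        ring
      have hFu : pFun N b (((starRingEnd ℂ) w)⁻¹) - I * pFun N a (((starRingEnd ℂ) w)⁻¹) =
          c * ∏ j : Fin N, ((((starRingEnd ℂ) w)⁻¹) - zf j) := by
        rw [← hFeval, hFfact]
      have step1 : pFun N b w + I * pFun N a w =
          (-1:ℂ)^N * w^N * (starRingEnd ℂ) (c * ∏ j : Fin N, ((((starRingEnd ℂ) w)⁻¹) - zf j)) := by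
        rw [← hFu, ← hconj]
        rw [hsi_a, hsi_b]
        ring
      rw [step1, map_mul, map_prod]
      have hwN : w^N = ∏ _j : Fin N, w := by
        rw [Finset.prod_const, Finset.card_univ, Fintype.card_fin]
      have step2 : (-1:ℂ)^N * w^N * ((starRingEnd ℂ) c *
          ∏ j : Fin N, (starRingEnd ℂ) ((((starRingEnd ℂ) w)⁻¹) - zf j)) =
          (-1:ℂ)^N * (starRingEnd ℂ) c *
            ∏ j : Fin N, (w * (starRingEnd ℂ) ((((starRingEnd ℂ) w)⁻¹) - zf j)) := by
        rw [Finset.prod_mul_distrib, ← hwN]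
        ring
      rw [step2]
      congr 1
      refine Finset.prod_congr rfl (fun j _ => ?_)
      rw [map_sub, map_inv₀, Complex.conj_conj]
      have hww : w * w⁻¹ = 1 := mul_inv_cancel₀ hw
      linear_combination hww
    · have h8 : ({x : ℂ | x ≠ 0}) = ({0} : Set ℂ)ᶜ := by
        ext x
        simp
      rw [h8]
      exact Set.Finite.infinite_compl (Set.finite_singleton 0)
  refine ⟨(-1:ℂ)^N * c / ((starRingEnd ℂ) c), zf, ?_, habs, ?_⟩
  · have habs1 : ‖(-1:ℂ)^N * c / ((starRingEnd ℂ) c)‖ =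
        ‖c‖ / ‖c‖ := by
      rw [norm_div, norm_mul, norm_pow, Complex.norm_conj]
      simp
    rw [habs1, div_self (norm_ne_zero_iff.mpr hcne)]
  · intro w
    have hnum : pFun N b w - I * pFun N a w = c * ∏ j, (w - zf j) := by
      rw [← hFeval, hFfact]
    have hden : pFun N b w + I * pFun N a w =
        (-1:ℂ)^N * (starRingEnd ℂ) c * ∏ j, (1 - (starRingEnd ℂ) (zf j) * w) := by
      rw [← hFpeval, hFpG, hGeval]
    simp only []
    rw [hnum, hden, Finset.prod_div_distrib]
    have hccne : (starRingEnd ℂ) c ≠ 0 := by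
      simpa using hcne
    rcases eq_or_ne (∏ j : Fin N, (1 - (starRingEnd ℂ) (zf j) * w)) 0 with hB | hB
    · rw [hB]
      simp
    · have key : (c * ∏ j : Fin N, (w - zf j)) / (-1:ℂ)^N =
          (-1:ℂ)^N * (c * ∏ j : Fin N, (w - zf j)) := by
        rw [div_eq_mul_inv, ← inv_pow, inv_neg, inv_one]
        exact mul_comm _ _
      rw [mul_assoc, ← div_div, key, div_mul_div_comm, ← mul_assoc]


lemma part2 (hN : 1 ≤ N) : ∀ n < N,
    (pFun N b (Complex.exp ((a n : ℂ) * I)) - I * pFun N a (Complex.exp ((a n : ℂ) * I))) /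
      (pFun N b (Complex.exp ((a n : ℂ) * I)) + I * pFun N a (Complex.exp ((a n : ℂ) * I))) = 1 ∧
    (pFun N b (Complex.exp ((b n : ℂ) * I)) - I * pFun N a (Complex.exp ((b n : ℂ) * I))) /
      (pFun N b (Complex.exp ((b n : ℂ) * I)) + I * pFun N a (Complex.exp ((b n : ℂ) * I))) = -1 := by
  intro n hn
  constructor
  · have hpa : pFun N a (Complex.exp (((a n : ℝ):ℂ) * I)) = 0 := by
      rw [pFun_circle]
      have h0 : (∏ i ∈ Finset.range N, Real.sin ((a n - a i)/2)) = 0 :=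
        Finset.prod_eq_zero (Finset.mem_range.mpr hn) (by simp)
      rw [h0]
      simp
    have hpb : pFun N b (Complex.exp (((a n : ℝ):ℂ) * I)) ≠ 0 := by
      rw [pFun_circle]
      refine mul_ne_zero (mul_ne_zero (pow_ne_zero _ (by simp [Complex.I_ne_zero]))
        (Complex.exp_ne_zero _)) ?_
      rw [Complex.ofReal_ne_zero, Finset.prod_ne_zero_iff]
      intro m hm
      have hmN := Finset.mem_range.mp hm
      rcases lt_or_ge m n with h | h
      · exact ((sAB hab hba haN n hn m hmN).1 h).ne'
      · exact ((sAB hab hba haN n hn m hmN).2 h).ne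
    rw [hpa, mul_zero, sub_zero, add_zero]
    exact div_self hpb
  · have hpb : pFun N b (Complex.exp (((b n : ℝ):ℂ) * I)) = 0 := by
      rw [pFun_circle]
      have h0 : (∏ i ∈ Finset.range N, Real.sin ((b n - b i)/2)) = 0 :=
        Finset.prod_eq_zero (Finset.mem_range.mpr hn) (by simp)
      rw [h0]
      simp
    have hpa : pFun N a (Complex.exp (((b n : ℝ):ℂ) * I)) ≠ 0 := by
      rw [pFun_circle]
      refine mul_ne_zero (mul_ne_zero (pow_ne_zero _ (by simp [Complex.I_ne_zero]))
        (Complex.exp_ne_zero _)) ?_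
      rw [Complex.ofReal_ne_zero, Finset.prod_ne_zero_iff]
      intro m hm
      have hmN := Finset.mem_range.mp hm
      rcases le_or_gt m n with h | h
      · exact ((sBA hab hba haN n hn m hmN).1 h).ne'
      · exact ((sBA hab hba haN n hn m hmN).2 h).ne
    rw [hpb, zero_sub, zero_add, neg_div]
    rw [div_self (mul_ne_zero Complex.I_ne_zero hpa)]

omit hab hba haN in
lemma div_div_aux (x y d : ℂ) (hd : d ≠ 0) (hy : y ≠ 0) : (x/d)/(y/d) = x/y := by
  field_simp

lemma part3core (hN : 1 ≤ N) (θ' : ℝ)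
    (hPne : (∏ i ∈ Finset.range N, Real.sin ((θ' - a i)/2)) ≠ 0) :
    (1 + (pFun N b (Complex.exp ((θ':ℂ) * I)) - I * pFun N a (Complex.exp ((θ':ℂ) * I))) /
        (pFun N b (Complex.exp ((θ':ℂ) * I)) + I * pFun N a (Complex.exp ((θ':ℂ) * I)))) /
      (1 - (pFun N b (Complex.exp ((θ':ℂ) * I)) - I * pFun N a (Complex.exp ((θ':ℂ) * I))) /
        (pFun N b (Complex.exp ((θ':ℂ) * I)) + I * pFun N a (Complex.exp ((θ':ℂ) * I)))) =
      ((-((∏ i ∈ Finset.range N, Real.sin ((θ' - b i)/2)) /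
          (∏ i ∈ Finset.range N, Real.sin ((θ' - a i)/2))) : ℝ) : ℂ) * I := by
  rw [pFun_circle, pFun_circle]
  set P := ∏ i ∈ Finset.range N, Real.sin ((θ' - a i)/2) with hP
  set Q := ∏ i ∈ Finset.range N, Real.sin ((θ' - b i)/2) with hQ
  set E := (2*I:ℂ)^N * Complex.exp ((((N*θ')/2 : ℝ):ℂ) * I) with hE
  have hEne : E ≠ 0 :=
    mul_ne_zero (pow_ne_zero _ (by simp [Complex.I_ne_zero])) (Complex.exp_ne_zero _)
  have hPc : ((P:ℝ):ℂ) ≠ 0 := by rwa [Complex.ofReal_ne_zero]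
  have hdne : ((Q:ℝ):ℂ) + I * ((P:ℝ):ℂ) ≠ 0 := by
    intro h
    have h9 := congrArg Complex.im h
    simp only [Complex.add_im, Complex.mul_im, Complex.ofReal_im, Complex.I_im,
      Complex.I_re, Complex.ofReal_re, Complex.zero_im] at h9
    apply hPne
    linarith
  have homega : (E * ((Q:ℝ):ℂ) - I * (E * ((P:ℝ):ℂ))) / (E * ((Q:ℝ):ℂ) + I * (E * ((P:ℝ):ℂ))) =
      (((Q:ℝ):ℂ) - I*((P:ℝ):ℂ)) / (((Q:ℝ):ℂ) + I*((P:ℝ):ℂ)) := by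
    rw [show E * ((Q:ℝ):ℂ) - I * (E * ((P:ℝ):ℂ)) = E * (((Q:ℝ):ℂ) - I*((P:ℝ):ℂ)) by ring,
      show E * ((Q:ℝ):ℂ) + I * (E * ((P:ℝ):ℂ)) = E * (((Q:ℝ):ℂ) + I*((P:ℝ):ℂ)) by ring,
      mul_div_mul_left _ _ hEne]
  rw [homega]
  have hIP : (2:ℂ)*(I*((P:ℝ):ℂ)) ≠ 0 :=
    mul_ne_zero two_ne_zero (mul_ne_zero Complex.I_ne_zero hPc)
  have h1 : 1 + (((Q:ℝ):ℂ) - I*((P:ℝ):ℂ))/(((Q:ℝ):ℂ) + I*((P:ℝ):ℂ)) =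
      2*((Q:ℝ):ℂ)/(((Q:ℝ):ℂ) + I*((P:ℝ):ℂ)) := by
    field_simp
    ring
  have h2 : 1 - (((Q:ℝ):ℂ) - I*((P:ℝ):ℂ))/(((Q:ℝ):ℂ) + I*((P:ℝ):ℂ)) =
      2*(I*((P:ℝ):ℂ))/(((Q:ℝ):ℂ) + I*((P:ℝ):ℂ)) := by
    field_simp
    ring
  rw [h1, h2, div_div_aux _ _ _ hdne hIP, mul_div_mul_left _ _ (two_ne_zero)]
  have h3 : ((Q:ℝ):ℂ)/(I*((P:ℝ):ℂ)) = (((Q:ℝ):ℂ)/((P:ℝ):ℂ)) * I⁻¹ := by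
    rw [mul_comm I, ← div_div, div_eq_mul_inv]
  rw [h3, Complex.inv_I]
  push_cast
  ring

lemma part3A (hN : 1 ≤ N) {θ : ℝ} {n : ℕ} {k : ℤ} (hn : n < N)
    (hθ : θ + 2*π*k ∈ Set.Ioo (a n) (b n)) :
    2/π * ((1 + (pFun N b (Complex.exp ((θ:ℂ) * I)) - I * pFun N a (Complex.exp ((θ:ℂ) * I))) /
        (pFun N b (Complex.exp ((θ:ℂ) * I)) + I * pFun N a (Complex.exp ((θ:ℂ) * I)))) /
      (1 - (pFun N b (Complex.exp ((θ:ℂ) * I)) - I * pFun N a (Complex.exp ((θ:ℂ) * I))) /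
        (pFun N b (Complex.exp ((θ:ℂ) * I)) + I * pFun N a (Complex.exp ((θ:ℂ) * I))))).arg
      = 1 := by
  have hexp : Complex.exp ((θ:ℂ) * I) = Complex.exp (((θ + 2*π*k : ℝ):ℂ) * I) := by
    rw [Complex.exp_eq_exp_iff_exists_int]
    exact ⟨-k, by push_cast; ring⟩
  have hPQ := prodsA hab hba haN hn hθ
  have hPne : (∏ m ∈ Finset.range N, Real.sin ((θ + 2*π*k - a m)/2)) ≠ 0 := by
    intro h
    rw [h, zero_mul] at hPQ
    exact lt_irrefl _ hPQ
  rw [hexp, part3core hab hba haN hN _ hPne]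
  have hs : 0 < -((∏ i ∈ Finset.range N, Real.sin ((θ + 2*π*k - b i)/2)) /
      (∏ i ∈ Finset.range N, Real.sin ((θ + 2*π*k - a i)/2))) := by
    rw [neg_pos]
    rcases mul_neg_iff.mp hPQ with ⟨hp, hq⟩ | ⟨hp, hq⟩
    · exact div_neg_of_neg_of_pos hq hp
    · exact div_neg_of_pos_of_neg hq hp
  rw [Complex.arg_real_mul _ hs, Complex.arg_I]
  have h2pi : (2*π : ℝ) ≠ 0 := by positivity
  calc 2/π * (π/2) = (2*π)/(π*2) := by rw [div_mul_div_comm]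
    _ = 1 := by rw [mul_comm π 2]; exact div_self h2pi

lemma part3B (hN : 1 ≤ N) {θ : ℝ} {n : ℕ} {k : ℤ} (hn : n < N)
    (hθ : θ + 2*π*k ∈ Set.Ioo (b n) (a (n+1))) :
    2/π * ((1 + (pFun N b (Complex.exp ((θ:ℂ) * I)) - I * pFun N a (Complex.exp ((θ:ℂ) * I))) /
        (pFun N b (Complex.exp ((θ:ℂ) * I)) + I * pFun N a (Complex.exp ((θ:ℂ) * I)))) /
      (1 - (pFun N b (Complex.exp ((θ:ℂ) * I)) - I * pFun N a (Complex.exp ((θ:ℂ) * I))) /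
        (pFun N b (Complex.exp ((θ:ℂ) * I)) + I * pFun N a (Complex.exp ((θ:ℂ) * I))))).arg
      = -1 := by
  have hexp : Complex.exp ((θ:ℂ) * I) = Complex.exp (((θ + 2*π*k : ℝ):ℂ) * I) := by
    rw [Complex.exp_eq_exp_iff_exists_int]
    exact ⟨-k, by push_cast; ring⟩
  have hPQ := prodsB hab hba haN hn hθ
  have hPne : (∏ m ∈ Finset.range N, Real.sin ((θ + 2*π*k - a m)/2)) ≠ 0 := by
    intro h
    rw [h, zero_mul] at hPQ
    exact lt_irrefl _ hPQ
  rw [hexp, part3core hab hba haN hN _ hPne]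
  have hs : 0 < (∏ i ∈ Finset.range N, Real.sin ((θ + 2*π*k - b i)/2)) /
      (∏ i ∈ Finset.range N, Real.sin ((θ + 2*π*k - a i)/2)) := by
    rcases mul_pos_iff.mp hPQ with ⟨hp, hq⟩ | ⟨hp, hq⟩
    · exact div_pos hq hp
    · exact div_pos_of_neg_of_neg hq hp
  have hflip : ((-((∏ i ∈ Finset.range N, Real.sin ((θ + 2*π*k - b i)/2)) /
      (∏ i ∈ Finset.range N, Real.sin ((θ + 2*π*k - a i)/2))) : ℝ) : ℂ) * I =
      (((((∏ i ∈ Finset.range N, Real.sin ((θ + 2*π*k - b i)/2)) /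
      (∏ i ∈ Finset.range N, Real.sin ((θ + 2*π*k - a i)/2))) : ℝ)) : ℂ) * (-I) := by
    push_cast
    ring
  rw [hflip, Complex.arg_real_mul _ hs, Complex.arg_neg_I]
  have h2pi : (2*π : ℝ) ≠ 0 := by positivity
  have h1 : 2/π * (π/2) = 1 := by
    calc 2/π * (π/2) = (2*π)/(π*2) := by rw [div_mul_div_comm]
      _ = 1 := by rw [mul_comm π 2]; exact div_self h2pi
  rw [mul_neg, h1]

end Stmt10

/-- The function `ω = (q - ip)/(q + ip)` is a Blaschke product of order `N`, takes
the value `1` at each `e^{iα_n}` and `-1` at each `e^{iβ_n}`, and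
`(2/π)·Arg((1+ω)/(1-ω))` equals `1` on the arcs `(α_n, β_n)` and `-1` on the arcs
`(β_n, α_{n+1})` (with `α_{N+1} := α_1 + 2π`, encoded by `a N = a 0 + 2π`). -/
theorem stmt10 (N : ℕ) (hN : 1 ≤ N) (a b : ℕ → ℝ) (ha0 : 0 ≤ a 0)
    (hab : ∀ i < N, a i < b i) (hba : ∀ i < N, b i < a (i + 1))
    (haN : a N = a 0 + 2 * π) :
    IsBlaschke N (fun z : ℂ =>
      (pFun N b z - Complex.I * pFun N a z) / (pFun N b z + Complex.I * pFun N a z)) ∧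
    (∀ n < N,
      (pFun N b (Complex.exp ((a n : ℂ) * Complex.I)) -
          Complex.I * pFun N a (Complex.exp ((a n : ℂ) * Complex.I))) /
        (pFun N b (Complex.exp ((a n : ℂ) * Complex.I)) +
          Complex.I * pFun N a (Complex.exp ((a n : ℂ) * Complex.I))) = 1 ∧
      (pFun N b (Complex.exp ((b n : ℂ) * Complex.I)) -
          Complex.I * pFun N a (Complex.exp ((b n : ℂ) * Complex.I))) /
        (pFun N b (Complex.exp ((b n : ℂ) * Complex.I)) +
          Complex.I * pFun N a (Complex.exp ((b n : ℂ) * Complex.I))) = -1) ∧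
    ∀ θ : ℝ,
      (∀ n < N, Complex.exp (θ * Complex.I) ≠ Complex.exp ((a n : ℂ) * Complex.I) ∧
        Complex.exp (θ * Complex.I) ≠ Complex.exp ((b n : ℂ) * Complex.I)) →
      ((∃ n < N, ∃ k : ℤ, θ + 2 * π * k ∈ Set.Ioo (a n) (b n)) →
        (2 / π) * ((1 + (pFun N b (Complex.exp (θ * Complex.I)) -
            Complex.I * pFun N a (Complex.exp (θ * Complex.I))) /
          (pFun N b (Complex.exp (θ * Complex.I)) +
            Complex.I * pFun N a (Complex.exp (θ * Complex.I)))) /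
          (1 - (pFun N b (Complex.exp (θ * Complex.I)) -
            Complex.I * pFun N a (Complex.exp (θ * Complex.I))) /
          (pFun N b (Complex.exp (θ * Complex.I)) +
            Complex.I * pFun N a (Complex.exp (θ * Complex.I))))).arg = 1) ∧
      ((∃ n < N, ∃ k : ℤ, θ + 2 * π * k ∈ Set.Ioo (b n) (a (n + 1))) →
        (2 / π) * ((1 + (pFun N b (Complex.exp (θ * Complex.I)) -
            Complex.I * pFun N a (Complex.exp (θ * Complex.I))) /
          (pFun N b (Complex.exp (θ * Complex.I)) +
            Complex.I * pFun N a (Complex.exp (θ * Complex.I)))) /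
          (1 - (pFun N b (Complex.exp (θ * Complex.I)) -
            Complex.I * pFun N a (Complex.exp (θ * Complex.I))) /
          (pFun N b (Complex.exp (θ * Complex.I)) +
            Complex.I * pFun N a (Complex.exp (θ * Complex.I))))).arg = -1) := by
  refine ⟨Stmt10.blaschke_part hab hba haN hN, Stmt10.part2 hab hba haN hN, fun θ hne => ⟨?_, ?_⟩⟩
  · rintro ⟨n, hn, k, hk⟩
    exact Stmt10.part3A hab hba haN hN hn hk
  · rintro ⟨n, hn, k, hk⟩
    exact Stmt10.part3B hab hba haN hN hn hk
end
end

section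
/- Let N ≥ 1 and let ψ_1 and ψ_2 be alternating step functions, each of order at most N (with positive heights in case of positive order, or a.e. constant in case of order 0). If ψ̂_1(n) = ψ̂_2(n) for all n = 0, 1, …, N, then ψ_1 = ψ_2 a.e. on 𝕋. -/
open MeasureTheory Complex Real AddCircle
open scoped Real

noncomputable section

/-- `ψ` is (a.e.) an alternating step function of height `c` and order `n ≥ 1`:
there are `t 0 < t 1 < ⋯ < t (2n-1) < t (2n) = t 0 + 2π` such that `ψ` takes the
value `(-1)^j * c` a.e. on the arc corresponding to `(t j, t (j+1))`. -/
def IsAltStep (c : ℝ) (n : ℕ) (ψ : UnitCircle → ℂ) : Prop :=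
  ∃ t : ℕ → ℝ, (∀ i < 2 * n, t i < t (i + 1)) ∧ t (2 * n) = t 0 + 2 * π ∧
    ∀ j < 2 * n, ∀ᵐ (θ : ℝ) ∂(volume : Measure ℝ),
      θ ∈ Set.Ioo (t j) (t (j + 1)) → ψ (θ : UnitCircle) = ((-1) ^ j * c : ℝ)

/-- `ψ` is an alternating step function of order at most `N`: either a.e. constant
(order `0`, its height being the constant value), or of some positive height and
order `n` with `1 ≤ n ≤ N`. -/
def IsAltStepLE (N : ℕ) (ψ : UnitCircle → ℂ) : Prop :=
  (∃ c : ℝ, ∀ᵐ x ∂haarAddCircle, ψ x = (c : ℂ)) ∨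
  (∃ c : ℝ, 0 < c ∧ ∃ n, 1 ≤ n ∧ n ≤ N ∧ IsAltStep c n ψ)

/-- canonical representative in `(a, a + 2π]` -/
noncomputable def repPt (a : ℝ) (x : UnitCircle) : ℝ :=
  ((AddCircle.equivIoc (2*π) a x : Set.Ioc a (a + 2*π)) : ℝ)

lemma repPt_mem (a : ℝ) (x : UnitCircle) : repPt a x ∈ Set.Ioc a (a + 2*π) :=
  (AddCircle.equivIoc (2*π) a x).2

lemma repPt_coe (a : ℝ) (x : UnitCircle) : ((repPt a x : ℝ) : UnitCircle) = x := by
  have h := (AddCircle.equivIoc (2*π) a).symm_apply_apply x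
  exact h

lemma repPt_coe' {a : ℝ} {θ : ℝ} (hθ : θ ∈ Set.Ioc a (a + 2*π)) :
    repPt a (θ : UnitCircle) = θ := by
  have : (AddCircle.equivIoc (2*π) a) (θ : UnitCircle) = ⟨θ, hθ⟩ := by
    rw [Equiv.apply_eq_iff_eq_symm_apply]; rfl
  simp [repPt, this]

lemma repPt_measurable (a : ℝ) : Measurable (repPt a) :=
  measurable_subtype_coe.comp (AddCircle.measurableEquivIoc (2*π) a).measurable

/-- transfer a.e. statements from the interval to the circle -/
lemma ae_haar_of_ae_Ioc {Q : UnitCircle → Prop} (a : ℝ)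
    (h : ∀ᵐ (θ : ℝ) ∂(volume.restrict (Set.Ioc a (a + 2*π))), Q ((θ : ℝ) : UnitCircle)) :
    ∀ᵐ x ∂(haarAddCircle : Measure UnitCircle), Q x := by
  rw [MeasureTheory.ae_iff] at h ⊢
  obtain ⟨A, hsub, hAm, hA0⟩ := exists_measurable_superset_of_null h
  set B : Set UnitCircle := {x | repPt a x ∈ A} with hB
  have hBm : MeasurableSet B := (repPt_measurable a) hAm
  have hsubB : {x | ¬ Q x} ⊆ B := by
    intro x hx
    have : ¬ Q ((repPt a x : ℝ) : UnitCircle) := by rwa [repPt_coe]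
    exact hsub this
  have hvolB : (volume : Measure UnitCircle) B = 0 := by
    have hmp := AddCircle.measurePreserving_mk (2*π) a
    have : (volume : Measure UnitCircle) B
        = (volume.restrict (Set.Ioc a (a + 2*π))) (((↑) : ℝ → UnitCircle) ⁻¹' B) := by
      rw [← hmp.map_eq, Measure.map_apply hmp.measurable hBm]
    rw [this]
    refine le_antisymm ?_ (zero_le)
    have hsub2 : (((↑) : ℝ → UnitCircle) ⁻¹' B) ∩ Set.Ioc a (a + 2*π) ⊆ A := by
      intro θ ⟨hθB, hθIoc⟩
      have hrep : repPt a ((θ : ℝ) : UnitCircle) = θ := repPt_coe' hθIoc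
      simpa [B, hrep] using hθB
    calc (volume.restrict (Set.Ioc a (a + 2*π))) (((↑) : ℝ → UnitCircle) ⁻¹' B)
        = volume ((((↑) : ℝ → UnitCircle) ⁻¹' B) ∩ Set.Ioc a (a + 2*π)) := by
          rw [Measure.restrict_apply (hmp.measurable hBm)]
      _ ≤ volume (A ∩ Set.Ioc a (a + 2*π)) :=
          measure_mono (fun θ hθ => Set.mem_inter (hsub2 hθ) hθ.2)
      _ = 0 := by rwa [Measure.restrict_apply hAm] at hA0
  have : (haarAddCircle : Measure UnitCircle) B = 0 := by
    have hv : (volume : Measure UnitCircle) = (ENNReal.ofReal (2*π)) • haarAddCircle :=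
      AddCircle.volume_eq_smul_haarAddCircle
    rw [hv] at hvolB
    simp only [Measure.smul_apply, smul_eq_mul] at hvolB
    rcases mul_eq_zero.mp hvolB with h' | h'
    · exact absurd h' (ENNReal.ofReal_pos.mpr (by positivity)).ne'
    · exact h'
  exact measure_mono_null hsubB this


lemma t_lt {t : ℕ → ℝ} {M : ℕ} (h : ∀ k < M, t k < t (k+1)) :
    ∀ {i j : ℕ}, i < j → j ≤ M → t i < t j := by
  intro i j hij hjM
  induction j with
  | zero => omega
  | succ j ih =>
    rcases Nat.lt_succ_iff_lt_or_eq.mp hij with h' | h'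
    · exact (ih h' (by omega)).trans (h j (by omega))
    · subst h'; exact h i (by omega)

lemma t_le {t : ℕ → ℝ} {M : ℕ} (h : ∀ k < M, t k < t (k+1)) :
    ∀ {i j : ℕ}, i ≤ j → j ≤ M → t i ≤ t j := by
  intro i j hij hjM
  rcases Nat.lt_or_ge i j with h' | h'
  · exact (t_lt h h' hjM).le
  · have : i = j := by omega
    subst this; rfl

lemma locate {t : ℕ → ℝ} {M : ℕ} (hM : 1 ≤ M) (h : ∀ k < M, t k < t (k+1)) {θ : ℝ}
    (h1 : t 0 < θ) (h2 : θ ≤ t M) (hne : ∀ i ≤ M, θ ≠ t i) :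
    ∃ j < M, θ ∈ Set.Ioo (t j) (t (j+1)) := by
  classical
  set S := (Finset.range M).filter (fun i => t i < θ) with hS
  have h0S : 0 ∈ S := by
    simp only [S, Finset.mem_filter, Finset.mem_range]
    exact ⟨by omega, h1⟩
  have hSne : S.Nonempty := ⟨0, h0S⟩
  set j := S.max' hSne with hj
  have hjS : j ∈ S := S.max'_mem hSne
  have hjM : j < M := Finset.mem_range.mp (Finset.mem_filter.mp hjS).1
  have htj : t j < θ := (Finset.mem_filter.mp hjS).2
  refine ⟨j, hjM, htj, ?_⟩
  by_cases hj1 : j + 1 = M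
  · rw [hj1]; exact lt_of_le_of_ne h2 (hne M le_rfl)
  · have hj1M : j + 1 < M := by omega
    have hnotS : j + 1 ∉ S := fun hmem => by
      have := S.le_max' _ hmem; omega
    have hle : ¬ t (j+1) < θ := fun hc =>
      hnotS (Finset.mem_filter.mpr ⟨Finset.mem_range.mpr hj1M, hc⟩)
    exact lt_of_le_of_ne (not_lt.mp hle) (hne (j+1) (by omega))

/-- the sign function of the step pattern -/
noncomputable def sgnStep (t : ℕ → ℝ) (M : ℕ) (θ : ℝ) : ℝ :=
  ∏ i ∈ Finset.range M, (if t (i+1) < θ then (-1:ℝ) else 1)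

lemma sgnStep_eq {t : ℕ → ℝ} {M j : ℕ} (h : ∀ k < M, t k < t (k+1)) (hj : j < M)
    {θ : ℝ} (hθ : θ ∈ Set.Ioo (t j) (t (j+1))) : sgnStep t M θ = (-1)^j := by
  have key : ∀ i ∈ Finset.range M, (if t (i+1) < θ then (-1:ℝ) else 1)
      = if i < j then (-1:ℝ) else 1 := by
    intro i hi
    have hiM : i < M := Finset.mem_range.mp hi
    rcases Nat.lt_or_ge i j with h' | h'
    · have : t (i+1) ≤ t j := t_le h (by omega) (by omega)
      simp [this.trans_lt hθ.1, h']
    · have : t (j+1) ≤ t (i+1) := t_le h (by omega) (by omega)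
      have h2 : ¬ t (i+1) < θ := not_lt.mpr ((hθ.2.le).trans this)
      simp [h2, Nat.not_lt.mpr h']
  rw [sgnStep, Finset.prod_congr rfl key, Finset.range_eq_Ico,
    ← Finset.prod_Ico_consecutive _ (Nat.zero_le j) (le_of_lt hj)]
  have e1 : ∏ i ∈ Finset.Ico 0 j, (if i < j then (-1:ℝ) else 1) = (-1)^j := by
    have h1 : ∀ i ∈ Finset.Ico 0 j, (if i < j then (-1:ℝ) else 1) = -1 :=
      fun i hi => if_pos (Finset.mem_Ico.mp hi).2
    rw [Finset.prod_congr rfl h1, Finset.prod_const, Nat.card_Ico, Nat.sub_zero]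
  have e2 : ∏ i ∈ Finset.Ico j M, (if i < j then (-1:ℝ) else 1) = 1 := by
    have h1 : ∀ i ∈ Finset.Ico j M, (if i < j then (-1:ℝ) else 1) = 1 :=
      fun i hi => if_neg (Nat.not_lt.mpr (Finset.mem_Ico.mp hi).1)
    rw [Finset.prod_congr rfl h1, Finset.prod_const_one]
  rw [e1, e2, mul_one]

lemma sgnStep_unit (t : ℕ → ℝ) (M : ℕ) (θ : ℝ) : sgnStep t M θ = 1 ∨ sgnStep t M θ = -1 := by
  refine Finset.prod_induction _ (fun x => x = 1 ∨ x = -1) ?_ (Or.inl rfl) ?_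
  · rintro x y (rfl | rfl) (rfl | rfl) <;> norm_num
  · intro i _
    by_cases h : t (i+1) < θ <;> simp [h]

/-- sign of the product of sines on an arc -/
lemma prod_sin_sign {t : ℕ → ℝ} {M j : ℕ} (hmono : ∀ k < M, t k < t (k+1))
    (hper : t M = t 0 + 2*π) (hj : j < M) {θ : ℝ}
    (hθ : θ ∈ Set.Ioo (t j) (t (j+1))) :
    0 < (-1)^(M - j) * ∏ i ∈ Finset.range M, Real.sin ((θ - t (i+1))/2) := by
  have hjM : j + 1 ≤ M := hj
  have split : ∏ i ∈ Finset.range M, Real.sin ((θ - t (i+1))/2)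
      = (∏ i ∈ Finset.Ico 0 j, Real.sin ((θ - t (i+1))/2))
        * ∏ i ∈ Finset.Ico j M, Real.sin ((θ - t (i+1))/2) := by
    rw [Finset.range_eq_Ico, ← Finset.prod_Ico_consecutive _ (Nat.zero_le j) (le_of_lt hj)]
  have hpos : ∀ i ∈ Finset.Ico 0 j, 0 < Real.sin ((θ - t (i+1))/2) := by
    intro i hi
    have hij : i + 1 ≤ j := (Finset.mem_Ico.mp hi).2
    have h1 : t (i+1) < θ := lt_of_le_of_lt (t_le hmono hij (by omega)) hθ.1
    have h2 : θ - t (i+1) < 2*π := by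
      have ht1 : t 0 ≤ t (i+1) := t_le hmono (by omega) (by omega)
      have : θ < t M := lt_of_lt_of_le hθ.2 (t_le hmono hjM le_rfl)
      rw [hper] at this; linarith
    apply Real.sin_pos_of_pos_of_lt_pi <;> [linarith; linarith]
  have hneg : ∀ i ∈ Finset.Ico j M, Real.sin ((θ - t (i+1))/2) < 0 := by
    intro i hi
    obtain ⟨hji, hiM⟩ := Finset.mem_Ico.mp hi
    have h1 : θ < t (i+1) := lt_of_lt_of_le hθ.2 (t_le hmono (by omega) (by omega))
    have h2 : t (i+1) - 2*π < θ := by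
      have : t (i+1) ≤ t M := t_le hmono (by omega) le_rfl
      rw [hper] at this
      have ht0 : t 0 < θ := lt_of_le_of_lt (t_le hmono (Nat.zero_le j) (by omega)) hθ.1
      linarith
    apply Real.sin_neg_of_neg_of_neg_pi_lt <;> [linarith; linarith]
  have hcard : (Finset.Ico j M).card = M - j := Nat.card_Ico j M
  have e : (-1:ℝ)^(M-j) * ∏ i ∈ Finset.Ico j M, Real.sin ((θ - t (i+1))/2)
      = ∏ i ∈ Finset.Ico j M, (-(Real.sin ((θ - t (i+1))/2))) := by
    have h1 : ∀ i ∈ Finset.Ico j M, -(Real.sin ((θ - t (i+1))/2))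
        = (-1) * Real.sin ((θ - t (i+1))/2) := fun i _ => by ring
    rw [Finset.prod_congr rfl h1, Finset.prod_mul_distrib, Finset.prod_const, hcard]
  rw [split, mul_comm (∏ i ∈ Finset.Ico 0 j, _), ← mul_assoc, e]
  apply mul_pos
  · exact Finset.prod_pos (fun i hi => by linarith [hneg i hi])
  · exact Finset.prod_pos hpos

/-- expansion of a product of sines as a trigonometric polynomial -/
lemma trig_prod (s : ℕ → ℝ) (d : ℕ) :
    ∃ A : ℕ → ℂ, (∀ k, d < k → A k = 0) ∧ ∀ θ : ℝ,
      ((∏ i ∈ Finset.range d, Real.sin ((θ - s i)/2) : ℝ) : ℂ) =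
        ((Complex.exp (θ * Complex.I / 2))^d)⁻¹ *
          ∑ k ∈ Finset.range (d+1), A k * (Complex.exp (θ * Complex.I / 2))^(2*k) := by
  induction d with
  | zero =>
    refine ⟨fun k => if k = 0 then 1 else 0, fun k hk => if_neg (by omega), fun θ => by simp⟩
  | succ d ih =>
    obtain ⟨A, hA0, hA⟩ := ih
    set b : ℂ := Complex.exp ((s d : ℂ) * Complex.I / 2) with hb
    have hbne : b ≠ 0 := Complex.exp_ne_zero _
    refine ⟨fun k => (Complex.I/2) * (b * A k - b⁻¹ * (if k = 0 then 0 else A (k-1))),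
      fun k hk => by
        have h1 : A k = 0 := hA0 k (by omega)
        have h2 : (if k = 0 then (0:ℂ) else A (k-1)) = 0 := by
          rcases Nat.eq_zero_or_pos k with h | h
          · simp [h]
          · rw [if_neg (by omega)]; exact hA0 _ (by omega)
        simp [h1, h2], fun θ => ?_⟩
    set X : ℂ := Complex.exp (θ * Complex.I / 2) with hX
    have hXne : X ≠ 0 := Complex.exp_ne_zero _
    set S : ℂ := ∑ k ∈ Finset.range (d+1), A k * X^(2*k) with hS
    -- rewrite sine factor
    have hsin : ((Real.sin ((θ - s d)/2) : ℝ) : ℂ)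
        = (X⁻¹ * b - X * b⁻¹) * Complex.I / 2 := by
      have e1 : Complex.exp (-((((θ - s d)/2 : ℝ) : ℂ)) * Complex.I) = X⁻¹ * b := by
        rw [hX, hb, ← Complex.exp_neg, ← Complex.exp_add]
        congr 1
        push_cast
        ring
      have e2 : Complex.exp ((((θ - s d)/2 : ℝ) : ℂ) * Complex.I) = X * b⁻¹ := by
        rw [hX, hb, ← Complex.exp_neg, ← Complex.exp_add]
        congr 1
        push_cast
        ring
      rw [Complex.ofReal_sin, Complex.sin, e1, e2]
    have hsum : ∑ k ∈ Finset.range (d+2),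
        ((Complex.I/2) * (b * A k - b⁻¹ * (if k = 0 then 0 else A (k-1)))) * X^(2*k)
        = (Complex.I/2) * b * S - (Complex.I/2) * b⁻¹ * (X^2 * S) := by
      have h1 : ∀ k ∈ Finset.range (d+2),
          ((Complex.I/2) * (b * A k - b⁻¹ * (if k = 0 then 0 else A (k-1)))) * X^(2*k)
          = ((Complex.I/2) * b) * (A k * X^(2*k))
            - ((Complex.I/2) * b⁻¹) * ((if k = 0 then (0:ℂ) else A (k-1)) * X^(2*k)) :=
        fun k _ => by ring
      rw [Finset.sum_congr rfl h1, Finset.sum_sub_distrib, ← Finset.mul_sum, ← Finset.mul_sum]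
      have h2 : ∑ k ∈ Finset.range (d+2), A k * X^(2*k) = S := by
        rw [Finset.sum_range_succ, hA0 (d+1) (by omega)]
        simp [hS]
      have h3 : ∑ k ∈ Finset.range (d+2), (if k = 0 then (0:ℂ) else A (k-1)) * X^(2*k)
          = X^2 * S := by
        rw [Finset.sum_range_succ']
        have hzero : (if (0:ℕ) = 0 then (0:ℂ) else A (0-1)) * X^(2*0) = 0 := by simp
        rw [hzero, add_zero, hS, Finset.mul_sum]
        refine Finset.sum_congr rfl (fun k _ => ?_)
        rw [if_neg (Nat.succ_ne_zero k), Nat.add_sub_cancel,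
          show 2*(k+1) = 2*k + 2 from by ring, pow_add]
        ring
      rw [h2, h3]
    rw [Finset.prod_range_succ, Complex.ofReal_mul, hA θ, hsin, hsum]
    rw [pow_succ]
    field_simp
    ring

lemma exp_pow_half (k : ℕ) (θ : ℝ) :
    (Complex.exp ((θ:ℂ) * Complex.I / 2))^k = Complex.exp ((k:ℂ) * θ * Complex.I / 2) := by
  rw [← Complex.exp_nat_mul]
  congr 1
  ring

lemma Xpow_combine (n k : ℕ) (θ : ℝ) :
    ((Complex.exp ((θ:ℂ) * Complex.I / 2))^(2*n))⁻¹ * (Complex.exp ((θ:ℂ) * Complex.I / 2))^(2*k)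
      = Complex.exp ((((k:ℤ) - (n:ℤ) : ℤ) : ℂ) * θ * Complex.I) := by
  rw [exp_pow_half, exp_pow_half, ← Complex.exp_neg, ← Complex.exp_add]
  congr 1
  push_cast
  ring

lemma fourier_eq (m : ℤ) (θ : ℝ) :
    fourier m ((θ : ℝ) : UnitCircle) = Complex.exp ((m:ℂ) * θ * Complex.I) := by
  rw [fourier_coe_apply]
  congr 1
  have hπ : (π:ℂ) ≠ 0 := by exact_mod_cast Real.pi_ne_zero
  push_cast
  field_simp

/-- a.e. representation of an alternating step function -/
lemma rep_ae {c : ℝ} {n : ℕ} {ψ : UnitCircle → ℂ} (hn : 1 ≤ n) (h : IsAltStep c n ψ) :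
    ∃ t : ℕ → ℝ, (∀ i < 2*n, t i < t (i+1)) ∧ t (2*n) = t 0 + 2*π ∧
      ∀ᵐ x ∂(haarAddCircle : Measure UnitCircle),
        ∃ j < 2*n, repPt (t 0) x ∈ Set.Ioo (t j) (t (j+1)) ∧ ψ x = (((-1)^j * c : ℝ) : ℂ) := by
  obtain ⟨t, hmono, hper, harc⟩ := h
  refine ⟨t, hmono, hper, ?_⟩
  apply ae_haar_of_ae_Ioc (t 0)
  have hM : 1 ≤ 2*n := by omega
  -- all arc conditions simultaneously
  have harcs : ∀ᵐ (θ : ℝ) ∂volume, ∀ j : ℕ, j < 2*n →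
      (θ ∈ Set.Ioo (t j) (t (j+1)) → ψ ((θ : ℝ) : UnitCircle) = (((-1)^j * c : ℝ) : ℂ)) := by
    rw [MeasureTheory.ae_all_iff]
    intro j
    by_cases hj : j < 2*n
    · filter_upwards [harc j hj] with θ hθ _ h2
      exact hθ h2
    · filter_upwards with θ hj2
      exact absurd hj2 hj
  have hnodes : ∀ᵐ (θ : ℝ) ∂volume, ∀ i : ℕ, i ≤ 2*n → θ ≠ t i := by
    rw [MeasureTheory.ae_all_iff]
    intro i
    by_cases hi : i ≤ 2*n
    · rw [MeasureTheory.ae_iff]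
      have : {θ : ℝ | ¬ (i ≤ 2*n → θ ≠ t i)} ⊆ {t i} := by
        intro θ hθ
        simp only [Set.mem_setOf_eq, not_forall, not_not] at hθ
        simp [hθ.2]
      exact measure_mono_null this (measure_singleton _)
    · filter_upwards with θ hi2
      exact absurd hi2 hi
  have hIoc : ∀ᵐ (θ : ℝ) ∂(volume.restrict (Set.Ioc (t 0) (t 0 + 2*π))),
      θ ∈ Set.Ioc (t 0) (t 0 + 2*π) := ae_restrict_mem measurableSet_Ioc
  filter_upwards [ae_restrict_of_ae harcs, ae_restrict_of_ae hnodes, hIoc]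
    with θ harcs' hnodes' hθIoc
  have hloc : ∃ j < 2*n, θ ∈ Set.Ioo (t j) (t (j+1)) := by
    apply locate hM hmono hθIoc.1 (by rw [hper]; exact hθIoc.2) hnodes'
  obtain ⟨j, hj, hmem⟩ := hloc
  refine ⟨j, hj, ?_, harcs' j hj hmem⟩
  rwa [repPt_coe' hθIoc]

/-- explicit measurable step function -/
noncomputable def stepF (c : ℝ) (t : ℕ → ℝ) (M : ℕ) : UnitCircle → ℂ :=
  fun x => ((sgnStep t M (repPt (t 0) x) * c : ℝ) : ℂ)

lemma sgnStep_measurable (t : ℕ → ℝ) (M : ℕ) : Measurable (sgnStep t M) := by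
  apply Finset.measurable_prod
  intro i _
  exact Measurable.ite (measurableSet_lt measurable_const measurable_id) measurable_const
    measurable_const

lemma stepF_measurable (c : ℝ) (t : ℕ → ℝ) (M : ℕ) : Measurable (stepF c t M) :=
  Complex.measurable_ofReal.comp
    (((sgnStep_measurable t M).comp (repPt_measurable (t 0))).mul_const c)

/-- consequences of the a.e. representation -/
lemma rep_facts {c : ℝ} {n : ℕ} {ψ : UnitCircle → ℂ} {t : ℕ → ℝ}
    (hmono : ∀ i < 2*n, t i < t (i+1))
    (hae : ∀ᵐ x ∂(haarAddCircle : Measure UnitCircle),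
      ∃ j < 2*n, repPt (t 0) x ∈ Set.Ioo (t j) (t (j+1)) ∧ ψ x = (((-1)^j * c : ℝ) : ℂ)) :
    AEStronglyMeasurable ψ (haarAddCircle : Measure UnitCircle) ∧
      (∀ᵐ x ∂(haarAddCircle : Measure UnitCircle), ∃ r : ℝ, ψ x = (r:ℂ) ∧ |r| ≤ |c|) := by
  constructor
  · apply AEStronglyMeasurable.congr
      ((stepF_measurable c t (2*n)).aestronglyMeasurable)
    filter_upwards [hae] with x hx
    obtain ⟨j, hj, hmem, hval⟩ := hx
    rw [hval, stepF, sgnStep_eq hmono hj hmem]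
  · filter_upwards [hae] with x hx
    obtain ⟨j, hj, hmem, hval⟩ := hx
    refine ⟨(-1)^j * c, hval, ?_⟩
    rw [abs_mul, _root_.abs_pow, abs_neg, abs_one, one_pow, one_mul]

lemma bdd_integrable {ψ : UnitCircle → ℂ} {C : ℝ}
    (hm : AEStronglyMeasurable ψ (haarAddCircle : Measure UnitCircle))
    (hb : ∀ᵐ x ∂(haarAddCircle : Measure UnitCircle), ∃ r : ℝ, ψ x = (r:ℂ) ∧ |r| ≤ C) :
    Integrable ψ (haarAddCircle : Measure UnitCircle) := by
  apply Integrable.mono' (integrable_const C) hm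
  filter_upwards [hb] with x hx
  obtain ⟨r, hr, hrb⟩ := hx
  rw [hr, Complex.norm_real]
  exact hrb

lemma coeff_zero_eq {ψ : UnitCircle → ℂ} {c : ℝ}
    (h : ∀ᵐ x ∂(haarAddCircle : Measure UnitCircle), ψ x = (c : ℂ)) :
    fourierCoeff ψ 0 = (c : ℂ) := by
  rw [fourierCoeff]
  simp only [neg_zero, fourier_zero, one_smul]
  rw [integral_congr_ae h, integral_const]
  simp

/-- the order-zero (constant) case -/
lemma const_case {c₀ : ℝ} {ψ₁ ψ₂ : UnitCircle → ℂ}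
    (h₁ : ∀ᵐ x ∂(haarAddCircle : Measure UnitCircle), ψ₁ x = (c₀ : ℂ))
    (h₂m : AEStronglyMeasurable ψ₂ (haarAddCircle : Measure UnitCircle))
    (h₂b : ∀ᵐ x ∂(haarAddCircle : Measure UnitCircle), ∃ r : ℝ, ψ₂ x = (r:ℂ) ∧ |r| ≤ |c₀|)
    (h0 : fourierCoeff ψ₁ 0 = fourierCoeff ψ₂ 0) :
    ψ₁ =ᵐ[(haarAddCircle : Measure UnitCircle)] ψ₂ := by
  set σ : ℝ := if 0 ≤ c₀ then 1 else -1 with hσ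
  have hσ0 : σ ≠ 0 := by
    rcases le_or_gt 0 c₀ with h | h <;> simp [hσ, h, not_le.mpr] <;> intro hcon <;> linarith
  set g : UnitCircle → ℝ := fun x => ((σ:ℂ) * ((c₀:ℂ) - ψ₂ x)).re with hg
  have h₂int : Integrable ψ₂ (haarAddCircle : Measure UnitCircle) := bdd_integrable h₂m h₂b
  have hgint : Integrable g (haarAddCircle : Measure UnitCircle) := by
    have h := (((integrable_const ((c₀:ℂ))).sub h₂int).const_mul (σ:ℂ)).re
    simpa [hg, RCLike.re_to_complex] using h
  have hgnn : 0 ≤ᵐ[(haarAddCircle : Measure UnitCircle)] g := by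
    filter_upwards [h₂b] with x hx
    obtain ⟨r, hr, hrb⟩ := hx
    have : ((σ:ℂ) * ((c₀:ℂ) - ψ₂ x)) = ((σ * (c₀ - r) : ℝ) : ℂ) := by
      rw [hr]; push_cast; ring
    simp only [Pi.zero_apply, hg, this, Complex.ofReal_re]
    rcases le_or_gt 0 c₀ with h | h
    · have hs : σ = 1 := if_pos h
      rw [hs, one_mul]
      have hab := abs_le.mp hrb
      have h5 : |c₀| = c₀ := abs_of_nonneg h
      linarith [hab.2]
    · have hs : σ = -1 := if_neg (not_le.mpr h)
      rw [hs]
      have hab := abs_le.mp hrb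
      have h3 : |c₀| = -c₀ := abs_of_neg h
      nlinarith [hab.1]
  have hgzero : ∫ x, g x ∂(haarAddCircle : Measure UnitCircle) = 0 := by
    have hsub : ∫ x, ((σ:ℂ) * ((c₀:ℂ) - ψ₂ x)) ∂(haarAddCircle : Measure UnitCircle) = 0 := by
      rw [MeasureTheory.integral_const_mul, integral_sub (integrable_const _) h₂int]
      have h1 : ∫ (_ : UnitCircle), (c₀:ℂ) ∂(haarAddCircle : Measure UnitCircle) = (c₀:ℂ) := by
        rw [integral_const]; simp
      have h2 : ∫ x, ψ₂ x ∂(haarAddCircle : Measure UnitCircle) = fourierCoeff ψ₂ 0 := by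
        rw [fourierCoeff]
        simp [fourier_zero, one_smul]
      rw [h1, h2, ← h0, coeff_zero_eq h₁, sub_self, mul_zero]
    have hre := integral_re (μ := (haarAddCircle : Measure UnitCircle))
      (f := fun x => ((σ:ℂ) * ((c₀:ℂ) - ψ₂ x)))
      (((integrable_const ((c₀:ℂ))).sub h₂int).const_mul (σ:ℂ))
    simp only [RCLike.re_to_complex] at hre
    rw [hg]
    simp only []
    rw [hre, hsub]
    simp
  have := (integral_eq_zero_iff_of_nonneg_ae hgnn hgint).mp hgzero
  filter_upwards [h₁, h₂b, this] with x h1 h2 h3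
  obtain ⟨r, hr, _⟩ := h2
  have : ((σ:ℂ) * ((c₀:ℂ) - ψ₂ x)) = ((σ * (c₀ - r) : ℝ) : ℂ) := by
    rw [hr]; push_cast; ring
  have h4 : σ * (c₀ - r) = 0 := by
    have h3' : g x = 0 := by simpa using h3
    rw [hg] at h3'
    simp only [this, Complex.ofReal_re] at h3'
    exact h3'
  have h5 : c₀ = r := by
    rcases mul_eq_zero.mp h4 with h | h
    · exact absurd h hσ0
    · linarith
  rw [h1, hr, h5]

lemma fourier_bdd_integrable {g : UnitCircle → ℂ}
    (hg : Integrable g (haarAddCircle : Measure UnitCircle)) (j : ℤ) :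
    Integrable (fun x => fourier j x * g x) (haarAddCircle : Measure UnitCircle) := by
  apply hg.bdd_mul (c := 1) ((fourier j).continuous.aestronglyMeasurable)
  refine Filter.Eventually.of_forall (fun x => ?_)
  have h1 := ContinuousMap.norm_coe_le_norm (fourier j) x
  rw [fourier_norm] at h1
  exact h1

lemma main_lemma {N n : ℕ} (hn : 1 ≤ n) (hnN : n ≤ N) {c : ℝ} (hc : 0 < c)
    {ψ₁ ψ₂ : UnitCircle → ℂ} (h₁ : IsAltStep c n ψ₁)
    (h₂m : AEStronglyMeasurable ψ₂ (haarAddCircle : Measure UnitCircle))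
    (h₂b : ∀ᵐ x ∂(haarAddCircle : Measure UnitCircle), ∃ r : ℝ, ψ₂ x = (r:ℂ) ∧ |r| ≤ c)
    (hcoef : ∀ k : ℕ, k ≤ N → fourierCoeff ψ₁ (k:ℤ) = fourierCoeff ψ₂ (k:ℤ)) :
    ψ₁ =ᵐ[(haarAddCircle : Measure UnitCircle)] ψ₂ := by
  obtain ⟨t, hmono, hper, hae⟩ := rep_ae hn h₁
  obtain ⟨h₁m, h₁b⟩ := rep_facts hmono hae
  rw [abs_of_pos hc] at h₁b
  have h₁int := bdd_integrable h₁m h₁b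
  have h₂int := bdd_integrable h₂m h₂b
  set f : UnitCircle → ℂ := fun x => ψ₁ x - ψ₂ x with hf
  have hfint : Integrable f (haarAddCircle : Measure UnitCircle) := h₁int.sub h₂int
  -- Fourier coefficients of f vanish for |m| ≤ n
  have hcoeff_sub : ∀ m : ℤ, fourierCoeff f m = fourierCoeff ψ₁ m - fourierCoeff ψ₂ m := by
    intro m
    rw [fourierCoeff, fourierCoeff, fourierCoeff]
    simp only [smul_eq_mul]
    rw [← integral_sub (fourier_bdd_integrable h₁int _) (fourier_bdd_integrable h₂int _)]
    refine integral_congr_ae (Filter.Eventually.of_forall fun x => ?_)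
    rw [hf]
    ring
  have hreal : ∀ᵐ x ∂(haarAddCircle : Measure UnitCircle),
      (starRingEnd ℂ) (f x) = f x := by
    filter_upwards [h₁b, h₂b] with x hx1 hx2
    obtain ⟨r1, hr1, _⟩ := hx1
    obtain ⟨r2, hr2, _⟩ := hx2
    rw [hf]
    simp only
    rw [hr1, hr2, ← Complex.ofReal_sub, Complex.conj_ofReal]
  have hconj : ∀ m : ℤ, fourierCoeff f (-m) = (starRingEnd ℂ) (fourierCoeff f m) := by
    intro m
    have key : ∀ x : UnitCircle, (fourier m x : ℂ) = (starRingEnd ℂ) (fourier (-m) x) := by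
      intro x
      conv_lhs => rw [show (m:ℤ) = -(-m) from (neg_neg m).symm]
      rw [fourier_neg]
    rw [fourierCoeff, fourierCoeff, ← integral_conj, neg_neg]
    refine integral_congr_ae ?_
    filter_upwards [hreal] with x hx
    rw [smul_eq_mul, smul_eq_mul, map_mul, hx, ← key x]
  have hzero : ∀ m : ℤ, |m| ≤ (n:ℤ) → fourierCoeff f m = 0 := by
    have hpos : ∀ k : ℕ, (k:ℤ) ≤ (n:ℤ) → fourierCoeff f (k:ℤ) = 0 := by
      intro k hk
      have hkN : k ≤ N := by
        have : k ≤ n := by exact_mod_cast hk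
        omega
      rw [hcoeff_sub, hcoef k hkN, sub_self]
    intro m hm
    rcases le_or_gt 0 m with h | h
    · obtain ⟨k, rfl⟩ := Int.eq_ofNat_of_zero_le h
      exact hpos k (by rwa [abs_of_nonneg h] at hm)
    · obtain ⟨k, hk⟩ := Int.eq_ofNat_of_zero_le (by omega : (0:ℤ) ≤ -m)
      have hmk : m = -(k:ℤ) := by omega
      have hkn : (k:ℤ) ≤ (n:ℤ) := by
        rw [hmk, abs_neg, _root_.abs_of_nonneg (by positivity : (0:ℤ) ≤ (k:ℤ))] at hm
        exact hm
      rw [hmk, hconj, hpos k hkn, map_zero]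
  -- the trigonometric polynomial
  obtain ⟨A, hA0, hA⟩ := trig_prod (fun i => t (i+1)) (2*n)
  set P : ℝ → ℝ := fun θ => ∏ i ∈ Finset.range (2*n), Real.sin ((θ - t (i+1))/2) with hP
  set Pc : UnitCircle → ℂ := fun x => ((P (repPt (t 0) x) : ℝ) : ℂ) with hPcdef
  have hPc_eq : ∀ x : UnitCircle, Pc x
      = ∑ k ∈ Finset.range (2*n+1), A k * fourier ((k:ℤ) - (n:ℤ)) x := by
    intro x
    have hxθ : ((repPt (t 0) x : ℝ) : UnitCircle) = x := repPt_coe (t 0) x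
    set θ := repPt (t 0) x with hθdef
    rw [hPcdef]
    simp only
    rw [hP]
    simp only
    rw [hA θ, Finset.mul_sum]
    refine Finset.sum_congr rfl fun k hk => ?_
    rw [← hxθ, fourier_eq ((k:ℤ) - (n:ℤ)) θ, ← Xpow_combine n k θ]
    ring
  have hPc_bd : ∀ x, ‖Pc x‖ ≤ 1 := by
    intro x
    rw [hPcdef]
    simp only [Complex.norm_real]
    rw [hP]
    simp only
    rw [Real.norm_eq_abs, Finset.abs_prod]
    apply Finset.prod_le_one
    · intro i _; exact abs_nonneg _
    · intro i _
      exact abs_le.mpr ⟨Real.neg_one_le_sin _, Real.sin_le_one _⟩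
  have hPc_meas : AEStronglyMeasurable Pc (haarAddCircle : Measure UnitCircle) := by
    have h1 : Measurable P := by
      rw [hP]
      apply Finset.measurable_prod
      intro i _
      exact Real.measurable_sin.comp ((measurable_id.sub_const _).div_const _)
    exact (Complex.measurable_ofReal.comp (h1.comp (repPt_measurable (t 0)))).aestronglyMeasurable
  -- orthogonality
  have horth : ∫ x, f x * Pc x ∂(haarAddCircle : Measure UnitCircle) = 0 := by
    have hterm : ∀ k ∈ Finset.range (2*n+1),
        Integrable (fun x => A k * (fourier ((k:ℤ)-(n:ℤ)) x * f x))
          (haarAddCircle : Measure UnitCircle) :=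
      fun k _ => (fourier_bdd_integrable hfint _).const_mul _
    calc ∫ x, f x * Pc x ∂(haarAddCircle : Measure UnitCircle)
        = ∫ x, ∑ k ∈ Finset.range (2*n+1), A k * (fourier ((k:ℤ)-(n:ℤ)) x * f x)
            ∂(haarAddCircle : Measure UnitCircle) := by
          refine integral_congr_ae (Filter.Eventually.of_forall fun x => ?_)
          show f x * Pc x = ∑ k ∈ Finset.range (2*n+1), A k * (fourier ((k:ℤ)-(n:ℤ)) x * f x)
          rw [hPc_eq x, Finset.mul_sum]
          exact Finset.sum_congr rfl fun k _ => by ring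
      _ = ∑ k ∈ Finset.range (2*n+1),
            ∫ x, A k * (fourier ((k:ℤ)-(n:ℤ)) x * f x) ∂(haarAddCircle : Measure UnitCircle) :=
          integral_finset_sum _ hterm
      _ = 0 := by
          apply Finset.sum_eq_zero
          intro k hk
          rw [integral_const_mul]
          have he : ∫ x, fourier ((k:ℤ)-(n:ℤ)) x * f x ∂(haarAddCircle : Measure UnitCircle)
              = fourierCoeff f (-((k:ℤ)-(n:ℤ))) := by
            rw [fourierCoeff, neg_neg]
            simp only [smul_eq_mul]
          have hk2 : (k:ℤ) ≤ 2*(n:ℤ) := by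
            have := Finset.mem_range.mp hk
            omega
          have habs : |(-((k:ℤ)-(n:ℤ)))| ≤ (n:ℤ) := by
            rw [abs_le]
            omega
          rw [he, hzero _ habs, mul_zero]
  -- pointwise sign
  have hsign : ∀ᵐ x ∂(haarAddCircle : Measure UnitCircle),
      ∃ r : ℝ, 0 ≤ r ∧ f x * Pc x = (r:ℂ) ∧ Pc x ≠ 0 := by
    filter_upwards [hae, h₂b] with x hx h2x
    obtain ⟨j, hj, hmem, hval⟩ := hx
    obtain ⟨r2, hr2, hr2b⟩ := h2x
    have hPpos : 0 < (-1:ℝ)^(2*n - j) * P (repPt (t 0) x) := by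
      rw [hP]
      exact prod_sin_sign hmono hper hj hmem
    have hparity : (-1:ℝ)^(2*n - j) = (-1:ℝ)^j := by
      have hjle : j ≤ 2*n := by omega
      rcases Nat.even_or_odd j with he | ho
      · have h2n : Even (2*n) := even_two_mul n
        have : Even (2*n - j) := (Nat.even_sub hjle).mpr ⟨fun _ => he, fun _ => h2n⟩
        rw [this.neg_one_pow, he.neg_one_pow]
      · have h2n : Even (2*n) := even_two_mul n
        have : Odd (2*n - j) := Nat.Even.sub_odd hjle h2n ho
        rw [this.neg_one_pow, ho.neg_one_pow]
    rw [hparity] at hPpos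
    have hfx : f x = (((-1:ℝ)^j * c - r2 : ℝ) : ℂ) := by
      rw [hf]
      simp only
      rw [hval, hr2, ← Complex.ofReal_sub]
    have hrabs := abs_le.mp hr2b
    refine ⟨((-1:ℝ)^j * c - r2) * P (repPt (t 0) x), ?_, ?_, ?_⟩
    · rcases Nat.even_or_odd j with he | ho
      · rw [he.neg_one_pow] at hPpos ⊢
        rw [one_mul] at hPpos ⊢
        apply mul_nonneg (by linarith [hrabs.2]) hPpos.le
      · rw [ho.neg_one_pow] at hPpos ⊢
        have hPneg : P (repPt (t 0) x) < 0 := by nlinarith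
        have : -1 * c - r2 ≤ 0 := by linarith [hrabs.1]
        nlinarith
    · rw [hfx, hPcdef]
      simp only
      rw [← Complex.ofReal_mul]
    · rw [hPcdef]
      simp only
      rw [Complex.ofReal_ne_zero]
      intro h0
      rw [h0, mul_zero] at hPpos
      exact lt_irrefl 0 hPpos
  -- conclusion
  have hfPint : Integrable (fun x => f x * Pc x) (haarAddCircle : Measure UnitCircle) := by
    have h1 : Integrable (fun x => Pc x * f x) (haarAddCircle : Measure UnitCircle) :=
      hfint.bdd_mul hPc_meas (Filter.Eventually.of_forall hPc_bd)
    exact h1.congr (Filter.Eventually.of_forall fun x => mul_comm _ _)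
  set g : UnitCircle → ℝ := fun x => (f x * Pc x).re with hg
  have hgint : Integrable g (haarAddCircle : Measure UnitCircle) := by
    have h := hfPint.re
    simpa [hg, RCLike.re_to_complex] using h
  have hgnn : 0 ≤ᵐ[(haarAddCircle : Measure UnitCircle)] g := by
    filter_upwards [hsign] with x hx
    obtain ⟨r, hrnn, heq, _⟩ := hx
    simp only [Pi.zero_apply, hg, heq, Complex.ofReal_re]
    exact hrnn
  have hg0 : ∫ x, g x ∂(haarAddCircle : Measure UnitCircle) = 0 := by
    have hre := integral_re hfPint
    simp only [RCLike.re_to_complex] at hre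
    rw [hg]
    simp only
    rw [hre, horth]
    simp
  have hgz := (integral_eq_zero_iff_of_nonneg_ae hgnn hgint).mp hg0
  filter_upwards [hsign, hgz] with x hx hgx
  obtain ⟨r, hrnn, heq, hPne⟩ := hx
  have hr0 : r = 0 := by
    have : g x = 0 := by simpa using hgx
    rw [hg] at this
    simp only [heq, Complex.ofReal_re] at this
    exact this
  have hprod : f x * Pc x = 0 := by rw [heq, hr0, Complex.ofReal_zero]
  have hfx0 : f x = 0 := by
    rcases mul_eq_zero.mp hprod with h | h
    · exact h
    · exact absurd h hPne
  rw [hf] at hfx0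
  simp only at hfx0
  exact sub_eq_zero.mp hfx0

lemma alt_facts {c : ℝ} {n : ℕ} {ψ : UnitCircle → ℂ} (hn : 1 ≤ n) (hc : 0 < c)
    (h : IsAltStep c n ψ) :
    AEStronglyMeasurable ψ (haarAddCircle : Measure UnitCircle) ∧
      (∀ᵐ x ∂(haarAddCircle : Measure UnitCircle), ∃ r : ℝ, ψ x = (r:ℂ) ∧ |r| ≤ c) := by
  obtain ⟨t, hmono, hper, hae⟩ := rep_ae hn h
  obtain ⟨hm, hb⟩ := rep_facts hmono hae
  rw [_root_.abs_of_pos hc] at hb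
  exact ⟨hm, hb⟩


/-- An alternating step function of order at most `N` is determined (a.e.) by its
Fourier coefficients of indices `0, 1, …, N`. -/
theorem stmt12 (N : ℕ) (hN : 1 ≤ N) (ψ₁ ψ₂ : UnitCircle → ℂ)
    (h₁ : IsAltStepLE N ψ₁) (h₂ : IsAltStepLE N ψ₂)
    (hcoef : ∀ n : ℕ, n ≤ N → fourierCoeff ψ₁ (n : ℤ) = fourierCoeff ψ₂ (n : ℤ)) :
    ψ₁ =ᵐ[haarAddCircle] ψ₂ := by
  have hcoef0 : fourierCoeff ψ₁ 0 = fourierCoeff ψ₂ 0 := by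
    have := hcoef 0 (by omega)
    simpa using this
  rcases h₁ with ⟨c₁, hc₁⟩ | ⟨c₁, hc₁pos, n₁, hn₁, hn₁N, halt₁⟩ <;>
    rcases h₂ with ⟨c₂, hc₂⟩ | ⟨c₂, hc₂pos, n₂, hn₂, hn₂N, halt₂⟩
  · -- const / const
    have e1 := coeff_zero_eq hc₁
    have e2 := coeff_zero_eq hc₂
    have : (c₁:ℂ) = (c₂:ℂ) := by rw [← e1, ← e2]; exact hcoef0
    filter_upwards [hc₁, hc₂] with x h1 h2
    rw [h1, h2, ← this]
  · -- const / alt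
    obtain ⟨h₂m, h₂b⟩ := alt_facts hn₂ hc₂pos halt₂
    by_cases hle : c₂ ≤ |c₁|
    · refine const_case hc₁ h₂m ?_ hcoef0
      filter_upwards [h₂b] with x hx
      obtain ⟨r, hr, hrb⟩ := hx
      exact ⟨r, hr, hrb.trans hle⟩
    · have hle2 : |c₁| ≤ c₂ := (not_le.mp hle).le
      have h₁m : AEStronglyMeasurable ψ₁ (haarAddCircle : Measure UnitCircle) :=
        aestronglyMeasurable_const.congr (by filter_upwards [hc₁] with x hx; rw [hx])
      have h₁b : ∀ᵐ x ∂(haarAddCircle : Measure UnitCircle),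
          ∃ r : ℝ, ψ₁ x = (r:ℂ) ∧ |r| ≤ c₂ := by
        filter_upwards [hc₁] with x hx
        exact ⟨c₁, hx, hle2⟩
      exact (main_lemma hn₂ hn₂N hc₂pos halt₂ h₁m h₁b
        (fun k hk => (hcoef k hk).symm)).symm
  · -- alt / const
    obtain ⟨h₁m, h₁b⟩ := alt_facts hn₁ hc₁pos halt₁
    by_cases hle : c₁ ≤ |c₂|
    · refine (const_case hc₂ h₁m ?_ hcoef0.symm).symm
      filter_upwards [h₁b] with x hx
      obtain ⟨r, hr, hrb⟩ := hx
      exact ⟨r, hr, hrb.trans hle⟩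
    · have hle2 : |c₂| ≤ c₁ := (not_le.mp hle).le
      have h₂m : AEStronglyMeasurable ψ₂ (haarAddCircle : Measure UnitCircle) :=
        aestronglyMeasurable_const.congr (by filter_upwards [hc₂] with x hx; rw [hx])
      have h₂b : ∀ᵐ x ∂(haarAddCircle : Measure UnitCircle),
          ∃ r : ℝ, ψ₂ x = (r:ℂ) ∧ |r| ≤ c₁ := by
        filter_upwards [hc₂] with x hx
        exact ⟨c₂, hx, hle2⟩
      exact main_lemma hn₁ hn₁N hc₁pos halt₁ h₂m h₂b hcoef
  · -- alt / alt
    obtain ⟨h₁m, h₁b⟩ := alt_facts hn₁ hc₁pos halt₁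
    obtain ⟨h₂m, h₂b⟩ := alt_facts hn₂ hc₂pos halt₂
    rcases le_total c₂ c₁ with hle | hle
    · refine main_lemma hn₁ hn₁N hc₁pos halt₁ h₂m ?_ hcoef
      filter_upwards [h₂b] with x hx
      obtain ⟨r, hr, hrb⟩ := hx
      exact ⟨r, hr, hrb.trans hle⟩
    · refine (main_lemma hn₂ hn₂N hc₂pos halt₂ h₁m ?_ (fun k hk => (hcoef k hk).symm)).symm
      filter_upwards [h₁b] with x hx
      obtain ⟨r, hr, hrb⟩ := hx
      exact ⟨r, hr, hrb.trans hle⟩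
end
end

section
/- Let f ∈ L^∞(𝕋), let N ≥ 1 and let k be a positive integer, and define g ∈ L^∞(𝕋) by g(e^{iθ}) = f(e^{ikθ}). Then ‖A_{f,N}‖ = ‖A_{g,kN}‖. -/
open MeasureTheory Complex Real AddCircle
open scoped Real

noncomputable section

/-- The `L^∞` norm of a function on the circle. -/
def supNorm (f : UnitCircle → ℂ) : ℝ := (eLpNorm f ⊤ haarAddCircle).toReal

/-- `f ∈ G_A`: `f ∈ L^∞(𝕋)` and `f̂(n) = a n` for `-N ≤ n ≤ N`. -/
def inGA (N : ℕ) (a : ℤ → ℂ) (f : UnitCircle → ℂ) : Prop :=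
  MemLp f ⊤ haarAddCircle ∧ ∀ n : ℤ, |n| ≤ (N : ℤ) → fourierCoeff f n = a n

/-- `c_A = inf {‖f‖_∞ : f ∈ G_A}`. -/
def cA (N : ℕ) (a : ℤ → ℂ) : ℝ := sInf (supNorm '' {f | inGA N a f})



lemma aux_g_eq {f g : UnitCircle → ℂ} {k : ℕ}
    (hg : ∀ θ : ℝ, g (θ : UnitCircle) = f ((k * θ : ℝ) : UnitCircle)) (x : UnitCircle) :
    g x = f ((k : ℤ) • x) := by
  induction x using QuotientAddGroup.induction_on with
  | H θ =>
    rw [hg θ, ← QuotientAddGroup.mk_zsmul]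
    norm_num [zsmul_eq_mul]

lemma aux_fourierCoeff_mul {f g : UnitCircle → ℂ} {k : ℕ}
    (hf : MemLp f ⊤ haarAddCircle) (hk : 1 ≤ k)
    (hg : ∀ θ : ℝ, g (θ : UnitCircle) = f ((k * θ : ℝ) : UnitCircle)) (m : ℤ) :
    fourierCoeff g ((k : ℤ) * m) = fourierCoeff f m := by
  have hk0 : (k : ℤ) ≠ 0 := by positivity
  have hmp : MeasurePreserving (fun x : UnitCircle => (k : ℤ) • x) haarAddCircle haarAddCircle :=
    Measure.measurePreserving_zsmul _ hk0
  have hsm : AEStronglyMeasurable (fun y : UnitCircle => fourier (-m) y • f y) haarAddCircle :=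
    (fourier (-m)).continuous.aestronglyMeasurable.smul hf.aestronglyMeasurable
  calc fourierCoeff g ((k : ℤ) * m)
      = ∫ x, (fun y : UnitCircle => fourier (-m) y • f y) ((k : ℤ) • x) ∂haarAddCircle := by
        rw [fourierCoeff]
        congr 1
        ext x
        rw [aux_g_eq hg x]
        congr 1
        rw [fourier_apply, fourier_apply, smul_smul]
        congr 1
        ring_nf
        rfl
    _ = ∫ y, fourier (-m) y • f y
          ∂(Measure.map (fun x : UnitCircle => (k : ℤ) • x) haarAddCircle) :=
        (integral_map hmp.measurable.aemeasurable (by rw [hmp.map_eq]; exact hsm)).symm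
    _ = fourierCoeff f m := by rw [hmp.map_eq, fourierCoeff]

lemma aux_fourierCoeff_not_dvd {f g : UnitCircle → ℂ} {k : ℕ} (hk : 1 ≤ k)
    (hg : ∀ θ : ℝ, g (θ : UnitCircle) = f ((k * θ : ℝ) : UnitCircle))
    {n : ℤ} (hn : ¬ ((k : ℤ) ∣ n)) : fourierCoeff g n = 0 := by
  have hkR : (k : ℝ) ≠ 0 := by positivity
  set c : UnitCircle := ((2 * π / k : ℝ) : UnitCircle) with hc
  have hkc : (k : ℤ) • c = 0 := by
    rw [hc, ← QuotientAddGroup.mk_zsmul]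
    have h1 : (k : ℤ) • (2 * π / k : ℝ) = 2 * π := by
      rw [zsmul_eq_mul]
      push_cast
      field_simp
    rw [h1]
    exact AddCircle.coe_period (p := 2 * π)
  have key : fourierCoeff g n = fourier (-n) c * fourierCoeff g n := by
    rw [fourierCoeff]
    conv_lhs => rw [← integral_add_left_eq_self (fun x => fourier (-n) x • g x) c]
    rw [← integral_const_mul]
    congr 1
    ext x
    have h2 : g (c + x) = g x := by
      rw [aux_g_eq hg (c + x), aux_g_eq hg x, smul_add, hkc, zero_add]
    rw [h2]
    have h3 : (fourier (-n)) (c + x) = fourier (-n) c * fourier (-n) x := by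
      rw [fourier_apply, fourier_apply, fourier_apply, smul_add, toCircle_add]
      push_cast
      ring
    rw [h3, smul_eq_mul, smul_eq_mul]
    ring
  have hne : (fourier (-n) c : ℂ) ≠ 1 := by
    intro h1
    rw [hc, fourier_coe_apply] at h1
    push_cast at h1
    have hpi : (π : ℂ) ≠ 0 := by exact_mod_cast Real.pi_ne_zero
    have hkC : (k : ℂ) ≠ 0 := by exact_mod_cast hkR
    have h2 : 2 * (π : ℂ) * I * (-n) * (2 * π / k) / (2 * π) = (-n / k) * (2 * π * I) := by
      field_simp
    rw [h2] at h1
    obtain ⟨j, hj⟩ := Complex.exp_eq_one_iff.mp h1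
    have h2πI : (2 : ℂ) * π * I ≠ 0 := by
      simp [Complex.ext_iff, Real.pi_ne_zero]
    have h4 : (-n / k : ℂ) = j := mul_right_cancel₀ h2πI hj
    have h5 : (-(n : ℂ)) = j * k := by
      rw [div_eq_iff hkC] at h4
      exact h4
    have h6 : (n : ℂ) = ((-j * k : ℤ) : ℂ) := by push_cast; linear_combination -h5
    have h7 : n = -j * k := by exact_mod_cast h6
    exact hn ⟨-j, by rw [h7]; ring⟩
  have := key
  have h8 : (fourier (-n) c - 1) * fourierCoeff g n = 0 := by
    rw [sub_mul, one_mul, ← this, sub_self]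
  rcases mul_eq_zero.mp h8 with h | h
  · exact absurd (by linear_combination h : (fourier (-n) c : ℂ) = 1) hne
  · exact h

/- ### Matrix lemmas -/

open Finset in
lemma aux_not_dvd_sub {k : ℕ} {p q : ℕ} (h : p % k ≠ q % k) :
    ¬ ((k : ℤ) ∣ (p : ℤ) - (q : ℤ)) := by
  intro hd
  have h2 : (q : ℤ) % k = (p : ℤ) % k := Int.modEq_iff_dvd.mpr hd
  rw [← Int.natCast_mod, ← Int.natCast_mod] at h2
  exact h (by exact_mod_cast h2.symm)

open Finset in
lemma aux_norm_le_1 (N k : ℕ) (hk : 1 ≤ k) (a b : ℤ → ℂ)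
    (hab : ∀ m : ℤ, b ((k : ℤ) * m) = a m) :
    opNorm (toeplitz N a) ≤ opNorm (toeplitz (k * N) b) := by
  have hk0 : 0 < k := hk
  set F := Matrix.toEuclideanCLM (𝕜 := ℂ) (toeplitz N a) with hF
  set G := Matrix.toEuclideanCLM (𝕜 := ℂ) (toeplitz (k * N) b) with hG
  refine ContinuousLinearMap.opNorm_le_iff (norm_nonneg G) |>.mpr fun v => ?_
  have hle : ∀ j : Fin (N + 1), k * (j : ℕ) < k * N + 1 := fun j =>
    Nat.lt_succ_of_le (Nat.mul_le_mul_left k (Nat.lt_succ_iff.mp j.2))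
  set emb : Fin (N + 1) → Fin (k * N + 1) := fun j => ⟨k * j, hle j⟩ with hembdef
  have hembinj : Function.Injective emb := fun i j h =>
    Fin.ext (Nat.eq_of_mul_eq_mul_left hk0 (congrArg Fin.val h))
  have hdiv : ∀ m : Fin (k * N + 1), (m : ℕ) / k < N + 1 := fun m =>
    Nat.lt_succ_of_le (le_trans (Nat.div_le_div_right (Nat.lt_succ_iff.mp m.2))
      (le_of_eq (Nat.mul_div_cancel_left N hk0)))
  set w : EuclideanSpace ℂ (Fin (k * N + 1)) :=
    WithLp.toLp 2 (fun m => if h : k ∣ (m : ℕ) then v ⟨(m : ℕ) / k, hdiv m⟩ else 0) with hwdef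
  have himage : ∀ m : Fin (k * N + 1), k ∣ (m : ℕ) → m ∈ univ.image emb := fun m hd =>
    mem_image.mpr ⟨⟨(m : ℕ) / k, hdiv m⟩, mem_univ _,
      Fin.ext (by simp [emb, Nat.mul_div_cancel' hd])⟩
  have hw0 : ∀ m : Fin (k * N + 1), m ∉ univ.image emb → w m = 0 := fun m hm => by
    have : ¬ k ∣ (m : ℕ) := fun hd => hm (himage m hd)
    simp only [hwdef, PiLp.toLp_apply]
    rw [dif_neg this]
  have hw_emb : ∀ j : Fin (N + 1), w (emb j) = v j := fun j => by
    have hd : k ∣ ((emb j : Fin (k * N + 1)) : ℕ) := ⟨(j : ℕ), rfl⟩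
    have h1 : w (emb j) = v ⟨((emb j : Fin (k * N + 1)) : ℕ) / k, hdiv _⟩ := dif_pos hd
    rw [h1]
    refine congrArg (fun i => v i) ?_
    exact Fin.ext (by simp [hembdef, Nat.mul_div_cancel_left _ hk0])
  have hnorm : ‖w‖ = ‖v‖ := by
    rw [EuclideanSpace.norm_eq, EuclideanSpace.norm_eq]
    congr 1
    have h1 : ∑ m, ‖w m‖ ^ 2 = ∑ m ∈ univ.image emb, ‖w m‖ ^ 2 :=
      (Finset.sum_subset (subset_univ _) fun m _ hm => by rw [hw0 m hm]; simp).symm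
    rw [h1, Finset.sum_image (fun i _ j _ h => hembinj h)]
    exact Finset.sum_congr rfl fun j _ => by rw [hw_emb j]
  have hentry : ∀ i : Fin (N + 1), G w (emb i) = F v i := fun i => by
    show ∑ l, toeplitz (k * N) b (emb i) l * w l = ∑ j, toeplitz N a i j * v j
    have h1 : ∑ l, toeplitz (k * N) b (emb i) l * w l
        = ∑ l ∈ univ.image emb, toeplitz (k * N) b (emb i) l * w l :=
      (Finset.sum_subset (subset_univ _) fun m _ hm => by rw [hw0 m hm, mul_zero]).symm
    rw [h1, Finset.sum_image (fun i _ j _ h => hembinj h)]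
    refine Finset.sum_congr rfl fun j _ => ?_
    rw [hw_emb j]
    congr 1
    show b (((emb i : Fin (k * N + 1)) : ℤ) - ((emb j : Fin (k * N + 1)) : ℤ)) = a ((i : ℤ) - j)
    have h2 : ((emb i : Fin (k * N + 1)) : ℤ) - ((emb j : Fin (k * N + 1)) : ℤ)
        = (k : ℤ) * ((i : ℤ) - (j : ℤ)) := by
      simp only [hembdef]
      push_cast
      ring
    rw [h2, hab]
  have h2 : ‖F v‖ ≤ ‖G w‖ := by
    rw [EuclideanSpace.norm_eq, EuclideanSpace.norm_eq]
    apply Real.sqrt_le_sqrt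
    calc ∑ i, ‖F v i‖ ^ 2 = ∑ i, ‖G w (emb i)‖ ^ 2 := by
          exact Finset.sum_congr rfl fun i _ => by rw [hentry i]
      _ = ∑ m ∈ univ.image emb, ‖G w m‖ ^ 2 := by
          rw [Finset.sum_image (fun i _ j _ h => hembinj h)]
      _ ≤ ∑ m, ‖G w m‖ ^ 2 :=
          Finset.sum_le_sum_of_subset_of_nonneg (subset_univ _) (fun m _ _ => by positivity)
  calc ‖F v‖ ≤ ‖G w‖ := h2
    _ ≤ ‖G‖ * ‖w‖ := G.le_opNorm w
    _ = ‖G‖ * ‖v‖ := by rw [hnorm]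

open Finset in
lemma aux_norm_le_2 (N k : ℕ) (hk : 1 ≤ k) (a b : ℤ → ℂ)
    (hab : ∀ m : ℤ, b ((k : ℤ) * m) = a m)
    (hb0 : ∀ n : ℤ, ¬ ((k : ℤ) ∣ n) → b n = 0) :
    opNorm (toeplitz (k * N) b) ≤ opNorm (toeplitz N a) := by
  have hk0 : 0 < k := hk
  set F := Matrix.toEuclideanCLM (𝕜 := ℂ) (toeplitz N a) with hF
  set G := Matrix.toEuclideanCLM (𝕜 := ℂ) (toeplitz (k * N) b) with hG
  refine ContinuousLinearMap.opNorm_le_iff (norm_nonneg F) |>.mpr fun w => ?_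
  have hdiv : ∀ m : Fin (k * N + 1), (m : ℕ) / k < N + 1 := fun m =>
    Nat.lt_succ_of_le (le_trans (Nat.div_le_div_right (Nat.lt_succ_iff.mp m.2))
      (le_of_eq (Nat.mul_div_cancel_left N hk0)))
  have hmod : ∀ m : Fin (k * N + 1), (m : ℕ) % k < k := fun m => Nat.mod_lt _ hk0
  set v : Fin k → EuclideanSpace ℂ (Fin (N + 1)) := fun r => WithLp.toLp 2 fun j =>
    if h : k * (j : ℕ) + (r : ℕ) ≤ k * N then w ⟨k * j + r, Nat.lt_succ_of_le h⟩ else 0 with hvdef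
  set ι : Fin (k * N + 1) → Fin k × Fin (N + 1) :=
    fun m => (⟨(m : ℕ) % k, hmod m⟩, ⟨(m : ℕ) / k, hdiv m⟩) with hιdef
  have hιinj : Function.Injective ι := by
    intro m₁ m₂ h
    have e1 : (m₁ : ℕ) % k = (m₂ : ℕ) % k := congrArg (fun p => ((p.1 : Fin k) : ℕ)) h
    have e2 : (m₁ : ℕ) / k = (m₂ : ℕ) / k := congrArg (fun p => ((p.2 : Fin (N + 1)) : ℕ)) h
    have d1 := Nat.div_add_mod (m₁ : ℕ) k
    have d2 := Nat.div_add_mod (m₂ : ℕ) k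
    exact Fin.ext (by rw [← d1, ← d2, e1, e2])
  -- v recovers w at ι m
  have hvw : ∀ m : Fin (k * N + 1), v (ι m).1 (ι m).2 = w m := fun m => by
    have hm : (m : ℕ) ≤ k * N := Nat.lt_succ_iff.mp m.2
    have hd : k * ((m : ℕ) / k) + (m : ℕ) % k = (m : ℕ) := Nat.div_add_mod _ _
    have h1 : v (ι m).1 (ι m).2
        = w ⟨k * ((m : ℕ) / k) + (m : ℕ) % k, Nat.lt_succ_of_le (by rw [hd]; exact hm)⟩ :=
      dif_pos (by rw [hd]; exact hm)
    rw [h1]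
    refine congrArg (fun i => w i) ?_
    exact Fin.ext (by simp [hd])
  -- pairs not in the image of ι give v = 0
  have himage : ∀ p : Fin k × Fin (N + 1), k * ((p.2 : ℕ)) + (p.1 : ℕ) ≤ k * N →
      p ∈ univ.image ι := fun p hp => by
    refine mem_image.mpr ⟨⟨k * (p.2 : ℕ) + (p.1 : ℕ), Nat.lt_succ_of_le hp⟩, mem_univ _, ?_⟩
    have hr : (k * (p.2 : ℕ) + (p.1 : ℕ)) % k = (p.1 : ℕ) := by
      rw [Nat.mul_add_mod]
      exact Nat.mod_eq_of_lt p.1.2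
    have hq : (k * (p.2 : ℕ) + (p.1 : ℕ)) / k = (p.2 : ℕ) := by
      rw [Nat.mul_add_div hk0]
      simp [Nat.div_eq_of_lt p.1.2]
    simp only [hιdef]
    exact Prod.ext (Fin.ext hr) (Fin.ext hq)
  have hv0 : ∀ p : Fin k × Fin (N + 1), p ∉ univ.image ι → v p.1 p.2 = 0 := fun p hp => by
    have : ¬ (k * ((p.2 : ℕ)) + (p.1 : ℕ) ≤ k * N) := fun h => hp (himage p h)
    simp only [hvdef, PiLp.toLp_apply]
    rw [dif_neg this]
  -- entry identity
  have hentry : ∀ m : Fin (k * N + 1), G w m = F (v (ι m).1) ((ι m).2) := fun m => by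
    have hm : (m : ℕ) ≤ k * N := Nat.lt_succ_iff.mp m.2
    have hd : k * ((m : ℕ) / k) + (m : ℕ) % k = (m : ℕ) := Nat.div_add_mod _ _
    show ∑ l, toeplitz (k * N) b m l * w l = ∑ j, toeplitz N a (ι m).2 j * v (ι m).1 j
    have h1 : ∑ l, toeplitz (k * N) b m l * w l
        = ∑ l ∈ univ.filter (fun l : Fin (k * N + 1) => (l : ℕ) % k = (m : ℕ) % k),
            toeplitz (k * N) b m l * w l := by
      refine (Finset.sum_subset (filter_subset _ _) fun l _ hl => ?_).symm
      have hlr : (l : ℕ) % k ≠ (m : ℕ) % k := by simpa using hl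
      have hnd : ¬ ((k : ℤ) ∣ ((m : ℤ) - (l : ℤ))) := by
        intro hdd
        exact aux_not_dvd_sub (k := k) (p := (m : ℕ)) (q := (l : ℕ)) (fun h => hlr (h.symm ▸ rfl)) hdd
      show toeplitz (k * N) b m l * w l = 0
      have : toeplitz (k * N) b m l = 0 := hb0 _ hnd
      rw [this, zero_mul]
    have h2 : ∑ j, toeplitz N a (ι m).2 j * v (ι m).1 j
        = ∑ j ∈ univ.filter (fun j : Fin (N + 1) => k * (j : ℕ) + (m : ℕ) % k ≤ k * N),
            toeplitz N a (ι m).2 j * v (ι m).1 j := by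
      refine (Finset.sum_subset (filter_subset _ _) fun j _ hj => ?_).symm
      have : ¬ (k * (j : ℕ) + (m : ℕ) % k ≤ k * N) := by simpa using hj
      have hz : v (ι m).1 j = 0 := by
        simp only [hvdef, PiLp.toLp_apply]
        rw [dif_neg (by simpa [hιdef] using this)]
      rw [hz, mul_zero]
    rw [h1, h2]
    refine Finset.sum_bij' (fun l hl => (⟨(l : ℕ) / k, hdiv l⟩ : Fin (N + 1)))
      (fun j hj => (⟨k * (j : ℕ) + (m : ℕ) % k,
        Nat.lt_succ_of_le (by simpa using (Finset.mem_filter.mp hj).2)⟩ : Fin (k * N + 1)))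
      ?_ ?_ ?_ ?_ ?_
    · intro l hl
      have hlm : (l : ℕ) % k = (m : ℕ) % k := (Finset.mem_filter.mp hl).2
      have hdl : k * ((l : ℕ) / k) + (l : ℕ) % k = (l : ℕ) := Nat.div_add_mod _ _
      refine Finset.mem_filter.mpr ⟨mem_univ _, ?_⟩
      show k * ((l : ℕ) / k) + (m : ℕ) % k ≤ k * N
      rw [← hlm, hdl]
      exact Nat.lt_succ_iff.mp l.2
    · intro j hj
      refine Finset.mem_filter.mpr ⟨mem_univ _, ?_⟩
      show (k * (j : ℕ) + (m : ℕ) % k) % k = (m : ℕ) % k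
      rw [Nat.mul_add_mod]
      exact Nat.mod_mod_of_dvd _ dvd_rfl
    · intro l hl
      have hlm : (l : ℕ) % k = (m : ℕ) % k := (Finset.mem_filter.mp hl).2
      have hdl : k * ((l : ℕ) / k) + (l : ℕ) % k = (l : ℕ) := Nat.div_add_mod _ _
      refine Fin.ext ?_
      show k * ((l : ℕ) / k) + (m : ℕ) % k = (l : ℕ)
      rw [← hlm]
      exact hdl
    · intro j hj
      have hq : (k * (j : ℕ) + (m : ℕ) % k) / k = (j : ℕ) := by
        rw [Nat.mul_add_div hk0]
        simp [Nat.div_eq_of_lt (hmod m)]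
      exact Fin.ext (by simpa using hq)
    · intro l hl
      have hlm : (l : ℕ) % k = (m : ℕ) % k := (Finset.mem_filter.mp hl).2
      have hdl : k * ((l : ℕ) / k) + (l : ℕ) % k = (l : ℕ) := Nat.div_add_mod _ _
      have hbm : toeplitz (k * N) b m l = toeplitz N a (ι m).2 ⟨(l : ℕ) / k, hdiv l⟩ := by
        show b ((m : ℤ) - (l : ℤ)) = a ((((m : ℕ) / k : ℕ) : ℤ) - (((l : ℕ) / k : ℕ) : ℤ))
        have : ((m : ℕ) : ℤ) - ((l : ℕ) : ℤ)
            = (k : ℤ) * ((((m : ℕ) / k : ℕ) : ℤ) - (((l : ℕ) / k : ℕ) : ℤ)) := by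
          have e1 : ((m : ℕ) : ℤ) = (k : ℤ) * (((m : ℕ) / k : ℕ) : ℤ) + (((m : ℕ) % k : ℕ) : ℤ) := by
            exact_mod_cast congrArg (Nat.cast : ℕ → ℤ) hd.symm
          have e2 : ((l : ℕ) : ℤ) = (k : ℤ) * (((l : ℕ) / k : ℕ) : ℤ) + (((l : ℕ) % k : ℕ) : ℤ) := by
            exact_mod_cast congrArg (Nat.cast : ℕ → ℤ) hdl.symm
          rw [e1, e2, hlm]
          ring
        rw [this, hab]
      have hwv : w l = v (ι m).1 ⟨(l : ℕ) / k, hdiv l⟩ := by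
        have hle : k * ((l : ℕ) / k) + (m : ℕ) % k ≤ k * N := by
          rw [← hlm, hdl]; exact Nat.lt_succ_iff.mp l.2
        have h3 : v (ι m).1 ⟨(l : ℕ) / k, hdiv l⟩
            = w ⟨k * ((l : ℕ) / k) + (m : ℕ) % k, Nat.lt_succ_of_le hle⟩ := dif_pos hle
        rw [h3]
        refine congrArg (fun i => w i) ?_
        refine Fin.ext ?_
        show (l : ℕ) = k * ((l : ℕ) / k) + (m : ℕ) % k
        rw [← hlm]
        exact hdl.symm
      rw [hbm, hwv]
  -- norm computation
  have hsum1 : ∑ m, ‖G w m‖ ^ 2 ≤ ‖F‖ ^ 2 * ∑ r : Fin k, ‖v r‖ ^ 2 := by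
    calc ∑ m, ‖G w m‖ ^ 2 = ∑ m, ‖F (v (ι m).1) ((ι m).2)‖ ^ 2 :=
          Finset.sum_congr rfl fun m _ => by rw [hentry m]
      _ = ∑ p ∈ univ.image ι, ‖F (v p.1) p.2‖ ^ 2 := by
          rw [Finset.sum_image (fun i _ j _ h => hιinj h)]
      _ ≤ ∑ p : Fin k × Fin (N + 1), ‖F (v p.1) p.2‖ ^ 2 :=
          Finset.sum_le_sum_of_subset_of_nonneg (subset_univ _) (fun p _ _ => by positivity)
      _ = ∑ r : Fin k, ∑ i : Fin (N + 1), ‖F (v r) i‖ ^ 2 := by rw [Fintype.sum_prod_type]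
      _ ≤ ∑ r : Fin k, (‖F‖ * ‖v r‖) ^ 2 := by
          refine Finset.sum_le_sum fun r _ => ?_
          have h4 : ‖F (v r)‖ ≤ ‖F‖ * ‖v r‖ := F.le_opNorm (v r)
          have h5 : ∑ i, ‖F (v r) i‖ ^ 2 = ‖F (v r)‖ ^ 2 := by
            rw [EuclideanSpace.norm_eq, Real.sq_sqrt (by positivity)]
          rw [h5]
          exact pow_le_pow_left₀ (norm_nonneg _) h4 2
      _ = ‖F‖ ^ 2 * ∑ r : Fin k, ‖v r‖ ^ 2 := by
          rw [Finset.mul_sum]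
          exact Finset.sum_congr rfl fun r _ => by ring
  have hsum2 : ∑ r : Fin k, ‖v r‖ ^ 2 = ∑ m, ‖w m‖ ^ 2 := by
    calc ∑ r : Fin k, ‖v r‖ ^ 2 = ∑ r : Fin k, ∑ j : Fin (N + 1), ‖v r j‖ ^ 2 := by
          refine Finset.sum_congr rfl fun r _ => ?_
          rw [EuclideanSpace.norm_eq, Real.sq_sqrt (by positivity)]
      _ = ∑ p : Fin k × Fin (N + 1), ‖v p.1 p.2‖ ^ 2 := by rw [Fintype.sum_prod_type]
      _ = ∑ p ∈ univ.image ι, ‖v p.1 p.2‖ ^ 2 :=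
          (Finset.sum_subset (subset_univ _) fun p _ hp => by rw [hv0 p hp]; simp).symm
      _ = ∑ m, ‖v (ι m).1 (ι m).2‖ ^ 2 := by
          rw [Finset.sum_image (fun i _ j _ h => hιinj h)]
      _ = ∑ m, ‖w m‖ ^ 2 := Finset.sum_congr rfl fun m _ => by rw [hvw m]
  have hfinal : ∑ m, ‖G w m‖ ^ 2 ≤ (‖F‖ * ‖w‖) ^ 2 := by
    have hw2 : ‖w‖ ^ 2 = ∑ m, ‖w m‖ ^ 2 := by
      rw [EuclideanSpace.norm_eq, Real.sq_sqrt (by positivity)]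
    calc ∑ m, ‖G w m‖ ^ 2 ≤ ‖F‖ ^ 2 * ∑ r : Fin k, ‖v r‖ ^ 2 := hsum1
      _ = ‖F‖ ^ 2 * ∑ m, ‖w m‖ ^ 2 := by rw [hsum2]
      _ = (‖F‖ * ‖w‖) ^ 2 := by rw [← hw2]; ring
  calc ‖G w‖ = Real.sqrt (∑ m, ‖G w m‖ ^ 2) := EuclideanSpace.norm_eq _
    _ ≤ Real.sqrt ((‖F‖ * ‖w‖) ^ 2) := Real.sqrt_le_sqrt hfinal
    _ = ‖F‖ * ‖w‖ := Real.sqrt_sq (by positivity)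

/-- If `g(e^{iθ}) = f(e^{ikθ})`, then the compressions `A_{f,N}` and `A_{g,kN}`
have the same operator norm. -/
theorem stmt16 (f : UnitCircle → ℂ) (hf : MemLp f ⊤ haarAddCircle)
    (N k : ℕ) (hN : 1 ≤ N) (hk : 1 ≤ k) (g : UnitCircle → ℂ)
    (hg : ∀ θ : ℝ, g (θ : UnitCircle) = f ((k * θ : ℝ) : UnitCircle)) :
    opNorm (toeplitz N fun n => fourierCoeff f n) =
      opNorm (toeplitz (k * N) fun n => fourierCoeff g n) := by
  have hab : ∀ m : ℤ, (fun n => fourierCoeff g n) ((k : ℤ) * m) = (fun n => fourierCoeff f n) m :=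
    fun m => aux_fourierCoeff_mul hf hk hg m
  have hb0 : ∀ n : ℤ, ¬ ((k : ℤ) ∣ n) → (fun n => fourierCoeff g n) n = 0 :=
    fun n hn => aux_fourierCoeff_not_dvd hk hg hn
  exact le_antisymm (aux_norm_le_1 N k hk _ _ hab) (aux_norm_le_2 N k hk _ _ hab hb0)
end
end
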